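/- arXiv:2208.08771 — 9 statements merged into one kernel-verified Lean document; each statement's English description precedes it below -/
import Mathlib

section
/- For every v ∈ ℝ^N, the vector r = Hv satisfies J₀ r = v + (0, 0, Σ_{j=0}^{ℓ−1} γ_j [ᾱ_j(z⁰∘Δx^j + x⁰∘Δz^j) − (x^{j+1}∘z^{j+1} − x^j∘z^j)]), where γ_j = y_jᵀ (V_{j+1}V_{j+2}⋯V_{ℓ−1}) v / ρ_j for j = 0,…,ℓ−1; that is, applying the Broyden 'bad' approximate inverse H amounts to solving a linear system with the fixed matrix J₀ and a right-hand side modified only in the third block. -/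
open scoped BigOperators

/-- Block vector in `ℝ^{2n+m} = ℝ^n × ℝ^m × ℝ^n`. -/
def blk {n m : ℕ} (u : Fin n → ℝ) (v : Fin m → ℝ) (w : Fin n → ℝ) :
    (Fin n ⊕ Fin m ⊕ Fin n) → ℝ :=
  Sum.elim u (Sum.elim v w)

/-- Dot product of finitely-indexed real vectors. -/
def dotp {ι : Type*} [Fintype ι] (u v : ι → ℝ) : ℝ := ∑ i, u i * v i

/-- The fixed unreduced interior-point Jacobian
`J₀ = [[0, Aᵀ, I], [A, 0, 0], [Z⁰, 0, X⁰]]`. -/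
def J0 {n m : ℕ} (A : Matrix (Fin m) (Fin n) ℝ) (x0 z0 : Fin n → ℝ) :
    Matrix (Fin n ⊕ Fin m ⊕ Fin n) (Fin n ⊕ Fin m ⊕ Fin n) ℝ :=
  Matrix.of fun p q =>
    match p, q with
    | Sum.inl _, Sum.inl _ => 0
    | Sum.inl i, Sum.inr (Sum.inl j) => A j i
    | Sum.inl i, Sum.inr (Sum.inr j) => if i = j then 1 else 0
    | Sum.inr (Sum.inl i), Sum.inl j => A i j
    | Sum.inr (Sum.inl _), Sum.inr _ => 0
    | Sum.inr (Sum.inr i), Sum.inl j => if i = j then z0 i else 0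
    | Sum.inr (Sum.inr _), Sum.inr (Sum.inl _) => 0
    | Sum.inr (Sum.inr i), Sum.inr (Sum.inr j) => if i = j then x0 i else 0

/-- Ordered matrix product `V a * V (a+1) * ⋯ * V (b-1)`. -/
def matProd {N : Type*} [Fintype N] [DecidableEq N]
    (V : ℕ → Matrix N N ℝ) (a b : ℕ) : Matrix N N ℝ :=
  ((List.range (b - a)).map (fun t => V (a + t))).prod


section Aux

lemma aux_vecMulVec_mulVec {S : Type*} [Fintype S] (u w xv : S -> Real) :
    (Matrix.vecMulVec u w).mulVec xv = (dotProduct w xv) • u := by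
  funext i
  simp only [Matrix.mulVec, Matrix.vecMulVec, dotProduct, Matrix.of_apply,
    Pi.smul_apply, smul_eq_mul, Finset.sum_mul]
  exact Finset.sum_congr rfl fun j _ => by ring

lemma aux_sum_mulVec {S K : Type*} [Fintype S] (t : Finset K)
    (M : K -> Matrix S S Real) (xv : S -> Real) :
    (∑ j ∈ t, M j).mulVec xv = ∑ j ∈ t, (M j).mulVec xv := by
  funext i
  simp only [Matrix.mulVec, dotProduct, Matrix.sum_apply, Finset.sum_apply, Finset.sum_mul]
  rw [Finset.sum_comm]

lemma matProd_succ_left {S : Type*} [Fintype S] [DecidableEq S]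
    (V : Nat -> Matrix S S Real) {a b : Nat} (h : a < b) :
    matProd V a b = V a * matProd V (a + 1) b := by
  unfold matProd
  have hb : b - a = (b - (a + 1)) + 1 := by omega
  rw [hb, List.range_succ_eq_map, List.map_cons, List.prod_cons, List.map_map]
  congr 2
  apply List.map_congr_left
  intro t _
  have : a + Nat.succ t = a + 1 + t := by omega
  simp only [Function.comp_apply, this]

lemma matProd_expand {S : Type*} [Fintype S] [DecidableEq S]
    (y : Nat -> S -> Real) (p : Nat -> Real) (V : Nat -> Matrix S S Real)
    (hV : ∀ j, V j = 1 - (p j)⁻¹ • Matrix.vecMulVec (y j) (y j)) (L : Nat) :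
    ∀ k a, a + k = L ->
      matProd V a L = 1 - ∑ j ∈ Finset.Ico a L,
        (p j)⁻¹ • (Matrix.vecMulVec (y j) (y j) * matProd V (j + 1) L) := by
  intro k
  induction k with
  | zero =>
    intro a ha
    subst ha
    simp [matProd]
  | succ k ih =>
    intro a ha
    have haL : a < L := by omega
    have hstep := matProd_succ_left V haL
    have hih := ih (a + 1) (by omega)
    rw [hstep, hV a, Finset.sum_eq_sum_Ico_succ_bot haL, sub_mul, one_mul,
      Matrix.smul_mul, hih]
    abel

end Aux

/-- Broyden "bad" update: applying the approximate inverse `H` built from `ℓ`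
rank-one updates of `J₀⁻¹` to any `v` amounts to solving a linear system with
the fixed matrix `J₀` and a right-hand side modified only in the third block. -/
theorem broyden_bad_third_block_rhs
    (n m ℓ : ℕ) (hn : 1 ≤ n) (hm : 1 ≤ m) (hℓ : 1 ≤ ℓ)
    (A : Matrix (Fin m) (Fin n) ℝ)
    (x0 z0 : Fin n → ℝ) (hx0 : ∀ i, 0 < x0 i) (hz0 : ∀ i, 0 < z0 i)
    (hJ : IsUnit (J0 A x0 z0).det)
    (αb : ℕ → ℝ)
    (Δx Δz : ℕ → Fin n → ℝ) (Δlam : ℕ → Fin m → ℝ)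
    (x z : ℕ → Fin n → ℝ)
    (hx : x 0 = x0) (hz : z 0 = z0)
    (hxs : ∀ j < ℓ, x (j + 1) = fun i => x j i + αb j * Δx j i)
    (hzs : ∀ j < ℓ, z (j + 1) = fun i => z j i + αb j * Δz j i)
    (s y : ℕ → (Fin n ⊕ Fin m ⊕ Fin n) → ℝ)
    (hs : ∀ j, s j = blk (fun i => αb j * Δx j i) (fun i => αb j * Δlam j i)
      (fun i => αb j * Δz j i))
    (hy : ∀ j, y j = blk
      (fun i => αb j * ((Matrix.transpose A).mulVec (Δlam j) i + Δz j i))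
      (fun i => αb j * A.mulVec (Δx j) i)
      (fun i => x (j + 1) i * z (j + 1) i - x j i * z j i))
    (ρ : ℕ → ℝ) (hρdef : ∀ j, ρ j = dotp (y j) (y j))
    (hρ : ∀ j < ℓ, ρ j ≠ 0)
    (V : ℕ → Matrix (Fin n ⊕ Fin m ⊕ Fin n) (Fin n ⊕ Fin m ⊕ Fin n) ℝ)
    (hV : ∀ j, V j = 1 - (ρ j)⁻¹ • Matrix.vecMulVec (y j) (y j))
    (H : Matrix (Fin n ⊕ Fin m ⊕ Fin n) (Fin n ⊕ Fin m ⊕ Fin n) ℝ)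
    (hH : H = (J0 A x0 z0)⁻¹ * matProd V 0 ℓ
      + ∑ j ∈ Finset.range ℓ,
          (ρ j)⁻¹ • (Matrix.vecMulVec (s j) (y j) * matProd V (j + 1) ℓ))
    (v r : (Fin n ⊕ Fin m ⊕ Fin n) → ℝ)
    (hr : r = H.mulVec v)
    (γ : ℕ → ℝ)
    (hγ : ∀ j, γ j = dotp (Matrix.vecMul (y j) (matProd V (j + 1) ℓ)) v / ρ j) :
    (J0 A x0 z0).mulVec r
      = v + blk (fun _ => 0) (fun _ => 0)
          (fun i => ∑ j ∈ Finset.range ℓ,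
            γ j * (αb j * (z0 i * Δx j i + x0 i * Δz j i)
              - (x (j + 1) i * z (j + 1) i - x j i * z j i))) := by
  classical
  set J := J0 A x0 z0 with hJdef
  have hdot : ∀ (u w : (Fin n ⊕ Fin m ⊕ Fin n) -> Real),
      dotp u w = dotProduct u w := fun _ _ => rfl
  have hgamma : ∀ j, γ j = (ρ j)⁻¹ *
      dotProduct (y j) ((matProd V (j + 1) ℓ).mulVec v) := by
    intro j
    rw [hγ, div_eq_inv_mul, hdot, ← Matrix.dotProduct_mulVec]
  have hP0 : matProd V 0 ℓ = 1 - ∑ j ∈ Finset.range ℓ,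
      (ρ j)⁻¹ • (Matrix.vecMulVec (y j) (y j) * matProd V (j + 1) ℓ) := by
    rw [Finset.range_eq_Ico]
    exact matProd_expand y ρ V hV ℓ ℓ 0 (by omega)
  have hJH : J * H = matProd V 0 ℓ + ∑ j ∈ Finset.range ℓ,
      (ρ j)⁻¹ • (J * (Matrix.vecMulVec (s j) (y j) * matProd V (j + 1) ℓ)) := by
    rw [hH, Matrix.mul_add, ← Matrix.mul_assoc, Matrix.mul_nonsing_inv _ hJ, Matrix.one_mul,
      Finset.mul_sum]
    congr 1
    exact Finset.sum_congr rfl fun j _ => by rw [Matrix.mul_smul]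
  have hterm : ∀ j, (ρ j)⁻¹ • ((J * (Matrix.vecMulVec (s j) (y j)
        * matProd V (j + 1) ℓ)).mulVec v) = γ j • J.mulVec (s j) := by
    intro j
    rw [← Matrix.mulVec_mulVec, ← Matrix.mulVec_mulVec, aux_vecMulVec_mulVec,
      Matrix.mulVec_smul, hgamma, smul_smul]
  have hterm2 : ∀ j, (ρ j)⁻¹ • ((Matrix.vecMulVec (y j) (y j)
        * matProd V (j + 1) ℓ).mulVec v) = γ j • y j := by
    intro j
    rw [← Matrix.mulVec_mulVec, aux_vecMulVec_mulVec, hgamma, smul_smul]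
  have hmain : J.mulVec r = v + ∑ j ∈ Finset.range ℓ,
      γ j • (J.mulVec (s j) - y j) := by
    rw [hr, Matrix.mulVec_mulVec, hJH, Matrix.add_mulVec, aux_sum_mulVec, hP0,
      Matrix.sub_mulVec, Matrix.one_mulVec, aux_sum_mulVec]
    have e1 : ∑ j ∈ Finset.range ℓ, ((ρ j)⁻¹ • (Matrix.vecMulVec (y j) (y j)
        * matProd V (j + 1) ℓ)).mulVec v = ∑ j ∈ Finset.range ℓ, γ j • y j :=
      Finset.sum_congr rfl fun j _ => by rw [Matrix.smul_mulVec, hterm2]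
    have e2 : ∑ j ∈ Finset.range ℓ, ((ρ j)⁻¹ • (J * (Matrix.vecMulVec (s j) (y j)
        * matProd V (j + 1) ℓ))).mulVec v = ∑ j ∈ Finset.range ℓ, γ j • J.mulVec (s j) :=
      Finset.sum_congr rfl fun j _ => by rw [Matrix.smul_mulVec, hterm j]
    rw [e1, e2]
    have e3 : ∑ j ∈ Finset.range ℓ, γ j • (J.mulVec (s j) - y j)
        = ∑ j ∈ Finset.range ℓ, γ j • J.mulVec (s j)
          - ∑ j ∈ Finset.range ℓ, γ j • y j := by
      rw [← Finset.sum_sub_distrib]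
      exact Finset.sum_congr rfl fun j _ => smul_sub _ _ _
    rw [e3]
    abel
  rw [hmain]
  congr 1
  have hdiff : ∀ j, J.mulVec (s j) - y j = blk (fun _ => 0) (fun _ => 0)
      (fun i => αb j * (z0 i * Δx j i + x0 i * Δz j i)
        - (x (j + 1) i * z (j + 1) i - x j i * z j i)) := by
    intro j
    funext p
    rcases p with i | i | i
    · simp [hJdef, J0, Matrix.mulVec, dotProduct, Fintype.sum_sum_type, blk, hs, hy,
        Matrix.transpose_apply, Finset.mul_sum, Finset.sum_add_distrib, mul_add]
      rw [sub_eq_zero]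
      exact Finset.sum_congr rfl fun k _ => by ring
    · simp [hJdef, J0, Matrix.mulVec, dotProduct, Fintype.sum_sum_type, blk, hs, hy,
        Finset.mul_sum]
      rw [sub_eq_zero]
      exact Finset.sum_congr rfl fun k _ => by ring
    · simp [hJdef, J0, Matrix.mulVec, dotProduct, Fintype.sum_sum_type, blk, hs, hy]
      ring
  funext p
  rcases p with i | i | i
  · simp [Finset.sum_apply, hdiff, blk]
  · simp [Finset.sum_apply, hdiff, blk]
  · simp [Finset.sum_apply, hdiff, blk, smul_eq_mul]
end

section
/- Under the feasible two-step setup, the average complementarity gap after the quasi-Newton step satisfies μ(ᾱ) = (1 − ᾱ(1 − σ_{k+1})) μ_{k+1}. -/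
open scoped BigOperators
open Matrix

lemma ortho_sum {n m : ℕ} (A : Matrix (Fin m) (Fin n) ℝ)
    (u : Fin n → ℝ) (lam : Fin m → ℝ) (w : Fin n → ℝ)
    (h1 : A.mulVec u = 0) (h2 : (Matrix.transpose A).mulVec lam + w = 0) :
    ∑ i, u i * w i = 0 := by
  have hw : w = -((Matrix.transpose A).mulVec lam) := by
    have := congrFun h2
    funext i
    have hi := this i
    simp only [Pi.add_apply, Pi.zero_apply] at hi
    simp only [Pi.neg_apply]
    linarith
  calc ∑ i, u i * w i = u ⬝ᵥ w := rfl
    _ = -(u ⬝ᵥ (Matrix.transpose A).mulVec lam) := by rw [hw, dotProduct_neg]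
    _ = -(Matrix.vecMul u (Matrix.transpose A) ⬝ᵥ lam) := by rw [Matrix.dotProduct_mulVec]
    _ = -(A.mulVec u ⬝ᵥ lam) := by rw [Matrix.vecMul_transpose]
    _ = 0 := by rw [h1, zero_dotProduct, neg_zero]

/-- Feasible two-step setup: after a Newton step with step size `αk` followed by a
quasi-Newton step with step size `α`, the average complementarity gap satisfies
`μ(α) = (1 - α (1 - σk1)) μk1`. -/
theorem qn_mu_decrease
    (n m : ℕ) (hn : 1 ≤ n) (hm : 1 ≤ m)
    (A : Matrix (Fin m) (Fin n) ℝ)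
    (xk zk : Fin n → ℝ) (hxk : ∀ i, 0 < xk i) (hzk : ∀ i, 0 < zk i)
    (σk σk1 αk α γ₁ : ℝ)
    (Δx Δz Δx' Δz' : Fin n → ℝ) (Δlam Δlam' : Fin m → ℝ)
    (μk : ℝ) (hμk : μk = (∑ i, xk i * zk i) / n)
    (hAx : A.mulVec Δx = 0)
    (hAl : (Matrix.transpose A).mulVec Δlam + Δz = 0)
    (hNewton : ∀ i, zk i * Δx i + xk i * Δz i = σk * μk - xk i * zk i)
    (xk1 zk1 : Fin n → ℝ)
    (hxk1 : xk1 = fun i => xk i + αk * Δx i)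
    (hzk1 : zk1 = fun i => zk i + αk * Δz i)
    (μk1 : ℝ) (hμk1 : μk1 = (∑ i, xk1 i * zk1 i) / n)
    (hAx' : A.mulVec Δx' = 0)
    (hAl' : (Matrix.transpose A).mulVec Δlam' + Δz' = 0)
    (hQN : ∀ i, zk i * Δx' i + xk i * Δz' i
      = σk1 * μk1 - xk1 i * zk1 i
        + γ₁ * (αk * (zk i * Δx i + xk i * Δz i) - (xk1 i * zk1 i - xk i * zk i)))
    (xk2 zk2 : Fin n → ℝ)
    (hxk2 : xk2 = fun i => xk1 i + α * Δx' i)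
    (hzk2 : zk2 = fun i => zk1 i + α * Δz' i)
    (μα : ℝ) (hμα : μα = (∑ i, xk2 i * zk2 i) / n) :
    μα = (1 - α * (1 - σk1)) * μk1 := by
  have hnR : (0:ℝ) < n := by exact_mod_cast hn
  have o1 : ∑ i, Δx i * Δz i = 0 := ortho_sum A Δx Δlam Δz hAx hAl
  have o2 : ∑ i, Δx i * Δz' i = 0 := ortho_sum A Δx Δlam' Δz' hAx hAl'
  have o3 : ∑ i, Δx' i * Δz i = 0 := ortho_sum A Δx' Δlam Δz hAx' hAl
  have o4 : ∑ i, Δx' i * Δz' i = 0 := ortho_sum A Δx' Δlam' Δz' hAx' hAl'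
  -- sum of products after Newton step
  have hS1 : ∑ i, xk1 i * zk1 i
      = ∑ i, xk i * zk i + αk * ∑ i, (zk i * Δx i + xk i * Δz i) := by
    subst hxk1 hzk1
    rw [Finset.mul_sum]
    have : ∀ i : Fin n, (xk i + αk * Δx i) * (zk i + αk * Δz i)
        = xk i * zk i + αk * (zk i * Δx i + xk i * Δz i) + (αk * αk) * (Δx i * Δz i) := by
      intro i; ring
    simp only [this]
    rw [Finset.sum_add_distrib, Finset.sum_add_distrib, ← Finset.mul_sum, ← Finset.mul_sum, o1]
    ring
  -- sum of QN residuals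
  have hQNsum : ∑ i, (zk i * Δx' i + xk i * Δz' i)
      = (n : ℝ) * (σk1 * μk1) - ∑ i, xk1 i * zk1 i
        + γ₁ * (αk * ∑ i, (zk i * Δx i + xk i * Δz i)
          - (∑ i, xk1 i * zk1 i - ∑ i, xk i * zk i)) := by
    rw [Finset.sum_congr rfl (fun i _ => hQN i)]
    simp only [Finset.sum_add_distrib, Finset.sum_sub_distrib, ← Finset.mul_sum,
      Finset.sum_const, Finset.card_univ, Fintype.card_fin, nsmul_eq_mul]
    ring
  -- cross terms vanish
  have hcross : ∑ i, (zk1 i * Δx' i + xk1 i * Δz' i)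
      = ∑ i, (zk i * Δx' i + xk i * Δz' i) := by
    subst hxk1 hzk1
    have : ∀ i : Fin n, (zk i + αk * Δz i) * Δx' i + (xk i + αk * Δx i) * Δz' i
        = (zk i * Δx' i + xk i * Δz' i) + αk * (Δx' i * Δz i) + αk * (Δx i * Δz' i) := by
      intro i; ring
    simp only [this]
    rw [Finset.sum_add_distrib, Finset.sum_add_distrib, ← Finset.mul_sum, ← Finset.mul_sum,
      o2, o3]
    ring
  have hS2 : ∑ i, xk2 i * zk2 i
      = ∑ i, xk1 i * zk1 i + α * ∑ i, (zk1 i * Δx' i + xk1 i * Δz' i) := by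
    subst hxk2 hzk2
    have : ∀ i : Fin n, (xk1 i + α * Δx' i) * (zk1 i + α * Δz' i)
        = xk1 i * zk1 i + α * (zk1 i * Δx' i + xk1 i * Δz' i) + (α * α) * (Δx' i * Δz' i) := by
      intro i; ring
    simp only [this]
    rw [Finset.sum_add_distrib, Finset.sum_add_distrib, ← Finset.mul_sum, ← Finset.mul_sum, o4]
    ring
  have hSμ : ∑ i, xk1 i * zk1 i = n * μk1 := by
    rw [hμk1]; field_simp
  rw [hμα, hS2, hcross, hQNsum, hSμ]
  have : αk * ∑ i, (zk i * Δx i + xk i * Δz i)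
      - ((n:ℝ) * μk1 - ∑ i, xk i * zk i) = 0 := by
    rw [← hSμ, hS1]; ring
  rw [this, mul_zero, add_zero]
  field_simp
  ring
end

section
/- Assume ‖x^{k+1}∘z^{k+1} − μ_{k+1}e‖ ≤ θ_{k+1}μ_{k+1} with θ_{k+1} ∈ (0,1), that μ_{k+1} = (1 − ᾱ_k(1 − σ_k))μ_k, and that ᾱ_k ∈ (0,1], σ_k ∈ [0,1) and σ_{k+1} ∈ [0,1]. Let y ∈ ℝ^{2n+m} be any vector whose last n components equal x^{k+1}∘z^{k+1} − x^k∘z^k, let v = (0, 0, σ_{k+1}μ_{k+1}e − x^{k+1}∘z^{k+1}) ∈ ℝ^{2n+m}, and set γ₁ = (yᵀv)/(yᵀy). Then y ≠ 0 and |γ₁| ≤ 2(1 − ᾱ_k(1 − σ_k))·√(θ_{k+1}² + (1 − σ_{k+1})²·n) / (ᾱ_k(1 − σ_k)). -/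
open scoped BigOperators

/-- Euclidean norm of a finitely-indexed real vector. -/
noncomputable def enorm {ι : Type*} [Fintype ι] (v : ι → ℝ) : ℝ :=
  Real.sqrt (∑ i, v i ^ 2)

private lemma aux_pos (b c : ℝ) (h : 0 < b * c) (hc : 0 < c) : 0 < b := by
  nlinarith

private lemma aux1 (nr x W : ℝ) (hn : 0 < nr) (h : (nr * x) ^ 2 ≤ nr * W) :
    nr * x ^ 2 ≤ W := by
  nlinarith [h, hn, sq_nonneg x]

private lemma aux2 (s t : ℝ) (h0 : 0 ≤ s) (ht : Real.sqrt s ≤ t) : s ≤ t ^ 2 := by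
  nlinarith [Real.sq_sqrt h0, Real.sqrt_nonneg s]

private lemma aux_pt (p q r : ℝ) :
    (p * q - r) ^ 2 ≤ 2 * ((1 - p) * q) ^ 2 + 2 * (r - q) ^ 2 := by
  nlinarith [sq_nonneg ((1 - p) * q - (r - q))]

private lemma aux_c (C E nr s μ θ : ℝ) (h1 : C ≤ nr * (2 * ((1 - s) * μ) ^ 2) + 2 * E)
    (h2 : E ≤ (θ * μ) ^ 2) : C ≤ 2 * (θ ^ 2 + (1 - s) ^ 2 * nr) * μ ^ 2 := by
  nlinarith

private lemma aux_div (T a μ nr : ℝ) (hT : 0 ≤ T) (h1a : 0 ≤ 1 - a) (ha : 0 < a)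
    (hμ : 0 < μ) (hn : 1 ≤ nr) :
    (2 * T * ((1 - a) * μ) ^ 2) / (nr * (a * μ) ^ 2) ≤ 4 * T * (1 - a) ^ 2 / a ^ 2 := by
  have hn0 : 0 < nr := lt_of_lt_of_le one_pos hn
  rw [div_le_div_iff₀ (by positivity) (by positivity)]
  nlinarith [mul_le_mul_of_nonneg_right hn
    (show (0:ℝ) ≤ 2 * (T * (1 - a) ^ 2 * μ ^ 2 * a ^ 2) by positivity),
    (show (0:ℝ) ≤ 2 * (T * (1 - a) ^ 2 * μ ^ 2 * a ^ 2) by positivity),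
    mul_nonneg hn0.le (show (0:ℝ) ≤ T * (1 - a) ^ 2 * μ ^ 2 * a ^ 2 by positivity)]

set_option maxHeartbeats 1000000 in
/-- Bound on the quasi-Newton projection scalar `γ₁` in the `N₂` neighborhood. -/
theorem gamma1_bound_N2
    (n m : ℕ) (hn : 1 ≤ n) (hm : 1 ≤ m)
    (xk zk xk1 zk1 : Fin n → ℝ)
    (hxk : ∀ i, 0 < xk i) (hzk : ∀ i, 0 < zk i)
    (hxk1 : ∀ i, 0 < xk1 i) (hzk1 : ∀ i, 0 < zk1 i)
    (μk μk1 : ℝ)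
    (hμk : μk = (∑ i, xk i * zk i) / n)
    (hμk1 : μk1 = (∑ i, xk1 i * zk1 i) / n)
    (θk1 : ℝ) (hθk1 : θk1 ∈ Set.Ioo (0:ℝ) 1)
    (hN2 : _root_.enorm (fun i => xk1 i * zk1 i - μk1) ≤ θk1 * μk1)
    (σk σk1 αk : ℝ)
    (hαk : αk ∈ Set.Ioc (0:ℝ) 1)
    (hσk : σk ∈ Set.Ico (0:ℝ) 1)
    (hσk1 : σk1 ∈ Set.Icc (0:ℝ) 1)
    (hμrel : μk1 = (1 - αk * (1 - σk)) * μk)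
    (y : Fin n ⊕ Fin m ⊕ Fin n → ℝ)
    (hy : ∀ i, y (Sum.inr (Sum.inr i)) = xk1 i * zk1 i - xk i * zk i)
    (v : Fin n ⊕ Fin m ⊕ Fin n → ℝ)
    (hv : v = blk (fun _ => 0) (fun _ => 0) (fun i => σk1 * μk1 - xk1 i * zk1 i))
    (γ₁ : ℝ) (hγ₁ : γ₁ = dotp y v / dotp y y) :
    y ≠ 0 ∧
    |γ₁| ≤ 2 * (1 - αk * (1 - σk)) *
      Real.sqrt (θk1 ^ 2 + (1 - σk1) ^ 2 * n) / (αk * (1 - σk)) := by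
  obtain ⟨hθ0, hθlt⟩ := hθk1
  obtain ⟨hα0, hα1⟩ := hαk
  obtain ⟨hσ0, hσlt⟩ := hσk
  obtain ⟨hσ10, hσ11⟩ := hσk1
  have hn0 : (0:ℝ) < n := by exact_mod_cast Nat.lt_of_lt_of_le Nat.zero_lt_one hn
  have hn1 : (1:ℝ) ≤ n := by exact_mod_cast hn
  haveI : Nonempty (Fin n) := ⟨⟨0, hn⟩⟩
  obtain ⟨a, ha_def⟩ : ∃ a, a = αk * (1 - σk) := ⟨_, rfl⟩
  rw [← ha_def] at hμrel ⊢
  have ha0 : 0 < a := by rw [ha_def]; exact mul_pos hα0 (by linarith)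
  have hsum0 : 0 < ∑ i, xk i * zk i :=
    Finset.sum_pos (fun i _ => mul_pos (hxk i) (hzk i)) Finset.univ_nonempty
  have hsum1 : 0 < ∑ i, xk1 i * zk1 i :=
    Finset.sum_pos (fun i _ => mul_pos (hxk1 i) (hzk1 i)) Finset.univ_nonempty
  have hμ0 : 0 < μk := by rw [hμk]; positivity
  have hμ1 : 0 < μk1 := by rw [hμk1]; positivity
  have h1a : 0 < 1 - a := aux_pos _ _ (by rw [← hμrel]; exact hμ1) hμ0
  have hwsum : ∑ i, (xk1 i * zk1 i - xk i * zk i) = -(n * a * μk) := by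
    have e1 : ∑ i, xk i * zk i = n * μk := by rw [hμk]; field_simp
    have e2 : ∑ i, xk1 i * zk1 i = n * μk1 := by rw [hμk1]; field_simp
    rw [Finset.sum_sub_distrib, e1, e2, hμrel]; ring
  obtain ⟨W, hW_def⟩ : ∃ W, W = ∑ i, (xk1 i * zk1 i - xk i * zk i) ^ 2 := ⟨_, rfl⟩
  obtain ⟨C, hC_def⟩ : ∃ C, C = ∑ i, (σk1 * μk1 - xk1 i * zk1 i) ^ 2 := ⟨_, rfl⟩
  obtain ⟨T, hT_def⟩ : ∃ T, T = θk1 ^ 2 + (1 - σk1) ^ 2 * (n:ℝ) := ⟨_, rfl⟩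
  rw [← hT_def]
  have hT : 0 ≤ T := by rw [hT_def]; positivity
  have hC0 : 0 ≤ C := by rw [hC_def]; positivity
  have hWlb : n * (a * μk) ^ 2 ≤ W := by
    have h := sq_sum_le_card_mul_sum_sq
      (s := (Finset.univ : Finset (Fin n))) (f := fun i => xk1 i * zk1 i - xk i * zk i)
    rw [hwsum, Finset.card_univ, Fintype.card_fin, ← hW_def] at h
    refine aux1 _ _ _ hn0 ?_
    rw [show ((n:ℝ) * (a * μk)) ^ 2 = (-((n:ℝ) * a * μk)) ^ 2 by ring]
    exact h
  have hWpos : 0 < W := lt_of_lt_of_le (by positivity) hWlb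
  -- y ≠ 0
  have hynz : y ≠ 0 := by
    intro h0
    have hz : ∀ i, xk1 i * zk1 i - xk i * zk i = 0 := fun i => by
      rw [← hy i, h0]; rfl
    have : (0:ℝ) = -(n * a * μk) := by
      rw [← hwsum]; exact (Finset.sum_eq_zero fun i _ => hz i).symm
    linarith [mul_pos (mul_pos hn0 ha0) hμ0]
  refine ⟨hynz, ?_⟩
  -- dotp y y ≥ W
  have hYW : W ≤ dotp y y := by
    have hYeq : dotp y y = (∑ i, y (Sum.inl i) ^ 2) +
        ((∑ j, y (Sum.inr (Sum.inl j)) ^ 2) + W) := by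
      rw [hW_def]
      simp only [dotp, Fintype.sum_sum_type, ← sq]
      congr 2
      exact Finset.sum_congr rfl fun i _ => by rw [hy]
    rw [hYeq]
    have h1 : 0 ≤ ∑ i, y (Sum.inl i) ^ 2 := by positivity
    have h2 : 0 ≤ ∑ j, y (Sum.inr (Sum.inl j)) ^ 2 := by positivity
    linarith
  have hYpos : 0 < dotp y y := lt_of_lt_of_le hWpos hYW
  -- dotp y v
  have hD : dotp y v = ∑ i, (xk1 i * zk1 i - xk i * zk i) * (σk1 * μk1 - xk1 i * zk1 i) := by
    simp only [dotp, hv, blk, Fintype.sum_sum_type, Sum.elim_inl, Sum.elim_inr,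
      mul_zero, Finset.sum_const_zero, zero_add]
    exact Finset.sum_congr rfl fun i _ => by rw [hy]
  have hCS : (dotp y v) ^ 2 ≤ W * C := by
    rw [hD, hW_def, hC_def]
    exact Finset.sum_mul_sq_le_sq_mul_sq _ _ _
  -- N2 bound squared
  have hE : ∑ i, (xk1 i * zk1 i - μk1) ^ 2 ≤ (θk1 * μk1) ^ 2 := by
    have h0 : 0 ≤ ∑ i, (xk1 i * zk1 i - μk1) ^ 2 := by positivity
    have hN2' : Real.sqrt (∑ i, (xk1 i * zk1 i - μk1) ^ 2) ≤ θk1 * μk1 := by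
      simpa [_root_.enorm] using hN2
    exact aux2 _ _ h0 hN2'
  -- bound on C
  have hC : C ≤ 2 * T * μk1 ^ 2 := by
    have hpt : ∀ i, (σk1 * μk1 - xk1 i * zk1 i) ^ 2 ≤
        2 * ((1 - σk1) * μk1) ^ 2 + 2 * (xk1 i * zk1 i - μk1) ^ 2 := fun i =>
      aux_pt σk1 μk1 (xk1 i * zk1 i)
    have hsum : C ≤ (n : ℝ) * (2 * ((1 - σk1) * μk1) ^ 2)
        + 2 * ∑ i, (xk1 i * zk1 i - μk1) ^ 2 := by
      have h1 : C ≤ ∑ i : Fin n, (2 * ((1 - σk1) * μk1) ^ 2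
          + 2 * (xk1 i * zk1 i - μk1) ^ 2) := by
        rw [hC_def]; exact Finset.sum_le_sum fun i _ => hpt i
      have h2 : ∑ i : Fin n, (2 * ((1 - σk1) * μk1) ^ 2
          + 2 * (xk1 i * zk1 i - μk1) ^ 2)
          = (n : ℝ) * (2 * ((1 - σk1) * μk1) ^ 2)
          + 2 * ∑ i, (xk1 i * zk1 i - μk1) ^ 2 := by
        rw [Finset.sum_add_distrib, Finset.sum_const, Finset.card_univ, Fintype.card_fin,
          nsmul_eq_mul, ← Finset.mul_sum]
      rw [h2] at h1; exact h1
    rw [hT_def]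
    exact aux_c _ _ _ _ _ _ hsum hE
  -- main square bound
  have hfin : γ₁ ^ 2 ≤ 4 * T * (1 - a) ^ 2 / a ^ 2 := by
    have s1 : γ₁ ^ 2 = (dotp y v) ^ 2 / (dotp y y) ^ 2 := by rw [hγ₁, div_pow]
    have s2 : (dotp y v) ^ 2 / (dotp y y) ^ 2 ≤ (W * C) / (W ^ 2) := by
      apply div_le_div₀ (by positivity) hCS (by positivity)
      exact pow_le_pow_left₀ hWpos.le hYW 2
    have s3 : (W * C) / W ^ 2 = C / W := by
      rw [sq, mul_div_mul_left _ _ hWpos.ne']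
    have s4 : C / W ≤ (2 * T * μk1 ^ 2) / (n * (a * μk) ^ 2) :=
      div_le_div₀ (by positivity) hC (by positivity) hWlb
    have s5 : (2 * T * μk1 ^ 2) / (n * (a * μk) ^ 2) ≤ 4 * T * (1 - a) ^ 2 / a ^ 2 := by
      rw [hμrel]
      exact aux_div T a μk n hT h1a.le ha0 hμ0 hn1
    calc γ₁ ^ 2 = (dotp y v) ^ 2 / (dotp y y) ^ 2 := s1
      _ ≤ (W * C) / W ^ 2 := s2
      _ = C / W := s3
      _ ≤ (2 * T * μk1 ^ 2) / (n * (a * μk) ^ 2) := s4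
      _ ≤ 4 * T * (1 - a) ^ 2 / a ^ 2 := s5
  have hB0 : 0 ≤ 2 * (1 - a) * Real.sqrt T / a := by positivity
  have hBsq : (2 * (1 - a) * Real.sqrt T / a) ^ 2 = 4 * T * (1 - a) ^ 2 / a ^ 2 := by
    rw [div_pow, show (2 * (1 - a) * Real.sqrt T) ^ 2
        = 4 * (1 - a) ^ 2 * (Real.sqrt T) ^ 2 by ring, Real.sq_sqrt hT]
    ring
  calc |γ₁| = Real.sqrt (γ₁ ^ 2) := (Real.sqrt_sq_eq_abs γ₁).symm
    _ ≤ Real.sqrt ((2 * (1 - a) * Real.sqrt T / a) ^ 2) := by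
        apply Real.sqrt_le_sqrt; rw [hBsq]; exact hfin
    _ = 2 * (1 - a) * Real.sqrt T / a := Real.sqrt_sq hB0
end

section
/- Under the feasible two-step setup, the combined directions satisfy the identity z^k∘(ᾱ_kΔx^k + ᾱΔx′) + x^k∘(ᾱ_kΔz^k + ᾱΔz′) = (ᾱ + ᾱ_k(1 − ᾱ))(μ_k e − x^k∘z^k) + (μ(ᾱ) − μ_k)e − (1 + γ₁)·ᾱ·ᾱ_k²·(Δx^k∘Δz^k). -/
open scoped BigOperators
open Matrix

lemma ortho_aux {m n : ℕ} (A : Matrix (Fin m) (Fin n) ℝ) (u v : Fin n → ℝ) (w : Fin m → ℝ)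
    (h1 : A.mulVec u = 0) (h2 : (Matrix.transpose A).mulVec w + v = 0) :
    ∑ i, u i * v i = 0 := by
  have hv : v = -(A.transpose.mulVec w) := by
    funext i
    have := congrFun h2 i
    simp only [Pi.add_apply, Pi.zero_apply, Pi.neg_apply] at this ⊢
    linarith
  have key : u ⬝ᵥ (A.transpose.mulVec w) = 0 := by
    rw [Matrix.dotProduct_mulVec, Matrix.vecMul_transpose, h1]
    simp
  calc ∑ i, u i * v i = -(u ⬝ᵥ (A.transpose.mulVec w)) := by
        rw [hv]; simp [dotProduct, Finset.sum_neg_distrib]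
    _ = 0 := by rw [key]; simp

/-- Combined-direction identity (feasible two-step setup):
`Z^k(αkΔx^k + αΔx') + X^k(αkΔz^k + αΔz')
  = (α + αk(1-α))(μk e - X^kZ^k e) + (μ(α) - μk) e - (1+γ₁) α αk² ΔX^kΔZ^k e`. -/
theorem combined_direction_identity
    (n m : ℕ) (hn : 1 ≤ n) (hm : 1 ≤ m)
    (A : Matrix (Fin m) (Fin n) ℝ)
    (xk zk : Fin n → ℝ) (hxk : ∀ i, 0 < xk i) (hzk : ∀ i, 0 < zk i)
    (σk σk1 αk α γ₁ : ℝ)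
    (Δx Δz Δx' Δz' : Fin n → ℝ) (Δlam Δlam' : Fin m → ℝ)
    (μk : ℝ) (hμk : μk = (∑ i, xk i * zk i) / n)
    (hAx : A.mulVec Δx = 0)
    (hAl : (Matrix.transpose A).mulVec Δlam + Δz = 0)
    (hNewton : ∀ i, zk i * Δx i + xk i * Δz i = σk * μk - xk i * zk i)
    (xk1 zk1 : Fin n → ℝ)
    (hxk1 : xk1 = fun i => xk i + αk * Δx i)
    (hzk1 : zk1 = fun i => zk i + αk * Δz i)
    (μk1 : ℝ) (hμk1 : μk1 = (∑ i, xk1 i * zk1 i) / n)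
    (hAx' : A.mulVec Δx' = 0)
    (hAl' : (Matrix.transpose A).mulVec Δlam' + Δz' = 0)
    (hQN : ∀ i, zk i * Δx' i + xk i * Δz' i
      = σk1 * μk1 - xk1 i * zk1 i
        + γ₁ * (αk * (zk i * Δx i + xk i * Δz i) - (xk1 i * zk1 i - xk i * zk i)))
    (xk2 zk2 : Fin n → ℝ)
    (hxk2 : xk2 = fun i => xk1 i + α * Δx' i)
    (hzk2 : zk2 = fun i => zk1 i + α * Δz' i)
    (μα : ℝ) (hμα : μα = (∑ i, xk2 i * zk2 i) / n) :
    ∀ i, zk i * (αk * Δx i + α * Δx' i) + xk i * (αk * Δz i + α * Δz' i)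
      = (α + αk * (1 - α)) * (μk - xk i * zk i) + (μα - μk)
        - (1 + γ₁) * α * αk ^ 2 * (Δx i * Δz i) := by
  have hn0 : (n : ℝ) ≠ 0 := Nat.cast_ne_zero.mpr (by omega)
  -- orthogonality facts
  have S0 : ∑ i, Δx i * Δz i = 0 := ortho_aux A Δx Δz Δlam hAx hAl
  have S1 : ∑ i, Δx' i * Δz' i = 0 := ortho_aux A Δx' Δz' Δlam' hAx' hAl'
  have S2 : ∑ i, Δx i * Δz' i = 0 := ortho_aux A Δx Δz' Δlam' hAx hAl'
  have S3 : ∑ i, Δx' i * Δz i = 0 := ortho_aux A Δx' Δz Δlam hAx' hAl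
  -- sum of base products
  have hsum : ∑ i, xk i * zk i = n * μk := by
    rw [hμk]; field_simp
  -- sum of Newton relation
  have hNsum : ∑ i, (zk i * Δx i + xk i * Δz i) = n * (σk * μk) - n * μk := by
    rw [Finset.sum_congr rfl (fun i _ => hNewton i)]
    rw [Finset.sum_sub_distrib, hsum, Finset.sum_const]
    simp [mul_comm]
  -- E1
  have hsum1 : ∑ i, xk1 i * zk1 i = n * μk1 := by
    rw [hμk1]; field_simp
  have E1 : μk1 = μk + αk * (σk * μk - μk) := by
    have expand : ∑ i, xk1 i * zk1 i
        = (∑ i, xk i * zk i) + αk * (∑ i, (zk i * Δx i + xk i * Δz i))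
          + αk ^ 2 * (∑ i, Δx i * Δz i) := by
      subst hxk1 hzk1
      rw [Finset.mul_sum, Finset.mul_sum, ← Finset.sum_add_distrib, ← Finset.sum_add_distrib]
      exact Finset.sum_congr rfl (fun i _ => by ring)
    rw [hsum, hNsum, S0, hsum1] at expand
    have : (n : ℝ) * μk1 = (n : ℝ) * (μk + αk * (σk * μk - μk)) := by linarith [expand]
    exact mul_left_cancel₀ hn0 this
  -- sum of QN relation
  have hQsum : ∑ i, (zk i * Δx' i + xk i * Δz' i)
      = n * (σk1 * μk1) - n * μk1
        + γ₁ * (αk * (n * (σk * μk) - n * μk) - (n * μk1 - n * μk)) := by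
    rw [Finset.sum_congr rfl (fun i _ => hQN i)]
    rw [Finset.sum_add_distrib, Finset.sum_sub_distrib, hsum1]
    have : ∑ i, γ₁ * (αk * (zk i * Δx i + xk i * Δz i) - (xk1 i * zk1 i - xk i * zk i))
        = γ₁ * (αk * (n * (σk * μk) - n * μk) - (n * μk1 - n * μk)) := by
      rw [← Finset.mul_sum, Finset.sum_sub_distrib, ← Finset.mul_sum, hNsum,
        Finset.sum_sub_distrib, hsum1, hsum]
    rw [this, Finset.sum_const]
    simp [mul_comm]
  -- E2
  have hsum2 : ∑ i, xk2 i * zk2 i = n * μα := by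
    rw [hμα]; field_simp
  have E2 : μα = μk1 + α * (σk1 * μk1 - μk1) := by
    have expand : ∑ i, xk2 i * zk2 i
        = (∑ i, xk1 i * zk1 i) + α * (∑ i, (zk i * Δx' i + xk i * Δz' i))
          + α * αk * ((∑ i, Δx' i * Δz i) + (∑ i, Δx i * Δz' i))
          + α ^ 2 * (∑ i, Δx' i * Δz' i) := by
      subst hxk2 hzk2 hxk1 hzk1
      simp only [Finset.mul_sum, ← Finset.sum_add_distrib]
      exact Finset.sum_congr rfl (fun i _ => by ring)
    rw [hsum1, hQsum, S1, S2, S3, hsum2] at expand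
    have : (n : ℝ) * μα = (n : ℝ) * (μk1 + α * (σk1 * μk1 - μk1)) := by
      have hE1n : (n : ℝ) * μk1 = (n : ℝ) * μk + αk * ((n : ℝ) * (σk * μk) - n * μk) := by
        rw [E1]; ring
      linear_combination expand - α * γ₁ * hE1n
    exact mul_left_cancel₀ hn0 this
  intro i
  have N := hNewton i
  have Q := hQN i
  rw [hxk1, hzk1] at Q
  simp only at Q
  linear_combination (αk * (1 - α)) * N + α * Q - (1 - α) * E1 - E2
end

section
/- Feasible quasi-Newton step stays in the N₂ neighborhood: assume additionally that Ax^k = b and Aᵀλ^k + z^k = c for b ∈ ℝ^m, c ∈ ℝ^n and λ^k ∈ ℝ^m, that x^{k+1}, z^{k+1} have positive components, that θ_k = θ_{k+1} = θ ∈ (0, 16/25) and σ_k = σ_{k+1} = σ ∈ (0,1) satisfy (θ² + n(1 − σ)²)/(2^{3/2}(1 − θ)) ≤ θσ, that ‖x^k∘z^k − μ_k e‖ ≤ θμ_k and ‖x^{k+1}∘z^{k+1} − μ_{k+1}e‖ ≤ θμ_{k+1}, that ‖Δx^k∘Δz^k‖ ≤ (θ² + n(1 − σ)²)/(2^{3/2}(1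 − θ))·μ_k, and that the quasi-Newton scalar is γ₁ = (x^{k+1}∘z^{k+1} − x^k∘z^k)ᵀ(σμ_{k+1}e − x^{k+1}∘z^{k+1}) / ‖x^{k+1}∘z^{k+1} − x^k∘z^k‖². If the step sizes satisfy ᾱ_k ∈ (0, min{(1 − σ)/(4σ), σ(1 − σ)/(10(1 − σ) + 4)}] and ᾱ ∈ [ᾱ_k, σ(1 − σ)/(10(1 − σ) + 4)], then the next iterate x^{k+2} = x^{k+1} + ᾱΔx′, λ^{k+2} = λ^k + ᾱ_kΔλ^k + ᾱΔλ′, z^{k+2} = z^{k+1} + ᾱΔz′ satisfies Ax^{k+2} = b, Aᵀλ^{k+2} + z^{k+2} = c, x^{k+2} and z^{k+2} have positive components, and ‖x^{k+2}∘z^{k+2} − μ(ᾱ)e‖ ≤ θ·μ(ᾱ). -/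
open scoped BigOperators

namespace QNAux
variable {ι : Type*} [Fintype ι]

lemma enorm_nn (v : ι → ℝ) : 0 ≤ _root_.enorm v := Real.sqrt_nonneg _

lemma sq_enorm (v : ι → ℝ) : _root_.enorm v ^ 2 = ∑ i, v i ^ 2 :=
  Real.sq_sqrt (by positivity)

lemma enorm_le {v : ι → ℝ} {c : ℝ} (hc : 0 ≤ c) (h : ∑ i, v i ^ 2 ≤ c ^ 2) :
    _root_.enorm v ≤ c := by
  rw [_root_.enorm, show c = Real.sqrt (c^2) by rw [Real.sqrt_sq hc]]
  exact Real.sqrt_le_sqrt h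

lemma le_enorm (v : ι → ℝ) (i : ι) : |v i| ≤ _root_.enorm v := by
  rw [_root_.enorm, ← Real.sqrt_sq_eq_abs]
  exact Real.sqrt_le_sqrt (Finset.single_le_sum (f := fun j => v j ^ 2)
    (fun j _ => sq_nonneg _) (Finset.mem_univ i))

lemma le_enorm_of {v : ι → ℝ} {c : ℝ} (hc : 0 ≤ c) (h : c ^ 2 ≤ ∑ i, v i ^ 2) :
    c ≤ _root_.enorm v := by
  rw [_root_.enorm, show c = Real.sqrt (c^2) by rw [Real.sqrt_sq hc]]
  exact Real.sqrt_le_sqrt h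

lemma cs_le (u v : ι → ℝ) : ∑ i, u i * v i ≤ _root_.enorm u * _root_.enorm v :=
  Real.sum_mul_le_sqrt_mul_sqrt Finset.univ u v

lemma cs (u v : ι → ℝ) : |∑ i, u i * v i| ≤ _root_.enorm u * _root_.enorm v := by
  rw [abs_le]
  refine ⟨?_, cs_le u v⟩
  have h := cs_le (fun i => -u i) v
  have e1 : _root_.enorm (fun i => -u i) = _root_.enorm u := by
    unfold _root_.enorm; congr 1; exact Finset.sum_congr rfl fun i _ => by ring
  have e2 : ∑ i, (fun i => -u i) i * v i = -∑ i, u i * v i := by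
    rw [← Finset.sum_neg_distrib]; exact Finset.sum_congr rfl fun i _ => by ring
  rw [e1, e2] at h; linarith

lemma enorm_add_le (u v : ι → ℝ) :
    _root_.enorm (fun i => u i + v i) ≤ _root_.enorm u + _root_.enorm v := by
  apply enorm_le (add_nonneg (enorm_nn u) (enorm_nn v))
  have h1 := cs u v
  have h2 := sq_enorm u
  have h3 := sq_enorm v
  have key : ∑ i, (u i + v i) ^ 2
      = (∑ i, u i ^ 2) + 2 * (∑ i, u i * v i) + ∑ i, v i ^ 2 := by
    simp only [add_sq, Finset.sum_add_distrib, Finset.mul_sum, mul_assoc]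
  rw [key]
  have := abs_le.mp h1
  nlinarith [enorm_nn u, enorm_nn v]

lemma enorm_smul (c : ℝ) (v : ι → ℝ) :
    _root_.enorm (fun i => c * v i) = |c| * _root_.enorm v := by
  unfold _root_.enorm
  rw [show ∑ i, (c * v i) ^ 2 = c ^ 2 * ∑ i, v i ^ 2 by
    rw [Finset.mul_sum]; exact Finset.sum_congr rfl fun i _ => by ring,
    Real.sqrt_mul (sq_nonneg c), Real.sqrt_sq_eq_abs]

lemma enorm_mul_le (u v : ι → ℝ) :
    _root_.enorm (fun i => u i * v i) ≤ _root_.enorm u * _root_.enorm v := by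
  apply enorm_le (mul_nonneg (enorm_nn u) (enorm_nn v))
  rw [mul_pow, sq_enorm, sq_enorm]
  have key : ∀ i, (u i * v i) ^ 2 ≤ (∑ j, u j ^ 2) * v i ^ 2 := by
    intro i
    have : u i ^ 2 ≤ ∑ j, u j ^ 2 :=
      Finset.single_le_sum (fun j _ => sq_nonneg (u j)) (Finset.mem_univ i)
    nlinarith [sq_nonneg (v i)]
  calc ∑ i, (u i * v i) ^ 2 ≤ ∑ i, (∑ j, u j ^ 2) * v i ^ 2 :=
        Finset.sum_le_sum fun i _ => key i
    _ = (∑ j, u j ^ 2) * ∑ i, v i ^ 2 := by rw [← Finset.mul_sum]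

lemma enorm_congr {u v : ι → ℝ} (h : ∀ i, u i = v i) : _root_.enorm u = _root_.enorm v := by
  unfold _root_.enorm; congr 1; exact Finset.sum_congr rfl fun i _ => by rw [h]

lemma expand_sum (v : ι → ℝ) (μ σ : ℝ) (hs : ∑ i, v i = (Fintype.card ι : ℝ) * μ) :
    ∑ i, (σ * μ - v i) ^ 2
      = (Fintype.card ι : ℝ) * ((1 - σ) * μ) ^ 2 + ∑ i, (v i - μ) ^ 2 := by
  have key : ∀ i, (σ * μ - v i) ^ 2
      = (v i - μ) ^ 2 + ((σ ^ 2 - 1) * μ ^ 2 + (2 * (1 - σ) * μ) * v i) :=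
    fun i => by ring
  rw [Finset.sum_congr rfl fun i _ => key i, Finset.sum_add_distrib,
    Finset.sum_add_distrib, Finset.sum_const, ← Finset.mul_sum, hs,
    Finset.card_univ, nsmul_eq_mul]
  ring

end QNAux

namespace QNAux

lemma numP1 (σ θ αk sn sq K : ℝ) (hσ0 : 0 < σ) (hσ1 : σ < 1)
    (hθ0 : 0 < θ) (hθ1 : θ < 16/25) (hαk0 : 0 < αk) (hαk32 : αk ≤ 1/32)
    (hαkB : αk * (10*(1-σ)+4) ≤ σ*(1-σ)) (hsn : 1-σ ≤ sn)
    (hsq0 : 0 ≤ sq) (hsq1 : sq ≤ sn+θ) (hK0 : 0 ≤ K) (hKβ : K ≤ θ*σ) :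
    sq*(αk*K) ≤ ((θ*σ)*((1-(θ/4))*sn))/4 := by
  have hsn0 : 0 < sn := lt_of_lt_of_le (by linarith) hsn
  have hβ : 0 < θ*σ := mul_pos hθ0 hσ0
  have h5 : 4*(αk*θ) ≤ (θ*σ)*(1-σ) := by
    nlinarith [mul_le_mul_of_nonneg_left hαkB hθ0.le, mul_pos hαk0 (show (0:ℝ) < 1-σ by linarith), mul_pos (mul_pos hαk0 hθ0) (show (0:ℝ) < 1-σ by linarith)]
  have h6 : θ*(αk*K) ≤ ((θ*σ)*(1-σ))*K/4 := by nlinarith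
  have h7 : ((θ*σ)*(1-σ))*K ≤ ((θ*σ)*sn)*(θ*σ) := by
    have := mul_le_mul hsn hKβ hK0 hsn0.le
    nlinarith [this, hβ]
  have h9 : sn*(αk*K) ≤ sn*((1/32)*(θ*σ)) := by
    have : αk*K ≤ (1/32)*(θ*σ) := mul_le_mul hαk32 hKβ hK0 (by norm_num)
    exact mul_le_mul_of_nonneg_left this hsn0.le
  have h10 : sq*(αk*K) ≤ (sn+θ)*(αk*K) :=
    mul_le_mul_of_nonneg_right hsq1 (mul_nonneg hαk0.le hK0)
  have hb1 : θ*σ ≤ 16/25 := by nlinarith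
  have h11 : ((θ*σ)*sn)*(θ*σ) ≤ (16/25)*((θ*σ)*sn) := by
    have := mul_le_mul_of_nonneg_left hb1 (mul_pos hβ hsn0).le
    linarith
  have h12 : (21/100)*((θ*σ)*sn) ≤ ((θ*σ)*((1-(θ/4))*sn))/4 := by
    nlinarith [mul_pos hβ hsn0]
  nlinarith [h10, h9, h6, h7, h11, h12]

lemma numC2 (c2 : ℝ) (hc2pos : 0 < c2) (hc2sq : c2^2 = 8) :
    (282/100 : ℝ) ≤ c2 ∧ c2 ≤ 283/100 := by constructor <;> nlinarith

lemma numSq85 (σ θ sq c2 : ℝ) (hσ0 : 0 < σ) (hσ1 : σ < 1)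
    (hθ0 : 0 < θ) (hθ1 : θ < 16/25) (hc2pos : 0 < c2) (hc2sq : c2^2 = 8)
    (hsq0 : 0 ≤ sq) (hsqc : sq^2 ≤ c2*(1-θ)*(θ*σ)) : sq ≤ 17/20 := by
  obtain ⟨h1, h2⟩ := numC2 c2 hc2pos hc2sq
  have hθ2 : (0:ℝ) < 1-θ := by linarith
  have hb1 : θ*σ ≤ θ := by nlinarith
  have e1 : c2*(1-θ)*(θ*σ) ≤ c2*(1-θ)*θ :=
    mul_le_mul_of_nonneg_left hb1 (mul_nonneg hc2pos.le hθ2.le)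
  have e2 : c2*(1-θ)*θ ≤ (283/100)*((1-θ)*θ) := by
    have := mul_le_mul_of_nonneg_right h2 (mul_nonneg hθ2.le hθ0.le)
    nlinarith [this]
  have e3 : (1-θ)*θ ≤ 1/4 := by nlinarith [sq_nonneg (θ-1/2)]
  nlinarith [sq_nonneg (sq - 17/20)]

lemma numS (σ θ sq c2 : ℝ) (hσ0 : 0 < σ) (hσ1 : σ < 1)
    (hθ0 : 0 < θ) (hθ1 : θ < 16/25) (hc2pos : 0 < c2) (hc2sq : c2^2 = 8)
    (hsq0 : 0 ≤ sq) (hsqc : sq^2 ≤ c2*(1-θ)*(θ*σ)) :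
    (sq+(θ*σ)/4)^2 ≤ (c2*(1-θ) + 465/1000)*(θ*σ) := by
  have h85 := numSq85 σ θ sq c2 hσ0 hσ1 hθ0 hθ1 hc2pos hc2sq hsq0 hsqc
  have hβ : 0 < θ*σ := mul_pos hθ0 hσ0
  have hβ1 : θ*σ ≤ 16/25 := by nlinarith
  nlinarith [mul_le_mul_of_nonneg_right h85 hβ.le, sq_nonneg (θ*σ)]

lemma numP2 (σ θ αk sq c2 : ℝ) (hσ0 : 0 < σ) (hσ1 : σ < 1)
    (hθ0 : 0 < θ) (hθ1 : θ < 16/25) (hαk0 : 0 < αk) (hαk32 : αk ≤ 1/32)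
    (hc2pos : 0 < c2) (hc2sq : c2^2 = 8)
    (hsq0 : 0 ≤ sq) (hsqc : sq^2 ≤ c2*(1-θ)*(θ*σ)) :
    αk^2*(sq^2*((sq+(θ*σ)/4)^2)) ≤ (((θ*σ)*(1-θ))/4)^2 := by
  have hS := numS σ θ sq c2 hσ0 hσ1 hθ0 hθ1 hc2pos hc2sq hsq0 hsqc
  obtain ⟨hc1, hc2'⟩ := numC2 c2 hc2pos hc2sq
  have hβ : 0 < θ*σ := mul_pos hθ0 hσ0
  have hθ' : (9:ℝ)/25 ≤ 1-θ := by linarith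
  -- sq^2*S ≤ c2(1-θ)β * (c2(1-θ)+0.465)β
  have hA : sq^2*((sq+(θ*σ)/4)^2) ≤ (c2*(1-θ)*(θ*σ))*((c2*(1-θ) + 465/1000)*(θ*σ)) := by
    have := mul_le_mul hsqc hS (sq_nonneg _) (by positivity)
    nlinarith [this]
  have hB : αk^2 ≤ 1/1024 := by nlinarith
  -- final: (1/1024) * c2(1-θ)(c2(1-θ)+0.465) ≤ (1-θ)^2/16
  have hC : (c2*(1-θ))*((c2*(1-θ) + 465/1000)) ≤ 64*(1-θ)^2 := by nlinarith
  have hD : 0 ≤ sq^2*((sq+(θ*σ)/4)^2) := by positivity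
  nlinarith [mul_le_mul hB hA hD (by norm_num),
    mul_le_mul_of_nonneg_right hC (sq_nonneg (θ*σ))]

lemma numP3 (σ θ α sq c2 : ℝ) (hσ0 : 0 < σ) (hσ1 : σ < 1)
    (hθ0 : 0 < θ) (hθ1 : θ < 16/25) (hα0 : 0 < α) (hα32 : α ≤ 1/32)
    (hc2pos : 0 < c2) (hc2sq : c2^2 = 8)
    (hsq0 : 0 ≤ sq) (hsqc : sq^2 ≤ c2*(1-θ)*(θ*σ)) :
    α*((sq+(θ*σ)/4)^2) ≤ ((θ*σ)*(1-θ))/4 := by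
  have hS := numS σ θ sq c2 hσ0 hσ1 hθ0 hθ1 hc2pos hc2sq hsq0 hsqc
  obtain ⟨hc1, hc2'⟩ := numC2 c2 hc2pos hc2sq
  have hβ : 0 < θ*σ := mul_pos hθ0 hσ0
  have hE : (sq+(θ*σ)/4)^2 ≤ (283/100*(1-θ) + 465/1000)*(θ*σ) := by nlinarith
  have hF : 0 ≤ (sq+(θ*σ)/4)^2 := sq_nonneg _
  nlinarith [mul_le_mul hα32 hE hF (by norm_num)]

end QNAux

namespace QNAux

lemma amgm (x y : ℝ) : x*y ≤ (x^2+y^2)/2 := by nlinarith [sq_nonneg (x-y)]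

lemma pair_cs (ea eb ea' eb' : ℝ) :
    (eb*ea' + ea*eb')^2 ≤ (ea^2+eb^2)*(ea'^2+eb'^2) := by
  nlinarith [sq_nonneg (ea*ea' - eb*eb')]

lemma sqle {x y : ℝ} (hx : 0 ≤ x) (hy : 0 ≤ y) (h : x^2 ≤ y^2) : x ≤ y := by
  nlinarith

end QNAux
set_option maxHeartbeats 1000000 in

open QNAux in
/-- Feasible quasi-Newton step stays in the `N₂(θ)` neighborhood
(here `σ = σk = σk1` and `θ = θk = θk1`). -/
theorem qn_step_stays_in_N2
    (n m : ℕ) (hn : 1 ≤ n) (hm : 1 ≤ m)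
    (A : Matrix (Fin m) (Fin n) ℝ) (b : Fin m → ℝ) (c : Fin n → ℝ)
    (xk zk : Fin n → ℝ) (hxk : ∀ i, 0 < xk i) (hzk : ∀ i, 0 < zk i)
    (lamk : Fin m → ℝ)
    (hfeas1 : A.mulVec xk = b)
    (hfeas2 : (Matrix.transpose A).mulVec lamk + zk = c)
    (σ θ αk α γ₁ : ℝ)
    (Δx Δz Δx' Δz' : Fin n → ℝ) (Δlam Δlam' : Fin m → ℝ)
    (μk : ℝ) (hμk : μk = (∑ i, xk i * zk i) / n)
    (hAx : A.mulVec Δx = 0)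
    (hAl : (Matrix.transpose A).mulVec Δlam + Δz = 0)
    (hNewton : ∀ i, zk i * Δx i + xk i * Δz i = σ * μk - xk i * zk i)
    (xk1 zk1 : Fin n → ℝ)
    (hxk1 : xk1 = fun i => xk i + αk * Δx i)
    (hzk1 : zk1 = fun i => zk i + αk * Δz i)
    (hxk1pos : ∀ i, 0 < xk1 i) (hzk1pos : ∀ i, 0 < zk1 i)
    (μk1 : ℝ) (hμk1 : μk1 = (∑ i, xk1 i * zk1 i) / n)
    (hAx' : A.mulVec Δx' = 0)
    (hAl' : (Matrix.transpose A).mulVec Δlam' + Δz' = 0)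
    (hQN : ∀ i, zk i * Δx' i + xk i * Δz' i
      = σ * μk1 - xk1 i * zk1 i
        + γ₁ * (αk * (zk i * Δx i + xk i * Δz i) - (xk1 i * zk1 i - xk i * zk i)))
    (hθ : θ ∈ Set.Ioo (0:ℝ) (16/25))
    (hσ : σ ∈ Set.Ioo (0:ℝ) 1)
    (hcond : (θ ^ 2 + n * (1 - σ) ^ 2) / ((2:ℝ) ^ ((3:ℝ)/2) * (1 - θ)) ≤ θ * σ)
    (hN2k : _root_.enorm (fun i => xk i * zk i - μk) ≤ θ * μk)
    (hN2k1 : _root_.enorm (fun i => xk1 i * zk1 i - μk1) ≤ θ * μk1)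
    (hErr : _root_.enorm (fun i => Δx i * Δz i)
      ≤ (θ ^ 2 + n * (1 - σ) ^ 2) / ((2:ℝ) ^ ((3:ℝ)/2) * (1 - θ)) * μk)
    (hγ₁ : γ₁ = (∑ i, (xk1 i * zk1 i - xk i * zk i) * (σ * μk1 - xk1 i * zk1 i))
      / (∑ i, (xk1 i * zk1 i - xk i * zk i) ^ 2))
    (hαk : αk ∈ Set.Ioc (0:ℝ)
      (min ((1 - σ) / (4 * σ)) (σ * (1 - σ) / (10 * (1 - σ) + 4))))
    (hα : α ∈ Set.Icc αk (σ * (1 - σ) / (10 * (1 - σ) + 4)))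
    (xk2 zk2 : Fin n → ℝ) (lamk2 : Fin m → ℝ)
    (hxk2 : xk2 = fun i => xk1 i + α * Δx' i)
    (hzk2 : zk2 = fun i => zk1 i + α * Δz' i)
    (hlamk2 : lamk2 = fun i => lamk i + αk * Δlam i + α * Δlam' i)
    (μα : ℝ) (hμα : μα = (∑ i, xk2 i * zk2 i) / n) :
    A.mulVec xk2 = b ∧
    (Matrix.transpose A).mulVec lamk2 + zk2 = c ∧
    (∀ i, 0 < xk2 i) ∧ (∀ i, 0 < zk2 i) ∧
    _root_.enorm (fun i => xk2 i * zk2 i - μα) ≤ θ * μα := by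
  obtain ⟨hθ0, hθ1⟩ := hθ
  obtain ⟨hσ0, hσ1⟩ := hσ
  obtain ⟨hαk0, hαkle⟩ := hαk
  obtain ⟨hααk, hα2⟩ := hα
  have hαk1 : αk ≤ σ * (1 - σ) / (10 * (1 - σ) + 4) := hαkle.trans (min_le_right _ _)
  have hαkA : αk ≤ (1 - σ) / (4 * σ) := hαkle.trans (min_le_left _ _)
  have hden : (0:ℝ) < 10 * (1 - σ) + 4 := by linarith only [hσ1]
  have hb32 : σ * (1 - σ) / (10 * (1 - σ) + 4) ≤ 1/32 := by
    rw [div_le_iff₀ hden]; nlinarith only [sq_nonneg (σ - 21/32), hσ0, hσ1]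
  have hαk32 : αk ≤ 1/32 := hαk1.trans hb32
  have hα32 : α ≤ 1/32 := hα2.trans hb32
  have hα0 : 0 < α := lt_of_lt_of_le hαk0 hααk
  have hαkB : αk * (10 * (1 - σ) + 4) ≤ σ * (1 - σ) := (le_div_iff₀ hden).mp hαk1
  have hαkC : αk * (4 * σ) ≤ 1 - σ := (le_div_iff₀ (by positivity)).mp hαkA
  have hθhalf : (0:ℝ) < 1 - θ := by linarith only [hθ1]
  -- feasibility, primal
  have feas1 : A.mulVec xk2 = b := by
    have hx2 : xk2 = xk + αk • Δx + α • Δx' := by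
      funext i; simp [hxk2, hxk1]
    rw [hx2, Matrix.mulVec_add, Matrix.mulVec_add, Matrix.mulVec_smul,
      Matrix.mulVec_smul, hAx, hAx', hfeas1]
    simp
  -- feasibility, dual
  have feas2 : (Matrix.transpose A).mulVec lamk2 + zk2 = c := by
    have hl2 : lamk2 = lamk + αk • Δlam + α • Δlam' := by
      funext i; simp [hlamk2]
    have hz2 : zk2 = zk + αk • Δz + α • Δz' := by
      funext i; simp [hzk2, hzk1]
    rw [hl2, hz2, Matrix.mulVec_add, Matrix.mulVec_add, Matrix.mulVec_smul,
      Matrix.mulVec_smul]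
    have e : (Matrix.transpose A).mulVec lamk + αk • (Matrix.transpose A).mulVec Δlam
        + α • (Matrix.transpose A).mulVec Δlam' + (zk + αk • Δz + α • Δz')
        = ((Matrix.transpose A).mulVec lamk + zk)
          + αk • ((Matrix.transpose A).mulVec Δlam + Δz)
          + α • ((Matrix.transpose A).mulVec Δlam' + Δz') := by module
    rw [e, hfeas2, hAl, hAl']
    simp
  -- orthogonality
  have orth : ∀ (u : Fin n → ℝ) (lam' : Fin m → ℝ) (w : Fin n → ℝ),
      A.mulVec u = 0 → (Matrix.transpose A).mulVec lam' + w = 0 →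
      ∑ i, u i * w i = 0 := by
    intro u lam' w h1 h2
    have hv : w = -((Matrix.transpose A).mulVec lam') := eq_neg_of_add_eq_zero_right h2
    have e : ∑ i, u i * w i = dotProduct u w := rfl
    rw [e, hv, dotProduct_neg, Matrix.dotProduct_mulVec,
      Matrix.vecMul_transpose, h1, zero_dotProduct, neg_zero]
  have o1 : ∑ i, Δx i * Δz i = 0 := orth Δx Δlam Δz hAx hAl
  have o2 : ∑ i, Δx i * Δz' i = 0 := orth Δx Δlam' Δz' hAx hAl'
  have o3 : ∑ i, Δx' i * Δz i = 0 := orth Δx' Δlam Δz hAx' hAl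
  have o4 : ∑ i, Δx' i * Δz' i = 0 := orth Δx' Δlam' Δz' hAx' hAl'
  -- scalar facts
  have hnn : Nonempty (Fin n) := ⟨⟨0, by omega⟩⟩
  have hnR : (0:ℝ) < n := by exact_mod_cast Nat.pos_of_ne_zero (by omega)
  have hμpos : 0 < μk := by
    rw [hμk]
    exact div_pos (Finset.sum_pos (fun i _ => mul_pos (hxk i) (hzk i))
      Finset.univ_nonempty) hnR
  have hμ1pos : 0 < μk1 := by
    rw [hμk1]
    exact div_pos (Finset.sum_pos (fun i _ => mul_pos (hxk1pos i) (hzk1pos i))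
      Finset.univ_nonempty) hnR
  have hsumw : ∑ i, xk i * zk i = (n:ℝ) * μk := by
    rw [hμk]; field_simp
  have hsumv : ∑ i, xk1 i * zk1 i = (n:ℝ) * μk1 := by
    rw [hμk1]; field_simp
  have hx1 : ∀ i, xk1 i = xk i + αk * Δx i := fun i => by rw [hxk1]
  have hz1 : ∀ i, zk1 i = zk i + αk * Δz i := fun i => by rw [hzk1]
  have hx2pt : ∀ i, xk2 i = xk1 i + α * Δx' i := fun i => by rw [hxk2]
  have hz2pt : ∀ i, zk2 i = zk1 i + α * Δz' i := fun i => by rw [hzk2]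
  have F2 : ∀ i, xk1 i * zk1 i
      = (1 - αk) * (xk i * zk i) + αk * (σ * μk) + αk^2 * (Δx i * Δz i) := by
    intro i; rw [hx1 i, hz1 i]; linear_combination αk * hNewton i
  have F3 : μk1 = (1 - αk * (1 - σ)) * μk := by
    have e1 : ∑ i, xk1 i * zk1 i
        = (1-αk) * (∑ i, xk i * zk i) + (n:ℝ) * (αk * (σ * μk))
          + αk^2 * (∑ i, Δx i * Δz i) := by
      rw [Finset.mul_sum, Finset.mul_sum,
        show (n:ℝ) * (αk * (σ*μk)) = ∑ _i : Fin n, αk * (σ*μk) by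
          rw [Finset.sum_const, Finset.card_univ, Fintype.card_fin, nsmul_eq_mul],
        ← Finset.sum_add_distrib, ← Finset.sum_add_distrib]
      exact Finset.sum_congr rfl fun i _ => F2 i
    rw [hsumv, hsumw, o1] at e1
    have e2 : (n:ℝ) * μk1 = (n:ℝ) * ((1 - αk*(1-σ))*μk) := by linear_combination e1
    exact mul_left_cancel₀ (ne_of_gt hnR) e2
  have hαkσ32 : αk * (1-σ) ≤ 1/32 :=
    le_trans (mul_le_of_le_one_right hαk0.le (by linarith)) hαk32
  have hμ1le : μk1 ≤ μk := by
    rw [F3]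
    have h := mul_le_mul_of_nonneg_right
      (show 1 - αk*(1-σ) ≤ 1 by
        linarith only [mul_pos hαk0 (show (0:ℝ) < 1-σ by linarith only [hσ1])])
      hμpos.le
    linarith only [h]
  have hμlt : μk ≤ (32/31) * μk1 := by
    rw [F3]
    have h := mul_le_mul_of_nonneg_right hαkσ32 hμpos.le
    linarith only [h]
  -- constants
  set c2 : ℝ := (2:ℝ) ^ ((3:ℝ)/2) with hc2def
  have hc2pos : 0 < c2 := Real.rpow_pos_of_pos two_pos _
  have hc2sq : c2^2 = 8 := by
    rw [hc2def, ← Real.rpow_natCast ((2:ℝ) ^ ((3:ℝ)/2)) 2,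
      ← Real.rpow_mul (by norm_num : (0:ℝ) ≤ 2)]
    rw [show (3:ℝ)/2 * (2:ℕ) = ((3:ℕ):ℝ) by norm_num, Real.rpow_natCast]
    norm_num
  set Q2 : ℝ := θ^2 + (n:ℝ)*(1-σ)^2 with hQ2def
  have hQ2pos : 0 < Q2 := by
    rw [hQ2def]
    have h1 : 0 < θ^2 := pow_pos hθ0 2
    have h2 : 0 ≤ (n:ℝ)*(1-σ)^2 := by positivity
    linarith only [h1, h2]
  set K : ℝ := Q2 / (c2*(1-θ)) with hKdef
  have hK0 : 0 ≤ K := by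
    rw [hKdef]; exact div_nonneg hQ2pos.le (by positivity)
  have hKβ : K ≤ θ*σ := hcond
  have hKc2 : c2*(1-θ)*K = Q2 := by
    rw [hKdef]; field_simp
  set ε : ℝ := _root_.enorm (fun i => Δx i * Δz i) with hεdef
  have hε0 : 0 ≤ ε := by rw [hεdef]; exact enorm_nn _
  have hεK : ε ≤ K * μk := hErr
  set sn : ℝ := Real.sqrt n * (1-σ) with hsndef
  have hsn2 : sn^2 = (n:ℝ)*(1-σ)^2 := by
    rw [hsndef, mul_pow, Real.sq_sqrt hnR.le]
  have hsn1 : 1 - σ ≤ sn := by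
    have h1 : (1:ℝ) ≤ Real.sqrt n := by
      rw [show (1:ℝ) = Real.sqrt 1 by simp]
      exact Real.sqrt_le_sqrt (by exact_mod_cast hn)
    rw [hsndef]
    have h2 := mul_le_mul_of_nonneg_right h1 (show (0:ℝ) ≤ 1-σ by linarith only [hσ1])
    linarith only [h2]
  have hsnpos : 0 < sn := lt_of_lt_of_le (show (0:ℝ) < 1-σ by linarith only [hσ1]) hsn1
  set sq : ℝ := Real.sqrt Q2 with hsqdef
  have hsq2 : sq^2 = Q2 := by rw [hsqdef]; exact Real.sq_sqrt hQ2pos.le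
  have hsq0 : 0 ≤ sq := by rw [hsqdef]; exact Real.sqrt_nonneg _
  have hsqle : sq ≤ sn + θ := by
    have h1 : Q2 ≤ (sn+θ)^2 := by
      have h2 : 0 ≤ sn*θ := mul_nonneg hsnpos.le hθ0.le
      have h3 : (sn+θ)^2 = sn^2 + 2*(sn*θ) + θ^2 := by ring
      rw [h3, hsn2, hQ2def]; linarith only [h2]
    calc sq = Real.sqrt Q2 := hsqdef
      _ ≤ Real.sqrt ((sn+θ)^2) := Real.sqrt_le_sqrt h1
      _ = sn + θ := Real.sqrt_sq (add_nonneg hsnpos.le hθ0.le)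
  have hsqc : sq^2 ≤ c2*(1-θ)*(θ*σ) := by
    rw [hsq2, ← hKc2]
    exact mul_le_mul_of_nonneg_left hKβ (mul_nonneg hc2pos.le hθhalf.le)
  -- componentwise bounds
  have hwlo : ∀ i, (1-θ)*μk ≤ xk i * zk i := by
    intro i
    have h2 : |xk i * zk i - μk| ≤ θ*μk := by
      simpa using (le_enorm (fun j => xk j * zk j - μk) i).trans hN2k
    have h3 := (abs_le.mp h2).1
    linarith only [h3]
  have hsqw : ∑ i, (xk i * zk i - μk)^2 ≤ θ^2*μk^2 := by
    have h := sq_enorm (fun i => xk i * zk i - μk)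
    have h2 := pow_le_pow_left₀ (enorm_nn (fun i => xk i * zk i - μk)) hN2k 2
    rw [h] at h2
    linarith only [h2]
  have hsqv : ∑ i, (xk1 i * zk1 i - μk1)^2 ≤ θ^2*μk1^2 := by
    have h := sq_enorm (fun i => xk1 i * zk1 i - μk1)
    have h2 := pow_le_pow_left₀ (enorm_nn (fun i => xk1 i * zk1 i - μk1)) hN2k1 2
    rw [h] at h2
    linarith only [h2]
  have hexpw : ∑ i, (σ*μk - xk i * zk i)^2
      = (n:ℝ)*((1-σ)*μk)^2 + ∑ i, (xk i * zk i - μk)^2 := by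
    have := expand_sum (fun i => xk i * zk i) μk σ
      (by simpa [Fintype.card_fin] using hsumw)
    simpa [Fintype.card_fin] using this
  have hexpv : ∑ i, (σ*μk1 - xk1 i * zk1 i)^2
      = (n:ℝ)*((1-σ)*μk1)^2 + ∑ i, (xk1 i * zk1 i - μk1)^2 := by
    have := expand_sum (fun i => xk1 i * zk1 i) μk1 σ
      (by simpa [Fintype.card_fin] using hsumv)
    simpa [Fintype.card_fin] using this
  have hnormw_lb : sn*μk ≤ _root_.enorm (fun i => σ*μk - xk i * zk i) := by
    apply le_enorm_of (mul_nonneg hsnpos.le hμpos.le)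
    rw [hexpw]
    have e : (sn*μk)^2 = (n:ℝ)*((1-σ)*μk)^2 := by
      rw [mul_pow, hsn2]; ring
    have h2 := Finset.sum_nonneg (fun i (_ : i ∈ Finset.univ) => sq_nonneg (xk i * zk i - μk))
    linarith only [h2, e]
  have hnum : _root_.enorm (fun i => σ*μk1 - xk1 i * zk1 i) ≤ sq*μk1 := by
    apply enorm_le (mul_nonneg hsq0 hμ1pos.le)
    rw [hexpv]
    have e : (sq*μk1)^2 = (θ^2 + (n:ℝ)*(1-σ)^2)*μk1^2 := by
      rw [mul_pow, hsq2, hQ2def]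
    linarith only [hsqv, e]
  -- lower bound for ‖v - w‖
  have hvwpt : ∀ i, αk*(σ*μk - xk i * zk i)
      = (xk1 i * zk1 i - xk i * zk i) + (-(αk^2))*(Δx i * Δz i) := by
    intro i; linear_combination (-1 : ℝ) * F2 i
  have htr : αk * _root_.enorm (fun i => σ*μk - xk i * zk i)
      ≤ _root_.enorm (fun i => xk1 i * zk1 i - xk i * zk i) + αk^2*ε := by
    have e1 : _root_.enorm (fun i => αk*(σ*μk - xk i * zk i))
        = αk * _root_.enorm (fun i => σ*μk - xk i * zk i) := by
      rw [QNAux.enorm_smul, abs_of_pos hαk0]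
    have e2 : _root_.enorm (fun i => αk*(σ*μk - xk i * zk i))
        = _root_.enorm (fun i => (xk1 i * zk1 i - xk i * zk i) + (-(αk^2))*(Δx i * Δz i)) :=
      enorm_congr hvwpt
    have e3 : _root_.enorm (fun i => (xk1 i * zk1 i - xk i * zk i) + (-(αk^2))*(Δx i * Δz i))
        ≤ _root_.enorm (fun i => xk1 i * zk1 i - xk i * zk i)
          + _root_.enorm (fun i => (-(αk^2))*(Δx i * Δz i)) := enorm_add_le _ _
    have e4 : _root_.enorm (fun i => (-(αk^2))*(Δx i * Δz i)) = αk^2*ε := by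
      rw [QNAux.enorm_smul, abs_neg, abs_of_nonneg (sq_nonneg αk), hεdef]
    rw [← e1, e2]
    rw [e4] at e3
    exact e3
  have hαkKμ : αk*(K*μk) ≤ (θ/4)*(sn*μk) := by
    have t1 : αk*(K*μk) ≤ αk*((θ*σ)*μk) :=
      mul_le_mul_of_nonneg_left (mul_le_mul_of_nonneg_right hKβ hμpos.le) hαk0.le
    have t2 : (θ*μk)*(αk*(4*σ)) ≤ (θ*μk)*(1-σ) :=
      mul_le_mul_of_nonneg_left hαkC (mul_nonneg hθ0.le hμpos.le)
    have t3 : (1-σ)*(θ*μk) ≤ sn*(θ*μk) :=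
      mul_le_mul_of_nonneg_right hsn1 (mul_nonneg hθ0.le hμpos.le)
    linarith only [t1, t2, t3]
  have hαkε : αk^2*ε ≤ αk*((θ/4)*(sn*μk)) := by
    have t1 : αk*ε ≤ αk*(K*μk) := mul_le_mul_of_nonneg_left hεK hαk0.le
    have t2 : αk*(αk*ε) ≤ αk*((θ/4)*(sn*μk)) :=
      mul_le_mul_of_nonneg_left (t1.trans hαkKμ) hαk0.le
    calc αk^2*ε = αk*(αk*ε) := by ring
      _ ≤ αk*((θ/4)*(sn*μk)) := t2
  have hvwlb : αk*((1-θ/4)*(sn*μk)) ≤ _root_.enorm (fun i => xk1 i * zk1 i - xk i * zk i) := by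
    have u1 : αk*(sn*μk) ≤ αk * _root_.enorm (fun i => σ*μk - xk i * zk i) :=
      mul_le_mul_of_nonneg_left hnormw_lb hαk0.le
    linarith only [htr, hαkε, u1]
  have hvwpos : 0 < _root_.enorm (fun i => xk1 i * zk1 i - xk i * zk i) :=
    lt_of_lt_of_le (by
      have : (0:ℝ) < 1-θ/4 := by linarith only [hθ1]
      exact mul_pos hαk0 (mul_pos this (mul_pos hsnpos hμpos))) hvwlb
  -- bound on |γ₁| * ‖v - w‖
  have hvwsq : ∑ i, (xk1 i * zk1 i - xk i * zk i)^2
      = _root_.enorm (fun i => xk1 i * zk1 i - xk i * zk i) ^ 2 :=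
    (sq_enorm (fun i => xk1 i * zk1 i - xk i * zk i)).symm
  have hγb : |γ₁| * _root_.enorm (fun i => xk1 i * zk1 i - xk i * zk i) ≤ sq*μk1 := by
    by_cases hD : (∑ i, (xk1 i * zk1 i - xk i * zk i)^2) = 0
    · rw [hγ₁, hD, div_zero, abs_zero, zero_mul]
      exact mul_nonneg hsq0 hμ1pos.le
    · have hDpos : 0 < ∑ i, (xk1 i * zk1 i - xk i * zk i)^2 :=
        lt_of_le_of_ne (Finset.sum_nonneg fun i _ => sq_nonneg _) (Ne.symm hD)
      have hN : |∑ i, (xk1 i * zk1 i - xk i * zk i) * (σ * μk1 - xk1 i * zk1 i)|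
          ≤ _root_.enorm (fun i => xk1 i * zk1 i - xk i * zk i) * (sq*μk1) :=
        (cs (fun i => xk1 i * zk1 i - xk i * zk i)
            (fun i => σ * μk1 - xk1 i * zk1 i)).trans
          (mul_le_mul_of_nonneg_left hnum
            (enorm_nn (fun i => xk1 i * zk1 i - xk i * zk i)))
      rw [hγ₁, abs_div, abs_of_pos hDpos, hvwsq, div_mul_eq_mul_div,
        div_le_iff₀ (by rw [← hvwsq]; exact hDpos)]
      have h2 := mul_le_mul_of_nonneg_right hN
        (enorm_nn (fun i => xk1 i * zk1 i - xk i * zk i))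
      calc |∑ i, (xk1 i * zk1 i - xk i * zk i) * (σ * μk1 - xk1 i * zk1 i)|
            * _root_.enorm (fun i => xk1 i * zk1 i - xk i * zk i)
          ≤ _root_.enorm (fun i => xk1 i * zk1 i - xk i * zk i) * (sq*μk1)
            * _root_.enorm (fun i => xk1 i * zk1 i - xk i * zk i) := h2
        _ = sq*μk1 * _root_.enorm (fun i => xk1 i * zk1 i - xk i * zk i) ^ 2 := by ring
  -- P1
  have P1 : |γ₁| *(αk^2*ε) ≤ (1/4)*((θ*σ)*μk1) := by
    have key := numP1 σ θ αk sn sq K hσ0 hσ1 hθ0 hθ1 hαk0 hαk32 hαkB hsn1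
      hsq0 hsqle hK0 hKβ
    have u2 : αk^2*ε ≤ αk^2*(K*μk) := mul_le_mul_of_nonneg_left hεK (sq_nonneg αk)
    have h1 : |γ₁| *(αk^2*ε)*(_root_.enorm (fun i => xk1 i * zk1 i - xk i * zk i))
        ≤ (sq*μk1)*(αk^2*(K*μk)) := by
      calc |γ₁| *(αk^2*ε)*(_root_.enorm (fun i => xk1 i * zk1 i - xk i * zk i))
          = (|γ₁| *(_root_.enorm (fun i => xk1 i * zk1 i - xk i * zk i)))*(αk^2*ε) := by ring
        _ ≤ (sq*μk1)*(αk^2*(K*μk)) := by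
            apply mul_le_mul hγb u2 (mul_nonneg (sq_nonneg αk) hε0)
              (mul_nonneg hsq0 hμ1pos.le)
    have h2 : (sq*μk1)*(αk^2*(K*μk))
        ≤ ((1/4)*((θ*σ)*μk1))*(αk*((1-θ/4)*(sn*μk))) := by
      calc (sq*μk1)*(αk^2*(K*μk)) = (sq*(αk*K))*(μk1*(αk*μk)) := by ring
        _ ≤ (((θ*σ)*((1-(θ/4))*sn))/4)*(μk1*(αk*μk)) :=
            mul_le_mul_of_nonneg_right key
              (mul_nonneg hμ1pos.le (mul_nonneg hαk0.le hμpos.le))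
        _ = ((1/4)*((θ*σ)*μk1))*(αk*((1-θ/4)*(sn*μk))) := by ring
    have h3 : ((1/4)*((θ*σ)*μk1))*(αk*((1-θ/4)*(sn*μk)))
        ≤ ((1/4)*((θ*σ)*μk1))*(_root_.enorm (fun i => xk1 i * zk1 i - xk i * zk i)) :=
      mul_le_mul_of_nonneg_left hvwlb
        (by positivity)
    have h4 : (|γ₁| *(αk^2*ε))*(_root_.enorm (fun i => xk1 i * zk1 i - xk i * zk i))
        ≤ ((1/4)*((θ*σ)*μk1))*(_root_.enorm (fun i => xk1 i * zk1 i - xk i * zk i)) := by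
      linarith only [h1, h2, h3]
    exact le_of_mul_le_mul_right h4 hvwpos
  -- simplified quasi-Newton equation
  have hr : ∀ i, zk i * Δx' i + xk i * Δz' i
      = (σ*μk1 - xk1 i * zk1 i) + (-(γ₁*αk^2))*(Δx i * Δz i) := by
    intro i
    linear_combination hQN i + γ₁*αk*(hNewton i) - γ₁*(F2 i)
  have henr : _root_.enorm (fun i => zk i * Δx' i + xk i * Δz' i) ≤ (sq + (θ*σ)/4)*μk1 := by
    have e2 : _root_.enorm (fun i => zk i * Δx' i + xk i * Δz' i)
        = _root_.enorm (fun i => (σ*μk1 - xk1 i * zk1 i) + (-(γ₁*αk^2))*(Δx i * Δz i)) :=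
      enorm_congr hr
    have e3 : _root_.enorm (fun i => (σ*μk1 - xk1 i * zk1 i) + (-(γ₁*αk^2))*(Δx i * Δz i))
        ≤ _root_.enorm (fun i => σ*μk1 - xk1 i * zk1 i)
          + _root_.enorm (fun i => (-(γ₁*αk^2))*(Δx i * Δz i)) := enorm_add_le _ _
    have e4 : _root_.enorm (fun i => (-(γ₁*αk^2))*(Δx i * Δz i)) = |γ₁| * (αk^2*ε) := by
      rw [QNAux.enorm_smul, abs_neg, abs_mul, abs_of_nonneg (sq_nonneg αk), hεdef]
      ring
    rw [e2]
    rw [e4] at e3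
    have := add_le_add hnum P1
    calc _root_.enorm (fun i => (σ*μk1 - xk1 i * zk1 i) + (-(γ₁*αk^2))*(Δx i * Δz i))
        ≤ _root_.enorm (fun i => σ*μk1 - xk1 i * zk1 i) + |γ₁| * (αk^2*ε) := e3
      _ ≤ sq*μk1 + (1/4)*((θ*σ)*μk1) := this
      _ = (sq + (θ*σ)/4)*μk1 := by ring
  -- scaled direction vectors
  set sx : Fin n → ℝ := fun i => Real.sqrt (xk i) with hsxdef
  set sz : Fin n → ℝ := fun i => Real.sqrt (zk i) with hszdef
  have hsxpos : ∀ i, 0 < sx i := fun i => Real.sqrt_pos.mpr (hxk i)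
  have hszpos : ∀ i, 0 < sz i := fun i => Real.sqrt_pos.mpr (hzk i)
  have hsx2 : ∀ i, sx i^2 = xk i := fun i => Real.sq_sqrt (hxk i).le
  have hsz2 : ∀ i, sz i^2 = zk i := fun i => Real.sq_sqrt (hzk i).le
  set av : Fin n → ℝ := fun i => Δx i * sz i / sx i with havdef
  set bv : Fin n → ℝ := fun i => Δz i * sx i / sz i with hbvdef
  set av' : Fin n → ℝ := fun i => Δx' i * sz i / sx i with havdef'
  set bv' : Fin n → ℝ := fun i => Δz' i * sx i / sz i with hbvdef'
  have hab : ∀ i, av i * bv i = Δx i * Δz i := by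
    intro i
    have h1 := (hsxpos i).ne'
    have h2 := (hszpos i).ne'
    rw [havdef, hbvdef]
    field_simp
  have hab' : ∀ i, av' i * bv' i = Δx' i * Δz' i := by
    intro i
    have h1 := (hsxpos i).ne'
    have h2 := (hszpos i).ne'
    rw [havdef', hbvdef']
    field_simp
  have hw_eq : ∀ i, (sx i * sz i)^2 = xk i * zk i := by
    intro i; rw [mul_pow, hsx2, hsz2]
  have hgw : ∀ i, (av i + bv i)*(sx i * sz i) = σ*μk - xk i * zk i := by
    intro i
    have e : (av i + bv i)*(sx i * sz i) = Δx i * sz i^2 + Δz i * sx i^2 := by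
      have h1 := (hsxpos i).ne'
      have h2 := (hszpos i).ne'
      rw [havdef, hbvdef]
      field_simp
    rw [e, hsx2 i, hsz2 i]
    linear_combination hNewton i
  have hgw' : ∀ i, (av' i + bv' i)*(sx i * sz i) = zk i * Δx' i + xk i * Δz' i := by
    intro i
    have e : (av' i + bv' i)*(sx i * sz i) = Δx' i * sz i^2 + Δz' i * sx i^2 := by
      have h1 := (hsxpos i).ne'
      have h2 := (hszpos i).ne'
      rw [havdef', hbvdef']
      field_simp
    rw [e, hsx2 i, hsz2 i]
    ring
  have hptA : ∀ i, (av i + bv i)^2*(xk i * zk i) = (σ*μk - xk i * zk i)^2 := by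
    intro i
    calc (av i + bv i)^2*(xk i * zk i) = (av i + bv i)^2*(sx i * sz i)^2 := by
          rw [hw_eq i]
      _ = ((av i + bv i)*(sx i * sz i))^2 := (mul_pow _ _ _).symm
      _ = (σ*μk - xk i * zk i)^2 := by rw [hgw i]
  have hptA' : ∀ i, (av' i + bv' i)^2*(xk i * zk i)
      = (zk i * Δx' i + xk i * Δz' i)^2 := by
    intro i
    calc (av' i + bv' i)^2*(xk i * zk i) = (av' i + bv' i)^2*(sx i * sz i)^2 := by
          rw [hw_eq i]
      _ = ((av' i + bv' i)*(sx i * sz i))^2 := (mul_pow _ _ _).symm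
      _ = (zk i * Δx' i + xk i * Δz' i)^2 := by rw [hgw' i]
  -- splitting of scaled norms
  have horthab : ∑ i, av i * bv i = 0 := by
    calc ∑ i, av i * bv i = ∑ i, Δx i * Δz i :=
          Finset.sum_congr rfl fun i _ => hab i
      _ = 0 := o1
  have horthab' : ∑ i, av' i * bv' i = 0 := by
    calc ∑ i, av' i * bv' i = ∑ i, Δx' i * Δz' i :=
          Finset.sum_congr rfl fun i _ => hab' i
      _ = 0 := o4
  have hsplit : ∑ i, (av i + bv i)^2 = (∑ i, av i^2) + ∑ i, bv i^2 := by
    have e : ∀ i, (av i + bv i)^2 = av i^2 + bv i^2 + 2*(av i * bv i) :=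
      fun i => by ring
    rw [Finset.sum_congr rfl fun i _ => e i, Finset.sum_add_distrib,
      Finset.sum_add_distrib, ← Finset.mul_sum, horthab]
    ring
  have hsplit' : ∑ i, (av' i + bv' i)^2 = (∑ i, av' i^2) + ∑ i, bv' i^2 := by
    have e : ∀ i, (av' i + bv' i)^2 = av' i^2 + bv' i^2 + 2*(av' i * bv' i) :=
      fun i => by ring
    rw [Finset.sum_congr rfl fun i _ => e i, Finset.sum_add_distrib,
      Finset.sum_add_distrib, ← Finset.mul_sum, horthab']
    ring
  have hGbound : (1-θ)*μk*((∑ i, av i^2) + ∑ i, bv i^2) ≤ sq^2*μk^2 := by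
    rw [← hsplit]
    have pt : ∀ i, (1-θ)*μk*((av i + bv i)^2) ≤ (σ*μk - xk i * zk i)^2 := by
      intro i
      rw [← hptA i]
      calc (1-θ)*μk*((av i + bv i)^2)
          ≤ (xk i * zk i)*((av i + bv i)^2) :=
            mul_le_mul_of_nonneg_right (hwlo i) (sq_nonneg _)
        _ = (av i + bv i)^2*(xk i * zk i) := mul_comm _ _
    calc (1-θ)*μk*(∑ i, (av i + bv i)^2)
        = ∑ i, (1-θ)*μk*((av i + bv i)^2) := Finset.mul_sum _ _ _
      _ ≤ ∑ i, (σ*μk - xk i * zk i)^2 := Finset.sum_le_sum fun i _ => pt i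
      _ = (n:ℝ)*((1-σ)*μk)^2 + ∑ i, (xk i * zk i - μk)^2 := hexpw
      _ ≤ sq^2*μk^2 := by
          rw [hsq2, hQ2def]
          linarith only [hsqw]
  have hG'bound : (1-θ)*μk*((∑ i, av' i^2) + ∑ i, bv' i^2)
      ≤ ((sq + (θ*σ)/4)*μk1)^2 := by
    rw [← hsplit']
    have pt : ∀ i, (1-θ)*μk*((av' i + bv' i)^2) ≤ (zk i * Δx' i + xk i * Δz' i)^2 := by
      intro i
      rw [← hptA' i]
      calc (1-θ)*μk*((av' i + bv' i)^2)
          ≤ (xk i * zk i)*((av' i + bv' i)^2) :=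
            mul_le_mul_of_nonneg_right (hwlo i) (sq_nonneg _)
        _ = (av' i + bv' i)^2*(xk i * zk i) := mul_comm _ _
    have hr2 : ∑ i, (zk i * Δx' i + xk i * Δz' i)^2 ≤ ((sq + (θ*σ)/4)*μk1)^2 := by
      have h := sq_enorm (fun i => zk i * Δx' i + xk i * Δz' i)
      have h2 := pow_le_pow_left₀ (enorm_nn (fun i => zk i * Δx' i + xk i * Δz' i)) henr 2
      rw [h] at h2
      linarith only [h2]
    calc (1-θ)*μk*(∑ i, (av' i + bv' i)^2)
        = ∑ i, (1-θ)*μk*((av' i + bv' i)^2) := Finset.mul_sum _ _ _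
      _ ≤ ∑ i, (zk i * Δx' i + xk i * Δz' i)^2 := Finset.sum_le_sum fun i _ => pt i
      _ ≤ ((sq + (θ*σ)/4)*μk1)^2 := hr2
  -- P3 : second-order term of quasi-Newton step
  have hq3 := numP3 σ θ α sq c2 hσ0 hσ1 hθ0 hθ1 hα0 hα32 hc2pos hc2sq hsq0 hsqc
  have hS'nn : (0:ℝ) ≤ (∑ i, av' i^2) + ∑ i, bv' i^2 := by positivity
  have P3 : α * _root_.enorm (fun i => Δx' i * Δz' i) ≤ (1/8)*((θ*σ)*μk1) := by
    have e1 : _root_.enorm (fun i => Δx' i * Δz' i) = _root_.enorm (fun i => av' i * bv' i) :=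
      (enorm_congr hab').symm
    have e2 : _root_.enorm (fun i => av' i * bv' i) ≤ _root_.enorm av' * _root_.enorm bv' :=
      enorm_mul_le av' bv'
    have e3 : _root_.enorm av' * _root_.enorm bv' ≤ ((∑ i, av' i^2) + ∑ i, bv' i^2)/2 := by
      have h := amgm (_root_.enorm av') (_root_.enorm bv')
      rw [sq_enorm av', sq_enorm bv'] at h
      exact h
    have key : α * (((∑ i, av' i^2) + ∑ i, bv' i^2)/2) ≤ (1/8)*((θ*σ)*μk1) := by
      have m1 : ((1-θ)*μk)*(α * (((∑ i, av' i^2) + ∑ i, bv' i^2)/2))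
          ≤ ((1-θ)*μk)*((1/8)*((θ*σ)*μk1)) := by
        calc ((1-θ)*μk)*(α * (((∑ i, av' i^2) + ∑ i, bv' i^2)/2))
            = (α/2)*((1-θ)*μk*((∑ i, av' i^2) + ∑ i, bv' i^2)) := by ring
          _ ≤ (α/2)*(((sq + (θ*σ)/4)*μk1)^2) :=
              mul_le_mul_of_nonneg_left hG'bound (by positivity)
          _ = (α*((sq + (θ*σ)/4)^2))*(μk1^2/2) := by ring
          _ ≤ (((θ*σ)*(1-θ))/4)*(μk1^2/2) :=
              mul_le_mul_of_nonneg_right hq3 (by positivity)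
          _ = ((1-θ)*((1/8)*((θ*σ)*μk1)))*μk1 := by ring
          _ ≤ ((1-θ)*((1/8)*((θ*σ)*μk1)))*μk := by
              apply mul_le_mul_of_nonneg_left hμ1le
              positivity
          _ = ((1-θ)*μk)*((1/8)*((θ*σ)*μk1)) := by ring
      exact le_of_mul_le_mul_left m1 (mul_pos hθhalf hμpos)
    calc α * _root_.enorm (fun i => Δx' i * Δz' i)
        ≤ α * (((∑ i, av' i^2) + ∑ i, bv' i^2)/2) := by
          apply mul_le_mul_of_nonneg_left _ hα0.le
          rw [e1]
          exact e2.trans e3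
      _ ≤ (1/8)*((θ*σ)*μk1) := key
  -- P2 : cross term
  have P2 : αk * _root_.enorm (fun i => Δz i * Δx' i + Δx i * Δz' i) ≤ (1/4)*((θ*σ)*μk1) := by
    have hs1 : ∀ i, Δz i * Δx' i + Δx i * Δz' i = bv i * av' i + av i * bv' i := by
      intro i
      have h1 := (hsxpos i).ne'
      have h2 := (hszpos i).ne'
      rw [havdef, hbvdef, havdef', hbvdef']
      field_simp
    have hX : _root_.enorm (fun i => Δz i * Δx' i + Δx i * Δz' i)
        ≤ _root_.enorm bv * _root_.enorm av' + _root_.enorm av * _root_.enorm bv' := by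
      calc _root_.enorm (fun i => Δz i * Δx' i + Δx i * Δz' i)
          = _root_.enorm (fun i => bv i * av' i + av i * bv' i) := enorm_congr hs1
        _ ≤ _root_.enorm (fun i => bv i * av' i) + _root_.enorm (fun i => av i * bv' i) :=
            enorm_add_le _ _
        _ ≤ _root_.enorm bv * _root_.enorm av' + _root_.enorm av * _root_.enorm bv' :=
            add_le_add (enorm_mul_le bv av') (enorm_mul_le av bv')
    have hX2 : (_root_.enorm (fun i => Δz i * Δx' i + Δx i * Δz' i))^2
        ≤ ((∑ i, av i^2) + ∑ i, bv i^2) * ((∑ i, av' i^2) + ∑ i, bv' i^2) := by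
      have h1 := pow_le_pow_left₀ (enorm_nn (fun i => Δz i * Δx' i + Δx i * Δz' i)) hX 2
      have h2 := pair_cs (_root_.enorm av) (_root_.enorm bv) (_root_.enorm av') (_root_.enorm bv')
      rw [sq_enorm av, sq_enorm bv, sq_enorm av', sq_enorm bv'] at h2
      exact h1.trans h2
    have hq2 := numP2 σ θ αk sq c2 hσ0 hσ1 hθ0 hθ1 hαk0 hαk32 hc2pos hc2sq hsq0 hsqc
    have hSnn : (0:ℝ) ≤ (∑ i, av i^2) + ∑ i, bv i^2 := by positivity
    have m2 : (((1-θ)*μk)^2)*((αk * _root_.enorm (fun i => Δz i * Δx' i + Δx i * Δz' i))^2)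
        ≤ (((1-θ)*μk)^2)*(((1/4)*((θ*σ)*μk1))^2) := by
      have t2 : ((1-θ)*μk*((∑ i, av i^2) + ∑ i, bv i^2))
            * ((1-θ)*μk*((∑ i, av' i^2) + ∑ i, bv' i^2))
          ≤ (sq^2*μk^2) * (((sq + (θ*σ)/4)*μk1)^2) :=
        mul_le_mul hGbound hG'bound
          (mul_nonneg (mul_nonneg hθhalf.le hμpos.le) hS'nn) (by positivity)
      calc (((1-θ)*μk)^2)*((αk * _root_.enorm (fun i => Δz i * Δx' i + Δx i * Δz' i))^2)
          = (αk^2*((_root_.enorm (fun i => Δz i * Δx' i + Δx i * Δz' i))^2))*(((1-θ)*μk)^2) := by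
            ring
        _ ≤ (αk^2*(((∑ i, av i^2) + ∑ i, bv i^2) * ((∑ i, av' i^2) + ∑ i, bv' i^2)))
              *(((1-θ)*μk)^2) := by
            apply mul_le_mul_of_nonneg_right
              (mul_le_mul_of_nonneg_left hX2 (sq_nonneg αk)) (sq_nonneg _)
        _ = αk^2*(((1-θ)*μk*((∑ i, av i^2) + ∑ i, bv i^2))
              * ((1-θ)*μk*((∑ i, av' i^2) + ∑ i, bv' i^2))) := by ring
        _ ≤ αk^2*((sq^2*μk^2) * (((sq + (θ*σ)/4)*μk1)^2)) :=
            mul_le_mul_of_nonneg_left t2 (sq_nonneg αk)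
        _ = (αk^2*(sq^2*((sq+(θ*σ)/4)^2)))*(μk^2*μk1^2) := by ring
        _ ≤ ((((θ*σ)*(1-θ))/4)^2)*(μk^2*μk1^2) :=
            mul_le_mul_of_nonneg_right hq2 (by positivity)
        _ = (((1-θ)*μk)^2)*(((1/4)*((θ*σ)*μk1))^2) := by ring
    have m3 := le_of_mul_le_mul_left m2 (by positivity : (0:ℝ) < ((1-θ)*μk)^2)
    exact sqle (mul_nonneg hαk0.le (enorm_nn _))
      (by positivity) m3
  -- pointwise identity along the quasi-Newton segment
  have Hid : ∀ (t : ℝ), ∀ i, (xk1 i + t*Δx' i)*(zk1 i + t*Δz' i) - (1 - t*(1-σ))*μk1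
      = ((1-t)*(xk1 i * zk1 i - μk1) + (-(t*(γ₁*αk^2)))*(Δx i * Δz i))
        + ((t*αk)*(Δz i * Δx' i + Δx i * Δz' i) + (t^2)*(Δx' i * Δz' i)) := by
    intro t i
    have h := hr i
    rw [hx1 i, hz1 i] at h ⊢
    linear_combination t*h
  -- main neighborhood estimate along the segment
  have hmain : ∀ (t : ℝ), 0 ≤ t → t ≤ α →
      _root_.enorm (fun i => (xk1 i + t*Δx' i)*(zk1 i + t*Δz' i) - (1 - t*(1-σ))*μk1)
        ≤ θ*((1 - t*(1-σ))*μk1) := by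
    intro t ht0 htα
    have ht1 : t ≤ 1 := le_trans htα (by linarith only [hα32])
    have step1 : _root_.enorm (fun i => (xk1 i + t*Δx' i)*(zk1 i + t*Δz' i) - (1 - t*(1-σ))*μk1)
        = _root_.enorm (fun i =>
            ((1-t)*(xk1 i * zk1 i - μk1) + (-(t*(γ₁*αk^2)))*(Δx i * Δz i))
            + ((t*αk)*(Δz i * Δx' i + Δx i * Δz' i) + (t^2)*(Δx' i * Δz' i))) :=
      enorm_congr (Hid t)
    have step2 : _root_.enorm (fun i =>
            ((1-t)*(xk1 i * zk1 i - μk1) + (-(t*(γ₁*αk^2)))*(Δx i * Δz i))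
            + ((t*αk)*(Δz i * Δx' i + Δx i * Δz' i) + (t^2)*(Δx' i * Δz' i)))
        ≤ _root_.enorm (fun i =>
              (1-t)*(xk1 i * zk1 i - μk1) + (-(t*(γ₁*αk^2)))*(Δx i * Δz i))
          + _root_.enorm (fun i =>
              (t*αk)*(Δz i * Δx' i + Δx i * Δz' i) + (t^2)*(Δx' i * Δz' i)) :=
      enorm_add_le _ _
    have step3 : _root_.enorm (fun i =>
          (1-t)*(xk1 i * zk1 i - μk1) + (-(t*(γ₁*αk^2)))*(Δx i * Δz i))
        ≤ _root_.enorm (fun i => (1-t)*(xk1 i * zk1 i - μk1))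
          + _root_.enorm (fun i => (-(t*(γ₁*αk^2)))*(Δx i * Δz i)) := enorm_add_le _ _
    have step4 : _root_.enorm (fun i =>
          (t*αk)*(Δz i * Δx' i + Δx i * Δz' i) + (t^2)*(Δx' i * Δz' i))
        ≤ _root_.enorm (fun i => (t*αk)*(Δz i * Δx' i + Δx i * Δz' i))
          + _root_.enorm (fun i => (t^2)*(Δx' i * Δz' i)) := enorm_add_le _ _
    have e1 : _root_.enorm (fun i => (1-t)*(xk1 i * zk1 i - μk1))
        = (1-t) * _root_.enorm (fun i => xk1 i * zk1 i - μk1) := by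
      rw [QNAux.enorm_smul, abs_of_nonneg (by linarith only [ht1] : (0:ℝ) ≤ 1 - t)]
    have e2 : _root_.enorm (fun i => (-(t*(γ₁*αk^2)))*(Δx i * Δz i))
        = t*(|γ₁| * (αk^2*ε)) := by
      rw [QNAux.enorm_smul, abs_neg, abs_mul, abs_mul, abs_of_nonneg ht0,
        abs_of_nonneg (sq_nonneg αk), hεdef]
      ring
    have e3 : _root_.enorm (fun i => (t*αk)*(Δz i * Δx' i + Δx i * Δz' i))
        = t*(αk * _root_.enorm (fun i => Δz i * Δx' i + Δx i * Δz' i)) := by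
      rw [QNAux.enorm_smul, abs_mul, abs_of_nonneg ht0, abs_of_nonneg hαk0.le]
      ring
    have e4 : _root_.enorm (fun i => (t^2)*(Δx' i * Δz' i))
        = t^2 * _root_.enorm (fun i => Δx' i * Δz' i) := by
      rw [QNAux.enorm_smul, abs_of_nonneg (sq_nonneg t)]
    have b1 : (1-t) * _root_.enorm (fun i => xk1 i * zk1 i - μk1) ≤ (1-t)*(θ*μk1) :=
      mul_le_mul_of_nonneg_left hN2k1 (by linarith only [ht1])
    have b2 : t*(|γ₁| * (αk^2*ε)) ≤ t*((1/4)*((θ*σ)*μk1)) :=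
      mul_le_mul_of_nonneg_left P1 ht0
    have b3 : t*(αk * _root_.enorm (fun i => Δz i * Δx' i + Δx i * Δz' i))
        ≤ t*((1/4)*((θ*σ)*μk1)) :=
      mul_le_mul_of_nonneg_left P2 ht0
    have b4 : t^2 * _root_.enorm (fun i => Δx' i * Δz' i) ≤ t*((1/8)*((θ*σ)*μk1)) := by
      have u1 : t^2 * _root_.enorm (fun i => Δx' i * Δz' i)
          ≤ t * (α * _root_.enorm (fun i => Δx' i * Δz' i)) := by
        have := mul_le_mul_of_nonneg_right htα (enorm_nn (fun i => Δx' i * Δz' i))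
        calc t^2 * _root_.enorm (fun i => Δx' i * Δz' i)
            = t * (t * _root_.enorm (fun i => Δx' i * Δz' i)) := by ring
          _ ≤ t * (α * _root_.enorm (fun i => Δx' i * Δz' i)) :=
              mul_le_mul_of_nonneg_left this ht0
      exact u1.trans (mul_le_mul_of_nonneg_left P3 ht0)
    have hfinal : (1-t)*(θ*μk1) + t*((1/4)*((θ*σ)*μk1)) + t*((1/4)*((θ*σ)*μk1))
        + t*((1/8)*((θ*σ)*μk1)) ≤ θ*((1 - t*(1-σ))*μk1) := by
      have hterm : 0 ≤ t*((θ*σ)*μk1) :=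
        mul_nonneg ht0 (mul_nonneg (mul_nonneg hθ0.le hσ0.le) hμ1pos.le)
      nlinarith only [hterm]
    rw [e1, e2] at step3
    rw [e3, e4] at step4
    rw [step1]
    have c1 := add_le_add step3 step4
    have c2 := add_le_add (add_le_add (add_le_add b1 b2) b3) b4
    linarith only [step2, c1, c2, hfinal]
  -- positivity of products along the segment
  have hposprod : ∀ (t : ℝ), 0 ≤ t → t ≤ α →
      ∀ i, 0 < (xk1 i + t*Δx' i)*(zk1 i + t*Δz' i) := by
    intro t ht0 htα i
    have hμt : (0:ℝ) < (1 - t*(1-σ))*μk1 := by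
      have h1 : t*(1-σ) ≤ t := mul_le_of_le_one_right ht0 (by linarith only [hσ0])
      have h2 : t ≤ 1/32 := htα.trans hα32
      have h3 : (0:ℝ) < 1 - t*(1-σ) := by linarith only [h1, h2]
      exact mul_pos h3 hμ1pos
    have h := hmain t ht0 htα
    have h2 : |(xk1 i + t*Δx' i)*(zk1 i + t*Δz' i) - (1 - t*(1-σ))*μk1|
        ≤ θ*((1 - t*(1-σ))*μk1) := by
      simpa using
        (le_enorm (fun j => (xk1 j + t*Δx' j)*(zk1 j + t*Δz' j) - (1 - t*(1-σ))*μk1) i).trans h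
    have h3 := (abs_le.mp h2).1
    nlinarith only [h3, hμt, hθ1]
  -- positivity of the new iterates
  have posx : ∀ i, 0 < xk2 i := by
    intro i
    rw [hx2pt i]
    by_contra hcon
    push_neg at hcon
    have hcont : ContinuousOn (fun t : ℝ => xk1 i + t*Δx' i) (Set.Icc 0 α) :=
      (Continuous.continuousOn (continuous_const.add (continuous_id.mul continuous_const)))
    have himg := intermediate_value_Icc' hα0.le hcont
    have h0mem : (0:ℝ) ∈ Set.Icc (xk1 i + α*Δx' i) (xk1 i + 0*Δx' i) := by
      constructor
      · exact hcon
      · simp only [zero_mul, add_zero]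
        exact (hxk1pos i).le
    obtain ⟨t, ht, hft⟩ := himg h0mem
    have hpos := hposprod t ht.1 ht.2 i
    rw [show xk1 i + t*Δx' i = 0 from hft] at hpos
    simp at hpos
  have posz : ∀ i, 0 < zk2 i := by
    intro i
    rw [hz2pt i]
    by_contra hcon
    push_neg at hcon
    have hcont : ContinuousOn (fun t : ℝ => zk1 i + t*Δz' i) (Set.Icc 0 α) :=
      (Continuous.continuousOn (continuous_const.add (continuous_id.mul continuous_const)))
    have himg := intermediate_value_Icc' hα0.le hcont
    have h0mem : (0:ℝ) ∈ Set.Icc (zk1 i + α*Δz' i) (zk1 i + 0*Δz' i) := by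
      constructor
      · exact hcon
      · simp only [zero_mul, add_zero]
        exact (hzk1pos i).le
    obtain ⟨t, ht, hft⟩ := himg h0mem
    have hpos := hposprod t ht.1 ht.2 i
    rw [show zk1 i + t*Δz' i = 0 from hft] at hpos
    simp at hpos
  -- value of μα
  have Hidsum : ∀ i, xk2 i * zk2 i
      = (1 - α*(1-σ))*μk1
        + ((1-α)*(xk1 i * zk1 i - μk1) + (-(α*(γ₁*αk^2)))*(Δx i * Δz i)
          + (α*αk)*(Δz i * Δx' i + Δx i * Δz' i) + (α^2)*(Δx' i * Δz' i)) := by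
    intro i
    rw [hx2pt i, hz2pt i]
    have h := Hid α i
    linarith only [h]
  have hsum2 : ∑ i, xk2 i * zk2 i = (n:ℝ)*((1 - α*(1-σ))*μk1) := by
    rw [Finset.sum_congr rfl fun i _ => Hidsum i]
    rw [Finset.sum_add_distrib, Finset.sum_add_distrib, Finset.sum_add_distrib,
      Finset.sum_add_distrib, Finset.sum_const, Finset.card_univ, Fintype.card_fin,
      nsmul_eq_mul, ← Finset.mul_sum, ← Finset.mul_sum, ← Finset.mul_sum, ← Finset.mul_sum]
    have s1 : ∑ i, (xk1 i * zk1 i - μk1) = 0 := by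
      rw [Finset.sum_sub_distrib, hsumv, Finset.sum_const, Finset.card_univ,
        Fintype.card_fin, nsmul_eq_mul]
      ring
    have s2 : ∑ i, (Δz i * Δx' i + Δx i * Δz' i) = 0 := by
      rw [Finset.sum_add_distrib,
        show ∑ i, Δz i * Δx' i = ∑ i, Δx' i * Δz i from
          Finset.sum_congr rfl fun i _ => mul_comm _ _, o3, o2]
      ring
    rw [s1, s2, o1, o4]
    ring
  have hμαeq : μα = (1 - α*(1-σ))*μk1 := by
    rw [hμα, hsum2]
    field_simp
  -- final neighborhood bound
  have hfin : _root_.enorm (fun i => xk2 i * zk2 i - μα) ≤ θ*μα := by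
    have e : ∀ i, xk2 i * zk2 i - μα
        = (xk1 i + α*Δx' i)*(zk1 i + α*Δz' i) - (1 - α*(1-σ))*μk1 := by
      intro i
      rw [hμαeq, hx2pt i, hz2pt i]
    calc _root_.enorm (fun i => xk2 i * zk2 i - μα)
        = _root_.enorm (fun i => (xk1 i + α*Δx' i)*(zk1 i + α*Δz' i) - (1 - α*(1-σ))*μk1) :=
          enorm_congr e
      _ ≤ θ*((1 - α*(1-σ))*μk1) := hmain α hα0.le le_rfl
      _ = θ*μα := by rw [hμαeq]
  exact ⟨feas1, feas2, posx, posz, hfin⟩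
end

section
/- Assume γ ∈ (0,1) and the symmetric-neighborhood bounds γμ_{k+1} ≤ x^{k+1}_i z^{k+1}_i ≤ μ_{k+1}/γ for every i, that μ_{k+1} = (1 − ᾱ_k(1 − σ_k))μ_k, and that ᾱ_k ∈ (0,1], σ_k ∈ [0,1) and σ_{k+1} ∈ [0,1]. Let y ∈ ℝ^{2n+m} be any vector whose last n components equal x^{k+1}∘z^{k+1} − x^k∘z^k, let v = (0, 0, σ_{k+1}μ_{k+1}e − x^{k+1}∘z^{k+1}) ∈ ℝ^{2n+m}, and set γ₁ = (yᵀv)/(yᵀy). Then y ≠ 0 and |γ₁| ≤ 2√n / ((1 − σ_k)·ᾱ_k·γ). -/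
open scoped BigOperators

private lemma aux_term_bound (μ γ σ t : ℝ) (hμ : 0 < μ) (hγ0 : 0 < γ)
    (hγ1 : γ < 1) (hσ0 : 0 ≤ σ) (hσ1 : σ ≤ 1) (ht0 : 0 < t)
    (htγ : t * γ ≤ μ) : (σ * μ - t) ^ 2 * γ ^ 2 ≤ μ ^ 2 := by
  have htγ0 : 0 < t * γ := mul_pos ht0 hγ0
  have hs0 : 0 ≤ σ * μ * γ := by positivity
  have hs1 : σ * μ * γ ≤ μ := by
    nlinarith [mul_le_mul hσ1 hγ1.le hγ0.le zero_le_one, hμ]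
  have h1 : σ * μ * γ - t * γ ≤ μ := by linarith
  have h2 : -μ ≤ σ * μ * γ - t * γ := by linarith
  nlinarith [mul_nonneg (sub_nonneg.mpr h1)
    (by linarith : (0:ℝ) ≤ μ + (σ * μ * γ - t * γ))]

set_option maxHeartbeats 1000000 in
/-- Bound on the quasi-Newton projection scalar `γ₁` in the symmetric
neighborhood `N_s(γ)`. -/
theorem gamma1_bound_Ns
    (n m : ℕ) (hn : 1 ≤ n) (hm : 1 ≤ m)
    (xk zk xk1 zk1 : Fin n → ℝ)
    (hxk : ∀ i, 0 < xk i) (hzk : ∀ i, 0 < zk i)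
    (hxk1 : ∀ i, 0 < xk1 i) (hzk1 : ∀ i, 0 < zk1 i)
    (μk μk1 : ℝ)
    (hμk : μk = (∑ i, xk i * zk i) / n)
    (hμk1 : μk1 = (∑ i, xk1 i * zk1 i) / n)
    (γ : ℝ) (hγ : γ ∈ Set.Ioo (0:ℝ) 1)
    (hNbr : ∀ i, γ * μk1 ≤ xk1 i * zk1 i ∧ xk1 i * zk1 i ≤ μk1 / γ)
    (σk σk1 αk : ℝ)
    (hαk : αk ∈ Set.Ioc (0:ℝ) 1)
    (hσk : σk ∈ Set.Ico (0:ℝ) 1)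
    (hσk1 : σk1 ∈ Set.Icc (0:ℝ) 1)
    (hμrel : μk1 = (1 - αk * (1 - σk)) * μk)
    (y : Fin n ⊕ Fin m ⊕ Fin n → ℝ)
    (hy : ∀ i, y (Sum.inr (Sum.inr i)) = xk1 i * zk1 i - xk i * zk i)
    (v : Fin n ⊕ Fin m ⊕ Fin n → ℝ)
    (hv : v = blk (fun _ => 0) (fun _ => 0) (fun i => σk1 * μk1 - xk1 i * zk1 i))
    (γ₁ : ℝ) (hγ₁ : γ₁ = dotp y v / dotp y y) :
    y ≠ 0 ∧ |γ₁| ≤ 2 * Real.sqrt n / ((1 - σk) * αk * γ) := by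
  obtain ⟨hγ0, hγ1⟩ := hγ
  obtain ⟨hα0, hα1⟩ := hαk
  obtain ⟨hσ0, hσ1⟩ := hσk
  obtain ⟨hσ10, hσ11⟩ := hσk1
  have hn0 : (0:ℝ) < n := by exact_mod_cast Nat.lt_of_lt_of_le Nat.zero_lt_one hn
  have hn1 : (1:ℝ) ≤ n := by exact_mod_cast hn
  set c : ℝ := αk * (1 - σk) with hc
  have hc0 : 0 < c := mul_pos hα0 (by linarith)
  have hc1 : c ≤ 1 := by nlinarith [mul_le_mul hα1 (by linarith : 1 - σk ≤ 1) (by linarith) zero_le_one]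
  -- positivity of μk, μk1
  have hμkpos : 0 < μk := by
    rw [hμk]
    apply div_pos _ hn0
    exact Finset.sum_pos (fun i _ => mul_pos (hxk i) (hzk i))
      ⟨⟨0, Nat.lt_of_lt_of_le Nat.zero_lt_one hn⟩, Finset.mem_univ _⟩
  have hμk1pos : 0 < μk1 := by
    rw [hμk1]
    apply div_pos _ hn0
    exact Finset.sum_pos (fun i _ => mul_pos (hxk1 i) (hzk1 i))
      ⟨⟨0, Nat.lt_of_lt_of_le Nat.zero_lt_one hn⟩, Finset.mem_univ _⟩
  have hμk1le : μk1 ≤ μk := by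
    rw [hμrel]
    nlinarith [mul_pos hc0 hμkpos]
  -- the tail block of y
  set w : Fin n → ℝ := fun i => xk1 i * zk1 i - xk i * zk i with hw
  have hsumw : ∑ i, w i = -(n * (c * μk)) := by
    have h1 : ∑ i, xk i * zk i = n * μk := by
      rw [hμk]; field_simp
    have h2 : ∑ i, xk1 i * zk1 i = n * μk1 := by
      rw [hμk1]; field_simp
    simp only [hw, Finset.sum_sub_distrib, h1, h2, hμrel]
    ring
  have hsumw_ne : ∑ i, w i ≠ 0 := by
    rw [hsumw]
    have : 0 < n * (c * μk) := mul_pos hn0 (mul_pos hc0 hμkpos)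
    linarith
  -- y ≠ 0
  have hyne : y ≠ 0 := by
    intro h
    apply hsumw_ne
    apply Finset.sum_eq_zero
    intro i _
    have := hy i
    rw [h] at this
    simp only [Pi.zero_apply] at this
    simp [hw, ← this]
  refine ⟨hyne, ?_⟩
  -- key squared quantities
  set A : ℝ := ∑ i, (w i) ^ 2 with hA
  set V : ℝ := ∑ i, (σk1 * μk1 - xk1 i * zk1 i) ^ 2 with hV
  have hA0 : 0 ≤ A := Finset.sum_nonneg fun i _ => sq_nonneg _
  -- Chebyshev: A ≥ n c² μk²
  have hchev : (∑ i, w i) ^ 2 ≤ (n:ℝ) * A := by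
    have := sq_sum_le_card_mul_sum_sq (s := Finset.univ) (f := w)
    simpa [Finset.card_univ] using this
  have hAlb : c ^ 2 * μk1 ^ 2 ≤ A := by
    rw [hsumw] at hchev
    have h1 : (n:ℝ) * ((n:ℝ) * (c * μk) ^ 2) ≤ (n:ℝ) * A := by
      rw [show (n:ℝ) * ((n:ℝ) * (c * μk) ^ 2) = (-((n:ℝ) * (c * μk))) ^ 2 from by ring]
      exact hchev
    have h2 : (n:ℝ) * (c * μk) ^ 2 ≤ A := (mul_le_mul_iff_right₀ hn0).mp h1
    have h4 : c ^ 2 * (μk1 * μk1) ≤ c ^ 2 * (μk * μk) :=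
      mul_le_mul_of_nonneg_left (mul_le_mul hμk1le hμk1le hμk1pos.le hμkpos.le) (sq_nonneg c)
    have h5 : (c * μk) ^ 2 ≤ (n:ℝ) * (c * μk) ^ 2 :=
      le_mul_of_one_le_left (sq_nonneg _) hn1
    calc c ^ 2 * μk1 ^ 2 = c ^ 2 * (μk1 * μk1) := by ring
      _ ≤ c ^ 2 * (μk * μk) := h4
      _ = (c * μk) ^ 2 := by ring
      _ ≤ (n:ℝ) * (c * μk) ^ 2 := h5
      _ ≤ A := h2
  have hApos : 0 < A := lt_of_lt_of_le (by positivity) hAlb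
  -- dotp y y ≥ A
  set Q : ℝ := dotp y y with hQ
  have hQA : A ≤ Q := by
    have hexp : Q = (∑ a, y (Sum.inl a) * y (Sum.inl a)) +
        ((∑ b, y (Sum.inr (Sum.inl b)) * y (Sum.inr (Sum.inl b))) + ∑ i, (w i) ^ 2) := by
      simp only [hQ, dotp, Fintype.sum_sum_type]
      congr 1
      congr 1
      refine Finset.sum_congr rfl fun i _ => ?_
      rw [hy i, sq]
    rw [hexp]
    have h1 : 0 ≤ ∑ a, y (Sum.inl a) * y (Sum.inl a) :=
      Finset.sum_nonneg fun i _ => mul_self_nonneg _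
    have h2 : 0 ≤ ∑ b, y (Sum.inr (Sum.inl b)) * y (Sum.inr (Sum.inl b)) :=
      Finset.sum_nonneg fun i _ => mul_self_nonneg _
    linarith
  have hQpos : 0 < Q := lt_of_lt_of_le hApos hQA
  -- dotp y v
  set P : ℝ := dotp y v with hP
  have hPval : P = ∑ i, w i * (σk1 * μk1 - xk1 i * zk1 i) := by
    simp only [hP, dotp, hv, blk, Fintype.sum_sum_type, Sum.elim_inl, Sum.elim_inr,
      mul_zero, Finset.sum_const_zero, zero_add]
    refine Finset.sum_congr rfl fun i _ => ?_
    rw [hy i]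
  -- Cauchy-Schwarz
  have hCS : P ^ 2 ≤ A * V := by
    rw [hPval]
    exact Finset.sum_mul_sq_le_sq_mul_sq Finset.univ w _
  -- per-coordinate bound on v, multiplied through by γ²
  have hVbnd : V * γ ^ 2 ≤ n * μk1 ^ 2 := by
    have hterm : ∀ i, (σk1 * μk1 - xk1 i * zk1 i) ^ 2 * γ ^ 2 ≤ μk1 ^ 2 := by
      intro i
      obtain ⟨hl, hr⟩ := hNbr i
      have ht0 : 0 < xk1 i * zk1 i := mul_pos (hxk1 i) (hzk1 i)
      have hγt : xk1 i * zk1 i * γ ≤ μk1 := (le_div_iff₀ hγ0).mp hr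
      exact aux_term_bound μk1 γ σk1 (xk1 i * zk1 i) hμk1pos hγ0 hγ1 hσ10 hσ11 ht0 hγt
    calc V * γ ^ 2 = ∑ i, (σk1 * μk1 - xk1 i * zk1 i) ^ 2 * γ ^ 2 := by
          rw [hV, Finset.sum_mul]
      _ ≤ ∑ _i : Fin n, μk1 ^ 2 := Finset.sum_le_sum fun i _ => hterm i
      _ = n * μk1 ^ 2 := by simp [Finset.card_univ, mul_comm]
  -- main estimate: |P| * (c * γ) ≤ 2 * √n * Q
  set sn : ℝ := Real.sqrt n with hsn
  have hsn2 : sn ^ 2 = n := Real.sq_sqrt hn0.le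
  have hsnpos : 0 < sn := Real.sqrt_pos.mpr hn0
  have hmain : |P| * (c * γ) ≤ 2 * sn * Q := by
    have hrhs0 : 0 ≤ 2 * sn * Q := by positivity
    refine le_of_pow_le_pow_left₀ two_ne_zero hrhs0 ?_
    have hlhs : (|P| * (c * γ)) ^ 2 = P ^ 2 * c ^ 2 * γ ^ 2 := by
      rw [mul_pow, sq_abs]; ring
    have hrhs : (2 * sn * Q) ^ 2 = 4 * n * Q ^ 2 := by
      rw [mul_pow, mul_pow, hsn2]; ring
    rw [hlhs, hrhs]
    have hV0 : 0 ≤ V := Finset.sum_nonneg fun i _ => sq_nonneg _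
    have h1 : P ^ 2 * γ ^ 2 ≤ A * (n * μk1 ^ 2) := by
      calc P ^ 2 * γ ^ 2 ≤ (A * V) * γ ^ 2 :=
            mul_le_mul_of_nonneg_right hCS (sq_nonneg γ)
        _ = A * (V * γ ^ 2) := by ring
        _ ≤ A * (n * μk1 ^ 2) := mul_le_mul_of_nonneg_left hVbnd hA0
    calc P ^ 2 * c ^ 2 * γ ^ 2 = (P ^ 2 * γ ^ 2) * c ^ 2 := by ring
      _ ≤ (A * (n * μk1 ^ 2)) * c ^ 2 := mul_le_mul_of_nonneg_right h1 (sq_nonneg c)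
      _ = (n:ℝ) * (A * (c ^ 2 * μk1 ^ 2)) := by ring
      _ ≤ (n:ℝ) * (A * A) :=
            mul_le_mul_of_nonneg_left (mul_le_mul_of_nonneg_left hAlb hA0) hn0.le
      _ ≤ (n:ℝ) * (Q * Q) :=
            mul_le_mul_of_nonneg_left (mul_le_mul hQA hQA hA0 hQpos.le) hn0.le
      _ = (n:ℝ) * Q ^ 2 := by ring
      _ ≤ 4 * n * Q ^ 2 := by
            have h6 : (n:ℝ) * Q ^ 2 ≤ 4 * ((n:ℝ) * Q ^ 2) :=
              le_mul_of_one_le_left (by positivity) (by norm_num)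
            linarith
  -- conclude
  have hden : (1 - σk) * αk * γ = c * γ := by rw [hc]; ring
  rw [hγ₁, hden, abs_div, abs_of_pos hQpos]
  rw [div_le_div_iff₀ hQpos (mul_pos hc0 hγ0)]
  exact hmain
end

section
/- Infeasible bound on the quasi-Newton projection scalar: let y ∈ ℝ^{2n+m} be any vector whose last n components equal x^{k+1}∘z^{k+1} − x^k∘z^k, let v = (−r_c^{k+1}, −r_b^{k+1}, σ_{k+1}μ_{k+1}e − x^{k+1}∘z^{k+1}), and set γ₁ = (yᵀv)/(yᵀy). Assume γ ∈ (0,1), β ≥ 1, ξ > 0, α_dec ∈ (0,1), ᾱ_k ∈ (0,1], σ_{k+1} ∈ [0,1]; that x^{k+1}_i z^{k+1}_i ≤ μ_{k+1}/γ for every i; that ‖(r_b^{k+1}, r_c^{k+1})‖ ≤ (R₀/ξ²)·β·μ_{k+1} where R₀ = ‖(r_b⁰, r_c⁰)‖ is the norm of the initial residuals (and μ₀ = ξ² is the initial gap); and the sufficient decrease μ_{k+1} ≤ (1 − α_dec·ᾱ_k)μ_k. Then y ≠ 0 and |γ₁| ≤ C₃·√n/ᾱ_k, where C₃ = 2(γ·α_dec)⁻¹·√(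 (R₀βγ/ξ²)² + 1 ); moreover C₃ ≥ 1. -/
set_option maxHeartbeats 1000000

open scoped BigOperators

/-- Infeasible-case bound on the quasi-Newton projection scalar `γ₁`. -/
theorem inf_gamma1_bound
    (n m : ℕ) (hn : 1 ≤ n) (hm : 1 ≤ m)
    (xk zk xk1 zk1 : Fin n → ℝ)
    (hxk : ∀ i, 0 < xk i) (hzk : ∀ i, 0 < zk i)
    (hxk1 : ∀ i, 0 < xk1 i) (hzk1 : ∀ i, 0 < zk1 i)
    (μk μk1 : ℝ)
    (hμk : μk = (∑ i, xk i * zk i) / n)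
    (hμk1 : μk1 = (∑ i, xk1 i * zk1 i) / n)
    (rb1 : Fin m → ℝ) (rc1 : Fin n → ℝ)
    (rb0 : Fin m → ℝ) (rc0 : Fin n → ℝ)
    (γ β ξ αdec αk σk1 : ℝ)
    (hγ : γ ∈ Set.Ioo (0:ℝ) 1) (hβ : 1 ≤ β) (hξ : 0 < ξ)
    (hαdec : αdec ∈ Set.Ioo (0:ℝ) 1)
    (hαk : αk ∈ Set.Ioc (0:ℝ) 1)
    (hσk1 : σk1 ∈ Set.Icc (0:ℝ) 1)
    (hupper : ∀ i, xk1 i * zk1 i ≤ μk1 / γ)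
    (R0 : ℝ) (hR0 : R0 = _root_.enorm (Sum.elim rb0 rc0))
    (hres : _root_.enorm (Sum.elim rb1 rc1) ≤ R0 / ξ ^ 2 * β * μk1)
    (hdec : μk1 ≤ (1 - αdec * αk) * μk)
    (y : Fin n ⊕ Fin m ⊕ Fin n → ℝ)
    (hy : ∀ i, y (Sum.inr (Sum.inr i)) = xk1 i * zk1 i - xk i * zk i)
    (v : Fin n ⊕ Fin m ⊕ Fin n → ℝ)
    (hv : v = blk (fun i => -rc1 i) (fun i => -rb1 i)
      (fun i => σk1 * μk1 - xk1 i * zk1 i))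
    (γ₁ C₃ : ℝ)
    (hγ₁ : γ₁ = dotp y v / dotp y y)
    (hC₃ : C₃ = 2 * (γ * αdec)⁻¹ * Real.sqrt ((R0 * β * γ / ξ ^ 2) ^ 2 + 1)) :
    y ≠ 0 ∧ |γ₁| ≤ C₃ * Real.sqrt n / αk ∧ 1 ≤ C₃ := by
  obtain ⟨hγ0, hγ1⟩ := hγ
  obtain ⟨hαd0, hαd1⟩ := hαdec
  obtain ⟨hαk0, hαk1⟩ := hαk
  obtain ⟨hσ0, hσ1⟩ := hσk1
  have hne : Nonempty (Fin n) := ⟨⟨0, hn⟩⟩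
  have hnpos : (0:ℝ) < n := by exact_mod_cast hn
  have hn1 : (1:ℝ) ≤ n := by exact_mod_cast hn
  -- positivity of the gaps
  have hμk1pos : 0 < μk1 := by
    rw [hμk1]
    exact div_pos (Finset.sum_pos (fun i _ => mul_pos (hxk1 i) (hzk1 i))
      Finset.univ_nonempty) hnpos
  have hμkpos : 0 < μk := by
    rw [hμk]
    exact div_pos (Finset.sum_pos (fun i _ => mul_pos (hxk i) (hzk i))
      Finset.univ_nonempty) hnpos
  have hR0nn : 0 ≤ R0 := hR0 ▸ Real.sqrt_nonneg _
  -- sums equal n * μ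
  have hsum1 : ∑ i, xk1 i * zk1 i = n * μk1 := by
    rw [hμk1]; field_simp
  have hsum0 : ∑ i, xk i * zk i = n * μk := by
    rw [hμk]; field_simp
  -- lower bound for dotp y y
  set T : ℝ := ∑ i, (xk1 i * zk1 i - xk i * zk i) ^ 2 with hT
  have hTsum : ∑ i, (xk1 i * zk1 i - xk i * zk i) = n * μk1 - n * μk := by
    rw [Finset.sum_sub_distrib, hsum1, hsum0]
  have hCS1 : ((n:ℝ) * μk1 - n * μk) ^ 2 ≤ n * T := by
    have h := sq_sum_le_card_mul_sum_sq
      (s := (Finset.univ : Finset (Fin n)))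
      (f := fun i => xk1 i * zk1 i - xk i * zk i)
    rw [hTsum] at h
    simpa [hT] using h
  have hgap : αdec * αk * μk ≤ μk - μk1 := by
    have e : (1 - αdec * αk) * μk = μk - αdec * αk * μk := by ring
    linarith only [hdec, e]
  have hμle : μk1 ≤ μk := by
    have hp : 0 < αdec * αk * μk := mul_pos (mul_pos hαd0 hαk0) hμkpos
    linarith only [hgap, hp]
  have hgap1 : αdec * αk * μk1 ≤ μk - μk1 := by
    refine le_trans ?_ hgap
    exact mul_le_mul_of_nonneg_left hμle (by positivity)
  have hTlb : n * (αdec * αk * μk1) ^ 2 ≤ T := by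
    have h1 : (n:ℝ) * ((n:ℝ) * (αdec * αk * μk1) ^ 2) ≤ (n:ℝ) * T := by
      refine le_trans ?_ hCS1
      have e : ((n:ℝ) * μk1 - n * μk) ^ 2 = n ^ 2 * (μk - μk1) ^ 2 := by ring
      rw [e]
      have h0 : 0 ≤ αdec * αk * μk1 := by positivity
      have hsq : (αdec * αk * μk1) ^ 2 ≤ (μk - μk1) ^ 2 :=
        pow_le_pow_left₀ h0 hgap1 2
      have e2 : (n:ℝ) * ((n:ℝ) * (αdec * αk * μk1) ^ 2)
          = (n:ℝ) ^ 2 * (αdec * αk * μk1) ^ 2 := by ring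
      rw [e2]
      exact mul_le_mul_of_nonneg_left hsq (sq_nonneg _)
    exact le_of_mul_le_mul_left h1 hnpos
  have hyy_ge : T ≤ dotp y y := by
    unfold dotp
    rw [Fintype.sum_sum_type, Fintype.sum_sum_type]
    have h1 : (0:ℝ) ≤ ∑ a, y (Sum.inl a) * y (Sum.inl a) :=
      Finset.sum_nonneg fun i _ => mul_self_nonneg _
    have h2 : (0:ℝ) ≤ ∑ a, y (Sum.inr (Sum.inl a)) * y (Sum.inr (Sum.inl a)) :=
      Finset.sum_nonneg fun i _ => mul_self_nonneg _
    have h3 : T = ∑ a, y (Sum.inr (Sum.inr a)) * y (Sum.inr (Sum.inr a)) := by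
      rw [hT]
      exact Finset.sum_congr rfl fun i _ => by rw [hy i, sq]
    linarith only [h1, h2, h3.le, h3.ge]
  have hPlb : n * (αdec * αk * μk1) ^ 2 ≤ dotp y y := le_trans hTlb hyy_ge
  have hPpos : 0 < dotp y y := lt_of_lt_of_le (by positivity) hPlb
  -- y ≠ 0
  have hy0 : y ≠ 0 := by
    intro h
    rw [h] at hPpos
    simp [dotp] at hPpos
  refine ⟨hy0, ?_, ?_⟩
  · -- the bound on |γ₁|
    -- upper bound for dotp v v
    have hresid : (∑ i, rb1 i ^ 2) + (∑ i, rc1 i ^ 2) ≤ (R0 / ξ ^ 2 * β * μk1) ^ 2 := by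
      have hS : (0:ℝ) ≤ ∑ i : Fin m ⊕ Fin n, (Sum.elim rb1 rc1) i ^ 2 :=
        Finset.sum_nonneg fun i _ => sq_nonneg _
      have h := pow_le_pow_left₀ (Real.sqrt_nonneg _) hres 2
      rw [Real.sq_sqrt hS] at h
      rw [Fintype.sum_sum_type] at h
      simpa using h
    have hσμ : σk1 * μk1 ≤ μk1 := mul_le_of_le_one_left hμk1pos.le hσ1
    have hμγ : μk1 ≤ μk1 / γ := by
      rw [le_div_iff₀ hγ0]
      exact mul_le_of_le_one_right hμk1pos.le hγ1.le
    have hthird : (∑ i, (σk1 * μk1 - xk1 i * zk1 i) ^ 2) ≤ n * (μk1 / γ) ^ 2 := by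
      calc (∑ i, (σk1 * μk1 - xk1 i * zk1 i) ^ 2)
          ≤ ∑ _i : Fin n, (μk1 / γ) ^ 2 := by
            apply Finset.sum_le_sum
            intro i _
            apply sq_le_sq'
            · have h1 := hupper i
              have hσnn : 0 ≤ σk1 * μk1 := by positivity
              linarith only [h1, hσnn]
            · have h2 := mul_pos (hxk1 i) (hzk1 i)
              linarith only [hσμ, hμγ, h2]
        _ = n * (μk1 / γ) ^ 2 := by simp [mul_comm]
    have hQub : dotp v v ≤ (R0 / ξ ^ 2 * β * μk1) ^ 2 + n * (μk1 / γ) ^ 2 := by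
      unfold dotp
      rw [hv]
      unfold blk
      rw [Fintype.sum_sum_type, Fintype.sum_sum_type]
      simp only [Sum.elim_inl, Sum.elim_inr]
      have e1 : ∑ i : Fin n, (-rc1 i) * (-rc1 i) = ∑ i, rc1 i ^ 2 := by
        apply Finset.sum_congr rfl; intro i _; ring
      have e2 : ∑ i : Fin m, (-rb1 i) * (-rb1 i) = ∑ i, rb1 i ^ 2 := by
        apply Finset.sum_congr rfl; intro i _; ring
      have e3 : ∑ i : Fin n, (σk1 * μk1 - xk1 i * zk1 i) * (σk1 * μk1 - xk1 i * zk1 i)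
          = ∑ i, (σk1 * μk1 - xk1 i * zk1 i) ^ 2 := by
        apply Finset.sum_congr rfl; intro i _; ring
      rw [e1, e2, e3]
      linarith only [hresid, hthird]
    -- Cauchy-Schwarz for dotp y v
    have hCS2 : (dotp y v) ^ 2 ≤ dotp y y * dotp v v := by
      have h := Finset.sum_mul_sq_le_sq_mul_sq (Finset.univ : Finset (Fin n ⊕ Fin m ⊕ Fin n)) y v
      unfold dotp
      calc (∑ i, y i * v i) ^ 2 ≤ (∑ i, y i ^ 2) * ∑ i, v i ^ 2 := h
        _ = (∑ i, y i * y i) * ∑ i, v i * v i := by simp [sq]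
    -- γ₁² ≤ Q/P
    have hγ₁sq : γ₁ ^ 2 ≤ dotp v v / dotp y y := by
      rw [hγ₁, div_pow, div_le_div_iff₀ (by positivity) hPpos]
      calc dotp y v ^ 2 * dotp y y ≤ dotp y y * dotp v v * dotp y y :=
            mul_le_mul_of_nonneg_right hCS2 hPpos.le
        _ = dotp v v * dotp y y ^ 2 := by ring
    -- abbreviations
    set s : ℝ := Real.sqrt ((R0 * β * γ / ξ ^ 2) ^ 2 + 1) with hsdef
    have hssq : s ^ 2 = (R0 * β * γ / ξ ^ 2) ^ 2 + 1 := Real.sq_sqrt (by positivity)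
    have hBnn : 0 ≤ C₃ * Real.sqrt n / αk := by
      rw [hC₃]; positivity
    have hBsq : (C₃ * Real.sqrt n / αk) ^ 2 = C₃ ^ 2 * n / αk ^ 2 := by
      rw [div_pow, mul_pow, Real.sq_sqrt (le_of_lt hnpos)]
    -- main numeric inequality: Q/P ≤ C₃² n / αk²
    have hmain : dotp v v / dotp y y ≤ C₃ ^ 2 * n / αk ^ 2 := by
      rw [div_le_div_iff₀ hPpos (by positivity)]
      have hC3sq : C₃ ^ 2 = 4 * (γ * αdec)⁻¹ ^ 2 * ((R0 * β * γ / ξ ^ 2) ^ 2 + 1) := by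
        rw [hC₃, ← hssq]; ring
      have hinv : (γ * αdec)⁻¹ ^ 2 = 1 / (γ ^ 2 * αdec ^ 2) := by
        rw [mul_inv]; ring
      set a : ℝ := (R0 * β * γ / ξ ^ 2) ^ 2 with ha
      have hAnn : (0:ℝ) ≤ a := sq_nonneg _
      have core : a + n ≤ 4 * n ^ 2 * (a + 1) := by
        have hN2 : (1:ℝ) ≤ (n:ℝ) ^ 2 := one_le_pow₀ hn1
        have h4 : 0 ≤ a * (4 * (n:ℝ) ^ 2 - 1) :=
          mul_nonneg hAnn (by linarith only [hN2])
        have hNN : (n:ℝ) * 1 ≤ (n:ℝ) * (n:ℝ) :=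
          mul_le_mul_of_nonneg_left hn1 hnpos.le
        linarith only [h4, hNN, hnpos, hN2]
      have hkey : ((R0 / ξ ^ 2 * β * μk1) ^ 2 + n * (μk1 / γ) ^ 2) * αk ^ 2
          ≤ C₃ ^ 2 * n * (n * (αdec * αk * μk1) ^ 2) := by
        have hL : ((R0 / ξ ^ 2 * β * μk1) ^ 2 + n * (μk1 / γ) ^ 2) * αk ^ 2
            = (a + n) * (μk1 ^ 2 * αk ^ 2 / γ ^ 2) := by
          rw [ha]; field_simp
        have hR : C₃ ^ 2 * n * (n * (αdec * αk * μk1) ^ 2)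
            = 4 * n ^ 2 * (a + 1) * (μk1 ^ 2 * αk ^ 2 / γ ^ 2) := by
          rw [hC3sq, hinv, ha]; field_simp
        rw [hL, hR]
        exact mul_le_mul_of_nonneg_right core (by positivity)
      calc dotp v v * αk ^ 2
          ≤ ((R0 / ξ ^ 2 * β * μk1) ^ 2 + n * (μk1 / γ) ^ 2) * αk ^ 2 :=
            mul_le_mul_of_nonneg_right hQub (sq_nonneg _)
        _ ≤ C₃ ^ 2 * n * (n * (αdec * αk * μk1) ^ 2) := hkey
        _ ≤ C₃ ^ 2 * n * dotp y y := by
            apply mul_le_mul_of_nonneg_left hPlb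
            have hc : 0 ≤ C₃ := by rw [hC₃]; positivity
            positivity
    have hfin : γ₁ ^ 2 ≤ (C₃ * Real.sqrt n / αk) ^ 2 := by
      rw [hBsq]; exact le_trans hγ₁sq hmain
    calc |γ₁| = Real.sqrt (γ₁ ^ 2) := (Real.sqrt_sq_eq_abs _).symm
      _ ≤ Real.sqrt ((C₃ * Real.sqrt n / αk) ^ 2) := Real.sqrt_le_sqrt hfin
      _ = C₃ * Real.sqrt n / αk := Real.sqrt_sq hBnn
  · -- 1 ≤ C₃
    rw [hC₃]
    have hpos : 0 < γ * αdec := mul_pos hγ0 hαd0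
    have hle1 : γ * αdec ≤ 1 := mul_le_one₀ hγ1.le hαd0.le hαd1.le
    have h1 : (1:ℝ) ≤ (γ * αdec)⁻¹ := (one_le_inv₀ hpos).2 hle1
    have h2 : (1:ℝ) ≤ Real.sqrt ((R0 * β * γ / ξ ^ 2) ^ 2 + 1) :=
      le_trans (by rw [Real.sqrt_one]) (Real.sqrt_le_sqrt
        (by linarith only [sq_nonneg (R0 * β * γ / ξ ^ 2)]))
    have h3 : (1:ℝ) * 1 ≤ (γ * αdec)⁻¹ * Real.sqrt ((R0 * β * γ / ξ ^ 2) ^ 2 + 1) :=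
      mul_le_mul h1 h2 zero_le_one (le_trans zero_le_one h1)
    linarith only [h3]
end

section
/- Under the infeasible two-step setup, the scaled combined third-row residual satisfies ‖ (x^k∘z^k)^{−1/2} ∘ [ z^k∘(ᾱ_kΔx^k + ᾱΔx′) + x^k∘(ᾱ_kΔz^k + ᾱΔz′) ] ‖ ≤ γ^{−1/2}·[ (σ_max + γ^{−1})(ᾱ_k + ᾱ) + (ᾱ_k + C₃)·ᾱ·ᾱ_k·ω² ]·n^{5/2}·μ_k^{1/2}, where (x^k∘z^k)^{−1/2} denotes the componentwise vector with entries 1/√(x^k_i z^k_i). -/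
open scoped BigOperators

lemma enorm_eq_norm {ι : Type*} [Fintype ι] (v : ι → ℝ) :
    _root_.enorm v = ‖(WithLp.equiv 2 (ι → ℝ)).symm v‖ := by
  rw [EuclideanSpace.norm_eq]
  simp only [_root_.enorm, WithLp.equiv_symm_apply, WithLp.ofLp_toLp, Real.norm_eq_abs, sq_abs]

lemma enorm_add_le' {ι : Type*} [Fintype ι] (f g : ι → ℝ) :
    _root_.enorm (fun i => f i + g i) ≤ _root_.enorm f + _root_.enorm g := by
  rw [enorm_eq_norm, enorm_eq_norm, enorm_eq_norm]
  exact norm_add_le ((WithLp.equiv 2 (ι → ℝ)).symm f) ((WithLp.equiv 2 (ι → ℝ)).symm g)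

lemma enorm_le_of_abs_le {ι : Type*} [Fintype ι] {v w : ι → ℝ} {c : ℝ} (hc : 0 ≤ c)
    (h : ∀ i, |v i| ≤ c * |w i|) : _root_.enorm v ≤ c * _root_.enorm w := by
  unfold _root_.enorm
  have h1 : ∑ i, v i ^ 2 ≤ c ^ 2 * ∑ i, w i ^ 2 := by
    rw [Finset.mul_sum]
    refine Finset.sum_le_sum fun i _ => ?_
    have := h i
    nlinarith [abs_nonneg (v i), sq_abs (v i), sq_abs (w i), abs_nonneg (w i)]
  calc Real.sqrt (∑ i, v i ^ 2) ≤ Real.sqrt (c ^ 2 * ∑ i, w i ^ 2) := Real.sqrt_le_sqrt h1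
    _ = c * Real.sqrt (∑ i, w i ^ 2) := by
        rw [Real.sqrt_mul (sq_nonneg c), Real.sqrt_sq hc]

lemma enorm_le_of_forall_le {n : ℕ} {v : Fin n → ℝ} {c : ℝ} (hc : 0 ≤ c)
    (h : ∀ i, |v i| ≤ c) : _root_.enorm v ≤ Real.sqrt n * c := by
  unfold _root_.enorm
  have h1 : ∑ i, v i ^ 2 ≤ (n : ℝ) * c ^ 2 := by
    calc ∑ i, v i ^ 2 ≤ ∑ _i : Fin n, c ^ 2 :=
          Finset.sum_le_sum fun i _ => by nlinarith [h i, abs_nonneg (v i), sq_abs (v i)]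
      _ = (n : ℝ) * c ^ 2 := by simp [Finset.card_univ]
  calc Real.sqrt (∑ i, v i ^ 2) ≤ Real.sqrt ((n:ℝ) * c ^ 2) := Real.sqrt_le_sqrt h1
    _ = Real.sqrt n * c := by rw [Real.sqrt_mul (by positivity), Real.sqrt_sq hc]

lemma enorm_mul_le {ι : Type*} [Fintype ι] (f g : ι → ℝ) :
    _root_.enorm (fun i => f i * g i) ≤ _root_.enorm f * _root_.enorm g := by
  unfold _root_.enorm
  rw [← Real.sqrt_mul (Finset.sum_nonneg fun i _ => sq_nonneg (f i))]
  apply Real.sqrt_le_sqrt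
  calc ∑ i, (f i * g i) ^ 2 = ∑ i, f i ^ 2 * g i ^ 2 := by simp [mul_pow]
    _ ≤ ∑ i, f i ^ 2 * ∑ j, g j ^ 2 := Finset.sum_le_sum fun i _ =>
        mul_le_mul_of_nonneg_left
          (Finset.single_le_sum (fun j _ => sq_nonneg (g j)) (Finset.mem_univ i))
          (sq_nonneg (f i))
    _ = (∑ i, f i ^ 2) * ∑ j, g j ^ 2 := by rw [← Finset.sum_mul]

lemma enorm_proj_le {n : ℕ} (hn : 1 ≤ n) {σ : ℝ} (hσ0 : 0 ≤ σ) (hσ2 : σ ≤ 2) (p : Fin n → ℝ) :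
    _root_.enorm (fun i => σ * ((∑ j, p j) / n) - p i) ≤ _root_.enorm p := by
  unfold _root_.enorm
  apply Real.sqrt_le_sqrt
  have hn0 : (0:ℝ) < n := by exact_mod_cast Nat.lt_of_lt_of_le Nat.zero_lt_one hn
  set S : ℝ := ∑ j, p j with hS
  have expand : ∀ i : Fin n, (σ * (S / n) - p i) ^ 2
      = (σ * (S / n)) ^ 2 - 2 * (σ * (S / n)) * p i + p i ^ 2 := fun i => by ring
  rw [Finset.sum_congr rfl fun i _ => expand i]
  rw [Finset.sum_add_distrib, Finset.sum_sub_distrib, Finset.sum_const, ← Finset.mul_sum, ← hS]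
  have hcard : ((Finset.univ : Finset (Fin n)).card : ℝ) = (n : ℝ) := by simp
  have key : (n:ℝ) * (σ * (S / n)) ^ 2 - 2 * (σ * (S / n)) * S = (σ ^ 2 - 2 * σ) * S ^ 2 / n := by
    field_simp
  have h2 : (σ ^ 2 - 2 * σ) * S ^ 2 / n ≤ 0 := by
    apply div_nonpos_of_nonpos_of_nonneg _ hn0.le
    nlinarith [mul_nonneg (mul_nonneg hσ0 (by linarith : (0:ℝ) ≤ 2 - σ)) (sq_nonneg S)]
  simp only [nsmul_eq_mul, hcard]
  linarith [key]

set_option maxHeartbeats 2000000 in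
/-- Infeasible-case bound on the scaled combined third-row residual of the
composite (Newton + quasi-Newton) direction. -/
theorem inf_scaled_combined_residual_bound
    (n : ℕ) (hn : 1 ≤ n)
    (γ σmin σmax ω C₃ : ℝ)
    (hγ : γ ∈ Set.Ioo (0:ℝ) 1)
    (hσ0 : 0 < σmin) (hσ : σmin ≤ σmax) (hσ1 : σmax < 1)
    (hω : 0 < ω) (hC₃ : 1 ≤ C₃)
    (xk zk : Fin n → ℝ) (hxk : ∀ i, 0 < xk i) (hzk : ∀ i, 0 < zk i)
    (μk : ℝ) (hμk : μk = (∑ i, xk i * zk i) / n)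
    (hNbr : ∀ i, γ * μk ≤ xk i * zk i ∧ xk i * zk i ≤ μk / γ)
    (σk : ℝ) (hσk : σmin ≤ σk ∧ σk ≤ σmax)
    (Δx Δz : Fin n → ℝ)
    (hNewton : ∀ i, zk i * Δx i + xk i * Δz i = σk * μk - xk i * zk i)
    (hDx : _root_.enorm (fun i => Real.sqrt (zk i / xk i) * Δx i) ≤ ω * n * Real.sqrt μk)
    (hDz : _root_.enorm (fun i => Real.sqrt (xk i / zk i) * Δz i) ≤ ω * n * Real.sqrt μk)
    (αk : ℝ) (hαk : αk ∈ Set.Ioc (0:ℝ) 1)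
    (xk1 zk1 : Fin n → ℝ)
    (hxk1 : xk1 = fun i => xk i + αk * Δx i)
    (hzk1 : zk1 = fun i => zk i + αk * Δz i)
    (μk1 : ℝ) (hμk1 : μk1 = (∑ i, xk1 i * zk1 i) / n) (hμdec : μk1 ≤ μk)
    (σk1 : ℝ) (hσk1 : σmin ≤ σk1 ∧ σk1 ≤ σmax)
    (γ₁ : ℝ) (hγ₁ : |γ₁| ≤ C₃ * Real.sqrt n / αk)
    (Δx' Δz' : Fin n → ℝ)
    (hQN : ∀ i, zk i * Δx' i + xk i * Δz' i
      = σk1 * μk1 - xk1 i * zk1 i - γ₁ * αk ^ 2 * (Δx i * Δz i))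
    (α : ℝ) (hα : α ∈ Set.Icc (0:ℝ) 1) :
    _root_.enorm (fun i => (1 / Real.sqrt (xk i * zk i)) *
        (zk i * (αk * Δx i + α * Δx' i) + xk i * (αk * Δz i + α * Δz' i)))
      ≤ γ ^ (-(1:ℝ)/2) *
        ((σmax + γ⁻¹) * (αk + α) + (αk + C₃) * α * αk * ω ^ 2) *
        (n:ℝ) ^ ((5:ℝ)/2) * μk ^ ((1:ℝ)/2) := by
  obtain ⟨hγ0, hγlt1⟩ := hγ
  obtain ⟨hαk0, hαk1⟩ := hαk
  obtain ⟨hα0, hα1⟩ := hα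
  obtain ⟨hσk1l, hσk1u⟩ := hσk1
  obtain ⟨hσkl, hσku⟩ := hσk
  have hσmax0 : 0 < σmax := lt_of_lt_of_le hσ0 hσ
  have hn0 : (0:ℝ) < n := by exact_mod_cast Nat.lt_of_lt_of_le Nat.zero_lt_one hn
  have hn1 : (1:ℝ) ≤ n := by exact_mod_cast hn
  have hγinv : (1:ℝ) ≤ γ⁻¹ := le_of_lt ((one_lt_inv₀ hγ0).mpr hγlt1)
  have hne : Nonempty (Fin n) := Fin.pos_iff_nonempty.mp (by omega)
  have hμ0 : 0 < μk := by
    rw [hμk]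
    exact div_pos (Finset.sum_pos (fun i _ => mul_pos (hxk i) (hzk i)) Finset.univ_nonempty) hn0
  -- abbreviations
  set p : Fin n → ℝ := fun i => Δx i * Δz i with hp
  set S : ℝ := ∑ i, p i with hS
  have hsumw : ∑ i, xk i * zk i = n * μk := by rw [hμk]; field_simp
  have hprod : ∀ i : Fin n, xk1 i * zk1 i
      = (1 - αk) * (xk i * zk i) + αk * (σk * μk) + αk ^ 2 * p i := by
    intro i
    rw [hxk1, hzk1]
    simp only [hp]
    linear_combination αk * (hNewton i)
  have hμk1f : μk1 = (1 - αk + αk * σk) * μk + αk ^ 2 * (S / n) := by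
    rw [hμk1, Finset.sum_congr rfl fun i _ => hprod i]
    rw [Finset.sum_add_distrib, Finset.sum_add_distrib, ← Finset.mul_sum, hsumw,
      Finset.sum_const, ← Finset.mul_sum, Finset.card_univ, Fintype.card_fin, nsmul_eq_mul, ← hS]
    field_simp
  -- decomposition
  set L : Fin n → ℝ := fun i => αk * (σk * μk - xk i * zk i)
      + α * (σk1 * ((1 - αk + αk * σk) * μk) - ((1 - αk) * (xk i * zk i) + αk * (σk * μk)))
      with hL
  have hdecomp : ∀ i : Fin n, zk i * (αk * Δx i + α * Δx' i) + xk i * (αk * Δz i + α * Δz' i)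
      = L i + ((α * αk ^ 2) * (σk1 * (S / n) - p i) + (-(α * γ₁ * αk ^ 2)) * p i) := by
    intro i
    simp only [hL, hp]
    linear_combination αk * (hNewton i) + α * (hQN i) + (α * σk1) * hμk1f - α * (hprod i)
  -- scaling facts
  set d : ℝ := Real.sqrt (γ * μk) with hd
  have hd0 : 0 < d := Real.sqrt_pos.mpr (mul_pos hγ0 hμ0)
  have hwpos : ∀ i : Fin n, 0 < xk i * zk i := fun i => mul_pos (hxk i) (hzk i)
  have hswpos : ∀ i : Fin n, 0 < Real.sqrt (xk i * zk i) := fun i => Real.sqrt_pos.mpr (hwpos i)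
  have hinv : ∀ i : Fin n, 1 / Real.sqrt (xk i * zk i) ≤ 1 / d :=
    fun i => one_div_le_one_div_of_le hd0 (Real.sqrt_le_sqrt (hNbr i).1)
  have hwup : ∀ i : Fin n, xk i * zk i ≤ γ⁻¹ * μk := by
    intro i
    have := (hNbr i).2
    rw [div_eq_inv_mul] at this
    exact this
  -- split the norm
  have hfun : (fun i => (1 / Real.sqrt (xk i * zk i)) *
        (zk i * (αk * Δx i + α * Δx' i) + xk i * (αk * Δz i + α * Δz' i)))
      = fun i => (1 / Real.sqrt (xk i * zk i)) * L i +
          ((1 / Real.sqrt (xk i * zk i)) * ((α * αk ^ 2) * (σk1 * (S / n) - p i))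
            + (1 / Real.sqrt (xk i * zk i)) * ((-(α * γ₁ * αk ^ 2)) * p i)) := by
    funext i
    rw [hdecomp i]
    ring
  rw [hfun]
  have htri : _root_.enorm (fun i => (1 / Real.sqrt (xk i * zk i)) * L i +
          ((1 / Real.sqrt (xk i * zk i)) * ((α * αk ^ 2) * (σk1 * (S / n) - p i))
            + (1 / Real.sqrt (xk i * zk i)) * ((-(α * γ₁ * αk ^ 2)) * p i)))
      ≤ _root_.enorm (fun i => (1 / Real.sqrt (xk i * zk i)) * L i)
        + (_root_.enorm (fun i => (1 / Real.sqrt (xk i * zk i)) * ((α * αk ^ 2) * (σk1 * (S / n) - p i)))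
          + _root_.enorm (fun i => (1 / Real.sqrt (xk i * zk i)) * ((-(α * γ₁ * αk ^ 2)) * p i))) :=
    le_trans (enorm_add_le' _ _) (by gcongr; exact enorm_add_le' _ _)
  refine le_trans htri ?_
  -- constants
  set s : ℝ := Real.sqrt n with hsdef
  have hs0 : 0 < s := Real.sqrt_pos.mpr hn0
  have hs1 : (1:ℝ) ≤ s := by
    rw [hsdef, show (1:ℝ) = Real.sqrt 1 by simp]
    exact Real.sqrt_le_sqrt hn1
  have henn : ∀ (f : Fin n → ℝ), 0 ≤ _root_.enorm f := fun f => Real.sqrt_nonneg _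
  set M : ℝ := (αk + α) * ((σmax + γ⁻¹) * μk) with hM
  set W : ℝ := ω ^ 2 * (n:ℝ) ^ 2 * μk with hW
  -- bound on ‖p‖
  have hone : ∀ i : Fin n, Real.sqrt (zk i / xk i) * Real.sqrt (xk i / zk i) = 1 := by
    intro i
    have hx := (hxk i).ne'
    have hz := (hzk i).ne'
    rw [← Real.sqrt_mul (div_nonneg (hzk i).le (hxk i).le)]
    rw [show zk i / xk i * (xk i / zk i) = 1 from by field_simp]
    exact Real.sqrt_one
  have hab : p = fun i => (Real.sqrt (zk i / xk i) * Δx i) * (Real.sqrt (xk i / zk i) * Δz i) := by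
    funext i
    simp only [hp]
    linear_combination (-(Δx i * Δz i)) * hone i
  have hμsq : Real.sqrt μk * Real.sqrt μk = μk := Real.mul_self_sqrt hμ0.le
  have hpnorm : _root_.enorm p ≤ W := by
    rw [hab]
    refine le_trans (enorm_mul_le _ _) ?_
    calc _root_.enorm (fun i => Real.sqrt (zk i / xk i) * Δx i)
            * _root_.enorm (fun i => Real.sqrt (xk i / zk i) * Δz i)
        ≤ (ω * n * Real.sqrt μk) * (ω * n * Real.sqrt μk) :=
          mul_le_mul hDx hDz (henn _) (by positivity)
      _ = W := by rw [hW]; linear_combination (ω ^ 2 * (n:ℝ) ^ 2) * hμsq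
  have hσk0 : 0 < σk := hσ0.trans_le hσkl
  have hσk10 : 0 < σk1 := hσ0.trans_le hσk1l
  have hμγ : μk ≤ γ⁻¹ * μk := le_mul_of_one_le_left hμ0.le hγinv
  have hσmμ1 : σmax * μk ≤ 1 * μk := mul_le_mul_of_nonneg_right (le_of_lt hσ1) hμ0.le
  have hγμ0 : 0 ≤ γ⁻¹ * μk := le_trans hμ0.le hμγ
  -- Bound 1 : linear part
  have hLabs : ∀ i : Fin n, |L i| ≤ M := by
    intro i
    have hσkμ : 0 ≤ σk * μk := mul_nonneg hσk0.le hμ0.le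
    have hσkμ' : σk * μk ≤ σmax * μk := mul_le_mul_of_nonneg_right hσku hμ0.le
    have hσmμ : 0 ≤ σmax * μk := mul_nonneg hσmax0.le hμ0.le
    have hA : |σk * μk - xk i * zk i| ≤ (σmax + γ⁻¹) * μk := by
      rw [abs_le]
      constructor
      · linarith only [hwup i, hσkμ, hσmμ, hγμ0]
      · linarith only [hwpos i, hσkμ', hσkμ, hσmμ, hγμ0]
    have hB : |σk1 * ((1 - αk + αk * σk) * μk) - ((1 - αk) * (xk i * zk i) + αk * (σk * μk))|
        ≤ (σmax + γ⁻¹) * μk := by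
      have hc1 : αk * σk ≤ αk := mul_le_of_le_one_right hαk0.le (le_of_lt (lt_of_le_of_lt hσku hσ1))
      have hc0 : 0 ≤ 1 - αk + αk * σk := by linarith only [mul_nonneg hαk0.le hσk0.le, hαk1]
      have h1 : (1 - αk + αk * σk) * μk ≤ μk := by
        linarith only [mul_nonneg (show (0:ℝ) ≤ αk - αk * σk by linarith only [hc1]) hμ0.le]
      have h2 : σk1 * ((1 - αk + αk * σk) * μk) ≤ σk1 * μk :=
        mul_le_mul_of_nonneg_left h1 hσk10.le
      have h3 : σk1 * μk ≤ σmax * μk := mul_le_mul_of_nonneg_right hσk1u hμ0.le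
      have h4 : 0 ≤ σk1 * ((1 - αk + αk * σk) * μk) :=
        mul_nonneg hσk10.le (mul_nonneg hc0 hμ0.le)
      have h5 : (1 - αk) * (xk i * zk i) ≤ (1 - αk) * (γ⁻¹ * μk) :=
        mul_le_mul_of_nonneg_left (hwup i) (by linarith only [hαk1])
      have h6 : αk * (σk * μk) ≤ αk * (γ⁻¹ * μk) :=
        mul_le_mul_of_nonneg_left (by linarith only [hσkμ', hμγ, hσmμ1]) hαk0.le
      have h7 : 0 ≤ (1 - αk) * (xk i * zk i) :=
        mul_nonneg (by linarith only [hαk1]) (hwpos i).le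
      have h8 : 0 ≤ αk * (σk * μk) := mul_nonneg hαk0.le hσkμ
      rw [abs_le]
      constructor
      · linarith only [h4, h5, h6, hσmμ]
      · linarith only [h2, h3, h7, h8, hγμ0]
    calc |L i| ≤ |αk * (σk * μk - xk i * zk i)|
          + |α * (σk1 * ((1 - αk + αk * σk) * μk) - ((1 - αk) * (xk i * zk i) + αk * (σk * μk)))| := by
            simp only [hL]; exact abs_add_le _ _
      _ ≤ αk * ((σmax + γ⁻¹) * μk) + α * ((σmax + γ⁻¹) * μk) := by
          rw [abs_mul, abs_mul, abs_of_nonneg hαk0.le, abs_of_nonneg hα0]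
          exact add_le_add (mul_le_mul_of_nonneg_left hA hαk0.le)
            (mul_le_mul_of_nonneg_left hB hα0)
      _ = M := by rw [hM]; ring
  have hB1 : _root_.enorm (fun i => (1 / Real.sqrt (xk i * zk i)) * L i) ≤ s * (M / d) := by
    apply enorm_le_of_forall_le (by positivity)
    intro i
    rw [abs_mul, abs_of_nonneg (by positivity : (0:ℝ) ≤ 1 / Real.sqrt (xk i * zk i))]
    calc (1 / Real.sqrt (xk i * zk i)) * |L i| ≤ (1 / d) * M :=
          mul_le_mul (hinv i) (hLabs i) (abs_nonneg _) (by positivity)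
      _ = M / d := by ring
  -- Bound 2 : projection quadratic part
  have hB2 : _root_.enorm (fun i => (1 / Real.sqrt (xk i * zk i)) * ((α * αk ^ 2) * (σk1 * (S / n) - p i)))
      ≤ ((α * αk ^ 2) / d) * W := by
    have step1 : _root_.enorm (fun i => (1 / Real.sqrt (xk i * zk i)) * ((α * αk ^ 2) * (σk1 * (S / n) - p i)))
        ≤ ((α * αk ^ 2) / d) * _root_.enorm (fun i => σk1 * (S / n) - p i) := by
      apply enorm_le_of_abs_le (by positivity)
      intro i
      rw [abs_mul, abs_mul, abs_of_nonneg (by positivity : (0:ℝ) ≤ 1 / Real.sqrt (xk i * zk i)),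
        abs_of_nonneg (by positivity : (0:ℝ) ≤ α * αk ^ 2)]
      calc (1 / Real.sqrt (xk i * zk i)) * ((α * αk ^ 2) * |σk1 * (S / n) - p i|)
          ≤ (1 / d) * ((α * αk ^ 2) * |σk1 * (S / n) - p i|) :=
            mul_le_mul_of_nonneg_right (hinv i) (by positivity)
        _ = ((α * αk ^ 2) / d) * |σk1 * (S / n) - p i| := by ring
    have step2 : _root_.enorm (fun i => σk1 * (S / n) - p i) ≤ _root_.enorm p := by
      rw [hS]
      exact enorm_proj_le hn hσk10.le (by linarith only [hσk1u, hσ1]) p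
    calc _ ≤ ((α * αk ^ 2) / d) * _root_.enorm (fun i => σk1 * (S / n) - p i) := step1
      _ ≤ ((α * αk ^ 2) / d) * W :=
          mul_le_mul_of_nonneg_left (le_trans step2 hpnorm) (by positivity)
  -- Bound 3 : γ₁ quadratic part
  have hB3 : _root_.enorm (fun i => (1 / Real.sqrt (xk i * zk i)) * ((-(α * γ₁ * αk ^ 2)) * p i))
      ≤ ((C₃ * α * αk * s) / d) * W := by
    have step1 : _root_.enorm (fun i => (1 / Real.sqrt (xk i * zk i)) * ((-(α * γ₁ * αk ^ 2)) * p i))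
        ≤ ((α * |γ₁| * αk ^ 2) / d) * _root_.enorm p := by
      apply enorm_le_of_abs_le (by positivity)
      intro i
      rw [abs_mul, abs_mul, abs_of_nonneg (by positivity : (0:ℝ) ≤ 1 / Real.sqrt (xk i * zk i))]
      have habs : |(-(α * γ₁ * αk ^ 2))| = α * |γ₁| * αk ^ 2 := by
        rw [abs_neg, abs_mul, abs_mul, abs_of_nonneg hα0,
          abs_of_nonneg (by positivity : (0:ℝ) ≤ αk ^ 2)]
      rw [habs]
      calc (1 / Real.sqrt (xk i * zk i)) * (α * |γ₁| * αk ^ 2 * |p i|)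
          ≤ (1 / d) * (α * |γ₁| * αk ^ 2 * |p i|) :=
            mul_le_mul_of_nonneg_right (hinv i) (by positivity)
        _ = ((α * |γ₁| * αk ^ 2) / d) * |p i| := by ring
    have hcoef : α * |γ₁| * αk ^ 2 ≤ C₃ * α * αk * s := by
      have h1 : α * |γ₁| * αk ^ 2 ≤ α * (C₃ * s / αk) * αk ^ 2 := by
        have := mul_le_mul_of_nonneg_left hγ₁ hα0
        exact mul_le_mul_of_nonneg_right this (sq_nonneg αk)
      have h2 : α * (C₃ * s / αk) * αk ^ 2 = C₃ * α * αk * s := by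
        field_simp
      linarith only [h1, h2]
    have hcoef' : (α * |γ₁| * αk ^ 2) / d ≤ (C₃ * α * αk * s) / d := by gcongr
    refine le_trans step1 (mul_le_mul hcoef' hpnorm (henn p) ?_)
    exact div_nonneg (mul_nonneg (mul_nonneg (mul_nonneg
      (by linarith : (0:ℝ) ≤ C₃) hα0) hαk0.le) hs0.le) hd0.le
  refine le_trans (add_le_add hB1 (add_le_add hB2 hB3)) ?_
  -- rewrite the right-hand side
  have hγ12 : γ ^ (-(1:ℝ)/2) = (Real.sqrt γ)⁻¹ := by
    rw [show -(1:ℝ)/2 = -(1/2:ℝ) by norm_num, Real.rpow_neg hγ0.le, ← Real.sqrt_eq_rpow]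
  have hμ12 : μk ^ ((1:ℝ)/2) = Real.sqrt μk := (Real.sqrt_eq_rpow μk).symm
  have h52 : (n:ℝ) ^ ((5:ℝ)/2) = (n:ℝ) ^ 2 * s := by
    rw [show (5:ℝ)/2 = 2 + 1/2 by norm_num, Real.rpow_add hn0, ← Real.sqrt_eq_rpow, hsdef,
      Real.rpow_two]
  have hdmul : d = Real.sqrt γ * Real.sqrt μk := by rw [hd, Real.sqrt_mul hγ0.le]
  have hsγ : 0 < Real.sqrt γ := Real.sqrt_pos.mpr hγ0
  have hsμ : 0 < Real.sqrt μk := Real.sqrt_pos.mpr hμ0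
  set K : ℝ := (σmax + γ⁻¹) * (αk + α) + (αk + C₃) * α * αk * ω ^ 2 with hK
  have hRHS : γ ^ (-(1:ℝ)/2) * K * (n:ℝ) ^ ((5:ℝ)/2) * μk ^ ((1:ℝ)/2)
      = (K * ((n:ℝ) ^ 2 * s) * μk) / d := by
    rw [hγ12, hμ12, h52, hdmul]
    rw [eq_div_iff (by positivity)]
    have hg : (Real.sqrt γ)⁻¹ * Real.sqrt γ = 1 := inv_mul_cancel₀ hsγ.ne'
    linear_combination (K * (n:ℝ) ^ 2 * s * Real.sqrt μk * Real.sqrt μk) * hg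
      + (K * (n:ℝ) ^ 2 * s) * hμsq
  rw [hRHS]
  -- final numeric comparison
  have hn21 : (1:ℝ) ≤ (n:ℝ) ^ 2 := by linarith only [sq_nonneg ((n:ℝ) - 1), hn1]
  have hA1 : 0 ≤ (σmax + γ⁻¹) * (αk + α) * μk * (s * ((n:ℝ) ^ 2 - 1)) := by
    apply mul_nonneg
    · exact mul_nonneg (mul_nonneg (by linarith only [hσmax0, hγinv] : (0:ℝ) ≤ σmax + γ⁻¹)
        (by linarith only [hαk0, hα0] : (0:ℝ) ≤ αk + α)) hμ0.le
    · exact mul_nonneg hs0.le (by linarith only [hn21])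
  have hA2 : 0 ≤ α * αk ^ 2 * ω ^ 2 * μk * ((n:ℝ) ^ 2 * (s - 1)) := by
    apply mul_nonneg
    · exact mul_nonneg (mul_nonneg (mul_nonneg hα0 (sq_nonneg αk)) (sq_nonneg ω)) hμ0.le
    · exact mul_nonneg (by positivity) (by linarith only [hs1])
  have hnum : s * M + (α * αk ^ 2 * W + C₃ * α * αk * s * W) ≤ K * ((n:ℝ) ^ 2 * s) * μk := by
    rw [hM, hW, hK]
    linarith only [hA1, hA2]
  calc s * (M / d) + (((α * αk ^ 2) / d) * W + ((C₃ * α * αk * s) / d) * W)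
      = (s * M + (α * αk ^ 2 * W + C₃ * α * αk * s * W)) / d := by ring
    _ ≤ (K * ((n:ℝ) ^ 2 * s) * μk) / d := by gcongr
end

section
/- Under the infeasible two-step setup, assume moreover: b ∈ ℝ^m, c ∈ ℝ^n, λ^k, λ^{k+1} ∈ ℝ^m and dual components Δλ^k, Δλ′ are given with λ^{k+1} = λ^k + ᾱ_kΔλ^k; the residuals r_b^k = Ax^k − b, r_c^k = Aᵀλ^k + z^k − c satisfy AΔx^k = −r_b^k, AᵀΔλ^k + Δz^k = −r_c^k, AΔx′ = −r_b^{k+1}, AᵀΔλ′ + Δz′ = −r_c^{k+1} with r_b^{k+1} = (1 − ᾱ_k)r_b^k and r_c^{k+1} = (1 − ᾱ_k)r_c^k; there exist ν_k ≥ 0 and a primal–dual solution (x*, λ*, z*) with Ax* = b, Aᵀλ* + z* = c, such that r_b^k = ν_k(Ax⁰ − b) and r_c^k = ν_k(Aᵀλ⁰ + z⁰ − c), where x⁰ = ξe, z⁰ = ξe, λ⁰ = 0 for some ξ > 0 and ‖x⁰ − x*‖ ≤ ξ, ‖z⁰ − z*‖ ≤ ξ; ν_k(‖x^k‖₁ +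 ‖z^k‖₁) ≤ (4β/ξ)·n·μ_k for a constant β ≥ 1; and the bound ‖(x^k∘z^k)^{−1/2}∘[z^k∘(ᾱ_kΔx^k + ᾱΔx′) + x^k∘(ᾱ_kΔz^k + ᾱΔz′)]‖ ≤ γ^{−1/2}[(σ_max + γ^{−1})(ᾱ_k + ᾱ) + (ᾱ_k + C₃)ᾱᾱ_kω²]n^{5/2}μ_k^{1/2} holds. Then ‖(D^k)⁻¹(ᾱ_kΔx^k + ᾱΔx′)‖ ≤ [ (σ_max + γ^{−1} + 8β)(ᾱ_k + ᾱ) + (ᾱ_k + C₃)ω²ᾱ_kᾱ ]·γ^{−1/2}·n^{5/2}·μ_k^{1/2}, and the same bound holds for ‖D^k(ᾱ_kΔz^k + ᾱΔz′)‖. -/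
open scoped BigOperators

/-- One-norm of a finitely-indexed real vector. -/
def onenorm {ι : Type*} [Fintype ι] (v : ι → ℝ) : ℝ := ∑ i, |v i|

lemma enorm_nonneg' {ι : Type*} [Fintype ι] (f : ι → ℝ) : 0 ≤ _root_.enorm f :=
  Real.sqrt_nonneg _

lemma sq_enorm {ι : Type*} [Fintype ι] (f : ι → ℝ) : _root_.enorm f ^ 2 = ∑ i, f i ^ 2 :=
  Real.sq_sqrt (Finset.sum_nonneg fun _ _ => sq_nonneg _)

lemma sum_sq_le_of_enorm_le {ι : Type*} [Fintype ι] {f : ι → ℝ} {B : ℝ}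
    (h : _root_.enorm f ≤ B) : ∑ i, f i ^ 2 ≤ B ^ 2 := by
  have h0 : 0 ≤ _root_.enorm f := enorm_nonneg' f
  calc ∑ i, f i ^ 2 = _root_.enorm f ^ 2 := (sq_enorm f).symm
    _ ≤ B ^ 2 := by nlinarith

lemma enorm_le_of_sq_le {ι : Type*} [Fintype ι] {f : ι → ℝ} {B : ℝ}
    (hB : 0 ≤ B) (h : ∑ i, f i ^ 2 ≤ B ^ 2) : _root_.enorm f ≤ B := by
  have := Real.sqrt_le_sqrt h
  simpa [_root_.enorm, Real.sqrt_sq hB] using this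

lemma sum_mul_le_enorm {ι : Type*} [Fintype ι] (f g : ι → ℝ) :
    ∑ i, f i * g i ≤ _root_.enorm f * _root_.enorm g := by
  have h := Finset.sum_mul_sq_le_sq_mul_sq Finset.univ f g
  have h1 : ∑ i, f i * g i ≤ |∑ i, f i * g i| := le_abs_self _
  have h2 : |∑ i, f i * g i| = Real.sqrt ((∑ i, f i * g i) ^ 2) := (Real.sqrt_sq_eq_abs _).symm
  have h3 : Real.sqrt ((∑ i, f i * g i) ^ 2) ≤ Real.sqrt ((∑ i, f i ^ 2) * (∑ i, g i ^ 2)) :=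
    Real.sqrt_le_sqrt h
  have h4 : Real.sqrt ((∑ i, f i ^ 2) * (∑ i, g i ^ 2)) = _root_.enorm f * _root_.enorm g := by
    rw [Real.sqrt_mul (Finset.sum_nonneg fun _ _ => sq_nonneg _)]; rfl
  linarith [h1, h2 ▸ h3, h4 ▸ h3]

/-- quadratic resolution lemma -/
lemma key_quad (n : ℕ) (u v dx0 dz0 φ ψ : Fin n → ℝ) (κ K a1 a2 : ℝ)
    (hκ : 0 ≤ κ) (hK : 0 ≤ K)
    (hφψ : ∀ i, φ i * ψ i = 1)
    (hW : _root_.enorm (fun i => φ i * u i + ψ i * v i) ≤ K)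
    (horth : ∑ i, (u i + κ * dx0 i) * (v i + κ * dz0 i) = 0)
    (ha1 : _root_.enorm (fun i => φ i * dx0 i) ≤ a1)
    (ha2 : _root_.enorm (fun i => ψ i * dz0 i) ≤ a2) :
    _root_.enorm (fun i => φ i * u i) ≤ K + 2 * κ * (a1 + a2) ∧
    _root_.enorm (fun i => ψ i * v i) ≤ K + 2 * κ * (a1 + a2) := by
  set t1 := _root_.enorm (fun i => φ i * u i) with ht1
  set t2 := _root_.enorm (fun i => ψ i * v i) with ht2
  have ht10 : 0 ≤ t1 := enorm_nonneg' _
  have ht20 : 0 ≤ t2 := enorm_nonneg' _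
  have ha10 : 0 ≤ a1 := le_trans (enorm_nonneg' _) ha1
  have ha20 : 0 ≤ a2 := le_trans (enorm_nonneg' _) ha2
  have hsum : ∑ i, (φ i * u i + ψ i * v i) ^ 2
      = (∑ i, (φ i * u i) ^ 2) + ((∑ i, (ψ i * v i) ^ 2) + 2 * ∑ i, u i * v i) := by
    rw [Finset.mul_sum, ← Finset.sum_add_distrib, ← Finset.sum_add_distrib]
    exact Finset.sum_congr rfl fun i _ => by
      have h := hφψ i; linear_combination 2 * (u i * v i) * h
  have hW2 : ∑ i, (φ i * u i + ψ i * v i) ^ 2 ≤ K ^ 2 := sum_sq_le_of_enorm_le hW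
  have hc1 : ∑ i, dx0 i * v i ≤ a1 * t2 := by
    have h := sum_mul_le_enorm (fun i => φ i * dx0 i) (fun i => ψ i * v i)
    have heq : ∑ i, (φ i * dx0 i) * (ψ i * v i) = ∑ i, dx0 i * v i :=
      Finset.sum_congr rfl fun i _ => by
        have h := hφψ i; linear_combination (dx0 i * v i) * h
    rw [heq] at h
    exact le_trans h (mul_le_mul_of_nonneg_right ha1 ht20)
  have hc2 : ∑ i, u i * dz0 i ≤ t1 * a2 := by
    have h := sum_mul_le_enorm (fun i => φ i * u i) (fun i => ψ i * dz0 i)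
    have heq : ∑ i, (φ i * u i) * (ψ i * dz0 i) = ∑ i, u i * dz0 i :=
      Finset.sum_congr rfl fun i _ => by
        have h := hφψ i; linear_combination (u i * dz0 i) * h
    rw [heq] at h
    exact le_trans h (mul_le_mul_of_nonneg_left ha2 ht10)
  have hc3 : ∑ i, dx0 i * dz0 i ≤ a1 * a2 := by
    have h := sum_mul_le_enorm (fun i => φ i * dx0 i) (fun i => ψ i * dz0 i)
    have heq : ∑ i, (φ i * dx0 i) * (ψ i * dz0 i) = ∑ i, dx0 i * dz0 i :=
      Finset.sum_congr rfl fun i _ => by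
        have h := hφψ i; linear_combination (dx0 i * dz0 i) * h
    rw [heq] at h
    refine le_trans h (mul_le_mul ha1 ha2 (enorm_nonneg' _) ha10)
  have hUV : ∑ i, u i * v i
      = -((κ * ∑ i, u i * dz0 i) + (κ * ∑ i, dx0 i * v i) + (κ * κ * ∑ i, dx0 i * dz0 i)) := by
    have hexpand : ∑ i, (u i + κ * dx0 i) * (v i + κ * dz0 i)
        = (∑ i, u i * v i) + ((κ * ∑ i, u i * dz0 i) + ((κ * ∑ i, dx0 i * v i)
          + (κ * κ * ∑ i, dx0 i * dz0 i))) := by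
      rw [Finset.mul_sum, Finset.mul_sum, Finset.mul_sum, ← Finset.sum_add_distrib,
        ← Finset.sum_add_distrib, ← Finset.sum_add_distrib]
      exact Finset.sum_congr rfl fun i _ => by ring
    rw [hexpand] at horth
    linarith
  have hT1 : t1 ^ 2 = ∑ i, (φ i * u i) ^ 2 := sq_enorm _
  have hT2 : t2 ^ 2 = ∑ i, (ψ i * v i) ^ 2 := sq_enorm _
  clear_value t1 t2
  have b1 := mul_le_mul_of_nonneg_left hc1 hκ
  have b2 := mul_le_mul_of_nonneg_left hc2 hκ
  have b3 := mul_le_mul_of_nonneg_left hc3 (mul_nonneg hκ hκ)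
  have hmain : t1 ^ 2 + t2 ^ 2
      ≤ K ^ 2 + 2 * (κ * (t1 * a2)) + 2 * (κ * (a1 * t2)) + 2 * (κ * κ * (a1 * a2)) := by
    rw [hT1, hT2]
    rw [hsum] at hW2
    linarith [hUV, b1, b2, b3, hW2]
  have hN0 : 0 ≤ K + (κ * a1 + κ * a2) := by positivity
  clear hW horth hφψ hsum hW2 hc1 hc2 hc3 hUV hT1 hT2 b1 b2 b3 ha1 ha2 ht1 ht2
  clear u v dx0 dz0 φ ψ
  constructor
  · have h5 : (t1 - κ * a2) ^ 2 ≤ (K + (κ * a1 + κ * a2)) ^ 2 := by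
      nlinarith [sq_nonneg (t2 - κ * a1), mul_nonneg hK (add_nonneg (mul_nonneg hκ ha10) (mul_nonneg hκ ha20))]
    have h6 : t1 - κ * a2 ≤ K + (κ * a1 + κ * a2) := by
      nlinarith [h5, hN0, sq_nonneg (t1 - κ * a2 + (K + (κ * a1 + κ * a2)))]
    nlinarith [h6, mul_nonneg hκ ha10]
  · have h5 : (t2 - κ * a1) ^ 2 ≤ (K + (κ * a1 + κ * a2)) ^ 2 := by
      nlinarith [sq_nonneg (t1 - κ * a2), mul_nonneg hK (add_nonneg (mul_nonneg hκ ha10) (mul_nonneg hκ ha20))]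
    have h6 : t2 - κ * a1 ≤ K + (κ * a1 + κ * a2) := by
      nlinarith [h5, hN0, sq_nonneg (t2 - κ * a1 + (K + (κ * a1 + κ * a2)))]
    nlinarith [h6, mul_nonneg hκ ha20]

/-- weighted norm bound -/
lemma aux_wnorm (n : ℕ) (xk zk d : Fin n → ℝ) (hx : ∀ i, 0 < xk i) (hz : ∀ i, 0 < zk i)
    (g : ℝ) (hg : 0 < g) (hlb : ∀ i, g ≤ xk i * zk i)
    (ξ : ℝ) (hξ : 0 ≤ ξ) (hd : ∀ i, d i ^ 2 ≤ ξ ^ 2) :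
    _root_.enorm (fun i => Real.sqrt (zk i / xk i) * d i) ≤ ξ * (∑ i, zk i) / Real.sqrt g := by
  have hsz : 0 ≤ ∑ i, zk i := Finset.sum_nonneg fun i _ => (hz i).le
  apply enorm_le_of_sq_le (div_nonneg (mul_nonneg hξ hsz) (Real.sqrt_nonneg g))
  have hpt : ∀ i, (Real.sqrt (zk i / xk i) * d i) ^ 2 ≤ ξ ^ 2 * zk i ^ 2 / g := by
    intro i
    rw [mul_pow, Real.sq_sqrt (le_of_lt (div_pos (hz i) (hx i)))]
    have h1 : zk i / xk i = zk i ^ 2 / (xk i * zk i) := by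
      rw [sq, mul_comm (xk i) (zk i), mul_div_mul_left _ _ (hz i).ne']
    rw [h1]
    have h2 : zk i ^ 2 / (xk i * zk i) ≤ zk i ^ 2 / g := by
      gcongr
      exact hlb i
    calc zk i ^ 2 / (xk i * zk i) * d i ^ 2 ≤ zk i ^ 2 / g * ξ ^ 2 :=
          mul_le_mul h2 (hd i) (sq_nonneg _) (div_nonneg (sq_nonneg _) hg.le)
      _ = ξ ^ 2 * zk i ^ 2 / g := by ring
  have hzz : ∑ i, zk i ^ 2 ≤ (∑ i, zk i) ^ 2 := by
    calc ∑ i, zk i ^ 2 ≤ ∑ i, zk i * ∑ j, zk j := by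
          refine Finset.sum_le_sum fun i _ => ?_
          rw [sq]
          exact mul_le_mul_of_nonneg_left
            (Finset.single_le_sum (fun j _ => (hz j).le) (Finset.mem_univ i)) (hz i).le
      _ = (∑ i, zk i) ^ 2 := by rw [← Finset.sum_mul, sq]
  calc ∑ i, (Real.sqrt (zk i / xk i) * d i) ^ 2 ≤ ∑ i, ξ ^ 2 * zk i ^ 2 / g :=
        Finset.sum_le_sum fun i _ => hpt i
    _ = ξ ^ 2 * (∑ i, zk i ^ 2) / g := by
        rw [Finset.mul_sum, Finset.sum_div]
    _ ≤ ξ ^ 2 * (∑ i, zk i) ^ 2 / g := by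
        gcongr
    _ = (ξ * (∑ i, zk i) / Real.sqrt g) ^ 2 := by
        rw [div_pow, mul_pow, Real.sq_sqrt hg.le]

lemma ptw_sqrt (x z a b : ℝ) (hx : 0 < x) (hz : 0 < z) :
    (1 / Real.sqrt (x * z)) * (z * a + x * b)
      = Real.sqrt (z / x) * a + Real.sqrt (x / z) * b := by
  have hsx : 0 < Real.sqrt x := Real.sqrt_pos.mpr hx
  have hsz : 0 < Real.sqrt z := Real.sqrt_pos.mpr hz
  rw [Real.sqrt_div hz.le, Real.sqrt_div hx.le, Real.sqrt_mul hx.le]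
  field_simp
  linear_combination (-a) * Real.mul_self_sqrt hz.le + (-b) * Real.mul_self_sqrt hx.le

set_option maxHeartbeats 2000000 in
/-- Infeasible-case bounds on the scaled composite directions
`(D^k)⁻¹(αkΔx^k + αΔx')` and `D^k(αkΔz^k + αΔz')`. -/
theorem inf_scaled_composite_direction_bound
    (n m : ℕ) (hn : 1 ≤ n) (hm : 1 ≤ m)
    (A : Matrix (Fin m) (Fin n) ℝ)
    (γ σmin σmax ω C₃ : ℝ)
    (hγ : γ ∈ Set.Ioo (0:ℝ) 1)
    (hσ0 : 0 < σmin) (hσ : σmin ≤ σmax) (hσ1 : σmax < 1)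
    (hω : 0 < ω) (hC₃ : 1 ≤ C₃)
    (xk zk : Fin n → ℝ) (hxk : ∀ i, 0 < xk i) (hzk : ∀ i, 0 < zk i)
    (μk : ℝ) (hμk : μk = (∑ i, xk i * zk i) / n)
    (hNbr : ∀ i, γ * μk ≤ xk i * zk i ∧ xk i * zk i ≤ μk / γ)
    (σk : ℝ) (hσk : σmin ≤ σk ∧ σk ≤ σmax)
    (Δx Δz : Fin n → ℝ)
    (hNewton : ∀ i, zk i * Δx i + xk i * Δz i = σk * μk - xk i * zk i)
    (hDx : _root_.enorm (fun i => Real.sqrt (zk i / xk i) * Δx i) ≤ ω * n * Real.sqrt μk)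
    (hDz : _root_.enorm (fun i => Real.sqrt (xk i / zk i) * Δz i) ≤ ω * n * Real.sqrt μk)
    (αk : ℝ) (hαk : αk ∈ Set.Ioc (0:ℝ) 1)
    (xk1 zk1 : Fin n → ℝ)
    (hxk1 : xk1 = fun i => xk i + αk * Δx i)
    (hzk1 : zk1 = fun i => zk i + αk * Δz i)
    (μk1 : ℝ) (hμk1 : μk1 = (∑ i, xk1 i * zk1 i) / n) (hμdec : μk1 ≤ μk)
    (σk1 : ℝ) (hσk1 : σmin ≤ σk1 ∧ σk1 ≤ σmax)
    (γ₁ : ℝ) (hγ₁ : |γ₁| ≤ C₃ * Real.sqrt n / αk)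
    (Δx' Δz' : Fin n → ℝ)
    (hQN : ∀ i, zk i * Δx' i + xk i * Δz' i
      = σk1 * μk1 - xk1 i * zk1 i - γ₁ * αk ^ 2 * (Δx i * Δz i))
    (α : ℝ) (hα : α ∈ Set.Icc (0:ℝ) 1)
    -- additional hypotheses: residuals, special starting point, solution point
    (b : Fin m → ℝ) (c : Fin n → ℝ)
    (lamk lamk1 : Fin m → ℝ) (Δlam Δlam' : Fin m → ℝ)
    (hlamk1 : lamk1 = fun i => lamk i + αk * Δlam i)
    (rbk : Fin m → ℝ) (rck : Fin n → ℝ)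
    (hrbk : rbk = A.mulVec xk - b)
    (hrck : rck = (Matrix.transpose A).mulVec lamk + zk - c)
    (hADx : A.mulVec Δx = fun i => -rbk i)
    (hADl : (Matrix.transpose A).mulVec Δlam + Δz = fun i => -rck i)
    (rbk1 : Fin m → ℝ) (rck1 : Fin n → ℝ)
    (hrbk1 : rbk1 = fun i => (1 - αk) * rbk i)
    (hrck1 : rck1 = fun i => (1 - αk) * rck i)
    (hADx' : A.mulVec Δx' = fun i => -rbk1 i)
    (hADl' : (Matrix.transpose A).mulVec Δlam' + Δz' = fun i => -rck1 i)
    (νk : ℝ) (hνk : 0 ≤ νk)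
    (xstar zstar : Fin n → ℝ) (lamstar : Fin m → ℝ)
    (hstar1 : A.mulVec xstar = b)
    (hstar2 : (Matrix.transpose A).mulVec lamstar + zstar = c)
    (ξ : ℝ) (hξ : 0 < ξ)
    (hrb0 : rbk = fun i => νk * (A.mulVec (fun _ => ξ) i - b i))
    (hrc0 : rck = fun i =>
      νk * ((Matrix.transpose A).mulVec (fun _ => (0:ℝ)) i + ξ - c i))
    (hx0 : _root_.enorm (fun i => ξ - xstar i) ≤ ξ)
    (hz0 : _root_.enorm (fun i => ξ - zstar i) ≤ ξ)
    (β : ℝ) (hβ : 1 ≤ β)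
    (h1norm : νk * (onenorm xk + onenorm zk) ≤ 4 * β / ξ * n * μk)
    -- the scaled combined third-row residual bound from the preceding lemma
    (hthird : _root_.enorm (fun i => (1 / Real.sqrt (xk i * zk i)) *
        (zk i * (αk * Δx i + α * Δx' i) + xk i * (αk * Δz i + α * Δz' i)))
      ≤ γ ^ (-(1:ℝ)/2) *
        ((σmax + γ⁻¹) * (αk + α) + (αk + C₃) * α * αk * ω ^ 2) *
        (n:ℝ) ^ ((5:ℝ)/2) * μk ^ ((1:ℝ)/2)) :
    _root_.enorm (fun i => Real.sqrt (zk i / xk i) * (αk * Δx i + α * Δx' i))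
      ≤ ((σmax + γ⁻¹ + 8 * β) * (αk + α) + (αk + C₃) * ω ^ 2 * αk * α) *
        γ ^ (-(1:ℝ)/2) * (n:ℝ) ^ ((5:ℝ)/2) * μk ^ ((1:ℝ)/2) ∧
    _root_.enorm (fun i => Real.sqrt (xk i / zk i) * (αk * Δz i + α * Δz' i))
      ≤ ((σmax + γ⁻¹ + 8 * β) * (αk + α) + (αk + C₃) * ω ^ 2 * αk * α) *
        γ ^ (-(1:ℝ)/2) * (n:ℝ) ^ ((5:ℝ)/2) * μk ^ ((1:ℝ)/2) := by
  obtain ⟨hγ0, hγ1⟩ := hγ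
  obtain ⟨hαk0, hαk1⟩ := hαk
  obtain ⟨hα0, hα1⟩ := hα
  have hn' : (0:ℝ) < n := by exact_mod_cast hn
  have hn1 : (1:ℝ) ≤ n := by exact_mod_cast hn
  have hμ0 : 0 < μk := by
    rw [hμk]
    apply div_pos _ hn'
    apply Finset.sum_pos (fun i _ => mul_pos (hxk i) (hzk i))
    exact ⟨⟨0, hn⟩, Finset.mem_univ _⟩
  set τ : ℝ := αk + α * (1 - αk) with hτ_def
  have hτ0 : 0 ≤ τ := by nlinarith
  have hτle : τ ≤ αk + α := by nlinarith
  set κ : ℝ := τ * νk with hκ_def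
  have hκ0 : 0 ≤ κ := mul_nonneg hτ0 hνk
  -- Step A : rowwise A (u + κ dx0) = 0
  have hAu : ∀ j, (∑ i, A j i * ((αk * Δx i + α * Δx' i) + κ * (ξ - xstar i))) = 0 := by
    intro j
    have h1 : ∑ i, A j i * Δx i = -rbk j := by
      have := congrFun hADx j
      simpa [Matrix.mulVec, dotProduct] using this
    have h2 : ∑ i, A j i * Δx' i = -((1 - αk) * rbk j) := by
      have := congrFun hADx' j
      rw [hrbk1] at this
      simpa [Matrix.mulVec, dotProduct] using this
    have hb : ∑ i, A j i * xstar i = b j := by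
      have := congrFun hstar1 j
      simpa [Matrix.mulVec, dotProduct] using this
    have hrb : rbk j = νk * ((∑ i, A j i * ξ) - b j) := by
      have := congrFun hrb0 j
      simpa [Matrix.mulVec, dotProduct] using this
    have hexp : (∑ i, A j i * ((αk * Δx i + α * Δx' i) + κ * (ξ - xstar i)))
        = αk * (∑ i, A j i * Δx i) + α * (∑ i, A j i * Δx' i)
          + κ * ((∑ i, A j i * ξ) - (∑ i, A j i * xstar i)) := by
      simp only [Finset.mul_sum, ← Finset.sum_sub_distrib, ← Finset.sum_add_distrib]
      exact Finset.sum_congr rfl fun i _ => by ring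
    rw [hexp, h1, h2, hb, hrb, hκ_def, hτ_def]
    ring
  -- Step B : columnwise v + κ dz0 = Aᵀ g
  have hq : ∀ i, (αk * Δz i + α * Δz' i) + κ * (ξ - zstar i)
      = ∑ j, A j i * (κ * lamstar j - (αk * Δlam j + α * Δlam' j)) := by
    intro i
    have h3 : (∑ j, A j i * Δlam j) + Δz i = -rck i := by
      have := congrFun hADl i
      simpa [Matrix.mulVec, dotProduct, Matrix.transpose_apply] using this
    have h4 : (∑ j, A j i * Δlam' j) + Δz' i = -((1 - αk) * rck i) := by
      have := congrFun hADl' i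
      rw [hrck1] at this
      simpa [Matrix.mulVec, dotProduct, Matrix.transpose_apply] using this
    have hrc : rck i = νk * (ξ - c i) := by
      have := congrFun hrc0 i
      simpa [Matrix.mulVec, dotProduct] using this
    have hcc : (∑ j, A j i * lamstar j) + zstar i = c i := by
      have := congrFun hstar2 i
      simpa [Matrix.mulVec, dotProduct, Matrix.transpose_apply] using this
    have hexp : (∑ j, A j i * (κ * lamstar j - (αk * Δlam j + α * Δlam' j)))
        = κ * (∑ j, A j i * lamstar j)
          - (αk * (∑ j, A j i * Δlam j) + α * (∑ j, A j i * Δlam' j)) := by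
      simp only [Finset.mul_sum, ← Finset.sum_sub_distrib, ← Finset.sum_add_distrib]
      exact Finset.sum_congr rfl fun j _ => by ring
    rw [hexp, hκ_def, hτ_def]
    linear_combination αk * h3 + α * h4
      - (αk + α * (1 - αk)) * hrc - ((αk + α * (1 - αk)) * νk) * hcc
  -- Step C : orthogonality
  have horth : ∑ i, ((αk * Δx i + α * Δx' i) + κ * (ξ - xstar i))
      * ((αk * Δz i + α * Δz' i) + κ * (ξ - zstar i)) = 0 := by
    have hstep : ∀ i, ((αk * Δx i + α * Δx' i) + κ * (ξ - xstar i))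
        * ((αk * Δz i + α * Δz' i) + κ * (ξ - zstar i))
        = ∑ j, (κ * lamstar j - (αk * Δlam j + α * Δlam' j))
            * (A j i * ((αk * Δx i + α * Δx' i) + κ * (ξ - xstar i))) := by
      intro i
      rw [hq i, Finset.mul_sum]
      exact Finset.sum_congr rfl fun j _ => by ring
    rw [Finset.sum_congr rfl fun i _ => hstep i, Finset.sum_comm]
    have hz : ∀ j, (∑ i, (κ * lamstar j - (αk * Δlam j + α * Δlam' j))
        * (A j i * ((αk * Δx i + α * Δx' i) + κ * (ξ - xstar i)))) = 0 := by
      intro j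
      rw [← Finset.mul_sum, hAu j, mul_zero]
    rw [Finset.sum_congr rfl fun j _ => hz j, Finset.sum_const_zero]
  -- pointwise sqrt facts
  have hφψ : ∀ i, Real.sqrt (zk i / xk i) * Real.sqrt (xk i / zk i) = 1 := by
    intro i
    rw [← Real.sqrt_mul (le_of_lt (div_pos (hzk i) (hxk i)))]
    rw [show zk i / xk i * (xk i / zk i) = 1 from by
      field_simp [(hxk i).ne', (hzk i).ne']]
    exact Real.sqrt_one
  -- rewrite hthird
  set K : ℝ := γ ^ (-(1:ℝ)/2) * ((σmax + γ⁻¹) * (αk + α) + (αk + C₃) * α * αk * ω ^ 2) *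
      (n:ℝ) ^ ((5:ℝ)/2) * μk ^ ((1:ℝ)/2) with hK_def
  have hK0 : 0 ≤ K := by
    have h1 : (0:ℝ) ≤ γ ^ (-(1:ℝ)/2) := Real.rpow_nonneg hγ0.le _
    have h2 : (0:ℝ) ≤ (n:ℝ) ^ ((5:ℝ)/2) := Real.rpow_nonneg hn'.le _
    have h3 : (0:ℝ) ≤ μk ^ ((1:ℝ)/2) := Real.rpow_nonneg hμ0.le _
    have h4 : (0:ℝ) ≤ (σmax + γ⁻¹) * (αk + α) + (αk + C₃) * α * αk * ω ^ 2 := by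
      have hγi : (0:ℝ) < γ⁻¹ := inv_pos.mpr hγ0
      have := add_nonneg (mul_nonneg (by linarith : (0:ℝ) ≤ σmax + γ⁻¹)
        (by linarith : (0:ℝ) ≤ αk + α))
        (mul_nonneg (mul_nonneg (mul_nonneg (by linarith : (0:ℝ) ≤ αk + C₃) hα0) hαk0.le)
          (sq_nonneg ω))
      linarith
    positivity
  have hptw : ∀ i : Fin n, (1 / Real.sqrt (xk i * zk i)) *
      (zk i * (αk * Δx i + α * Δx' i) + xk i * (αk * Δz i + α * Δz' i))
      = Real.sqrt (zk i / xk i) * (αk * Δx i + α * Δx' i)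
        + Real.sqrt (xk i / zk i) * (αk * Δz i + α * Δz' i) := by
    intro i
    exact ptw_sqrt (xk i) (zk i) _ _ (hxk i) (hzk i)
  have hW : _root_.enorm (fun i => Real.sqrt (zk i / xk i) * (αk * Δx i + α * Δx' i)
      + Real.sqrt (xk i / zk i) * (αk * Δz i + α * Δz' i)) ≤ K := by
    rw [show (fun i => Real.sqrt (zk i / xk i) * (αk * Δx i + α * Δx' i)
        + Real.sqrt (xk i / zk i) * (αk * Δz i + α * Δz' i))
        = (fun i => (1 / Real.sqrt (xk i * zk i)) *
          (zk i * (αk * Δx i + α * Δx' i) + xk i * (αk * Δz i + α * Δz' i))) from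
      funext fun i => (hptw i).symm]
    exact hthird
  -- component bound on starting-point differences
  have hdx : ∀ i, (ξ - xstar i) ^ 2 ≤ ξ ^ 2 := by
    intro i
    have h := sum_sq_le_of_enorm_le hx0
    exact le_trans (Finset.single_le_sum (fun j _ => sq_nonneg ((fun i => ξ - xstar i) j))
      (Finset.mem_univ i)) h
  have hdz : ∀ i, (ξ - zstar i) ^ 2 ≤ ξ ^ 2 := by
    intro i
    have h := sum_sq_le_of_enorm_le hz0
    exact le_trans (Finset.single_le_sum (fun j _ => sq_nonneg ((fun i => ξ - zstar i) j))
      (Finset.mem_univ i)) h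
  have hγμ : 0 < γ * μk := mul_pos hγ0 hμ0
  have ha1 : _root_.enorm (fun i => Real.sqrt (zk i / xk i) * (ξ - xstar i))
      ≤ ξ * (∑ i, zk i) / Real.sqrt (γ * μk) :=
    aux_wnorm n xk zk (fun i => ξ - xstar i) hxk hzk (γ * μk) hγμ
      (fun i => (hNbr i).1) ξ hξ.le hdx
  have ha2 : _root_.enorm (fun i => Real.sqrt (xk i / zk i) * (ξ - zstar i))
      ≤ ξ * (∑ i, xk i) / Real.sqrt (γ * μk) :=
    aux_wnorm n zk xk (fun i => ξ - zstar i) hzk hxk (γ * μk) hγμ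
      (fun i => by rw [mul_comm (zk i) (xk i)]; exact (hNbr i).1) ξ hξ.le hdz
  -- apply key quadratic lemma
  have hkey := key_quad n (fun i => αk * Δx i + α * Δx' i) (fun i => αk * Δz i + α * Δz' i)
    (fun i => ξ - xstar i) (fun i => ξ - zstar i)
    (fun i => Real.sqrt (zk i / xk i)) (fun i => Real.sqrt (xk i / zk i))
    κ K (ξ * (∑ i, zk i) / Real.sqrt (γ * μk)) (ξ * (∑ i, xk i) / Real.sqrt (γ * μk))
    hκ0 hK0 hφψ hW horth ha1 ha2
  -- final numeric bound
  have hfin : K + 2 * κ * (ξ * (∑ i, zk i) / Real.sqrt (γ * μk)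
        + ξ * (∑ i, xk i) / Real.sqrt (γ * μk))
      ≤ ((σmax + γ⁻¹ + 8 * β) * (αk + α) + (αk + C₃) * ω ^ 2 * αk * α) *
        γ ^ (-(1:ℝ)/2) * (n:ℝ) ^ ((5:ℝ)/2) * μk ^ ((1:ℝ)/2) := by
    have hsγ : 0 < Real.sqrt γ := Real.sqrt_pos.mpr hγ0
    have hsμ : 0 < Real.sqrt μk := Real.sqrt_pos.mpr hμ0
    have hg : 0 < Real.sqrt (γ * μk) := Real.sqrt_pos.mpr hγμ
    have hβ0 : (0:ℝ) ≤ β := by linarith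
    have ex : onenorm xk = ∑ i, xk i := Finset.sum_congr rfl fun i _ => abs_of_pos (hxk i)
    have ez : onenorm zk = ∑ i, zk i := Finset.sum_congr rfl fun i _ => abs_of_pos (hzk i)
    have h1n : νk * ((∑ i, zk i) + (∑ i, xk i)) ≤ 4 * β / ξ * n * μk := by
      calc νk * ((∑ i, zk i) + (∑ i, xk i)) = νk * (onenorm xk + onenorm zk) := by
            rw [ex, ez]; ring
        _ ≤ _ := h1norm
    have step1 : 2 * κ * (ξ * (∑ i, zk i) / Real.sqrt (γ * μk)
          + ξ * (∑ i, xk i) / Real.sqrt (γ * μk))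
        ≤ 8 * (αk + α) * β * (n:ℝ) * μk / Real.sqrt (γ * μk) := by
      have e1 : 2 * κ * (ξ * (∑ i, zk i) / Real.sqrt (γ * μk)
            + ξ * (∑ i, xk i) / Real.sqrt (γ * μk))
          = (2 * τ * ξ / Real.sqrt (γ * μk)) * (νk * ((∑ i, zk i) + (∑ i, xk i))) := by
        rw [hκ_def]; ring
      have hc : (0:ℝ) ≤ 2 * τ * ξ / Real.sqrt (γ * μk) :=
        div_nonneg (mul_nonneg (mul_nonneg (by norm_num) hτ0) hξ.le) hg.le
      rw [e1]
      calc (2 * τ * ξ / Real.sqrt (γ * μk)) * (νk * ((∑ i, zk i) + (∑ i, xk i)))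
          ≤ (2 * τ * ξ / Real.sqrt (γ * μk)) * (4 * β / ξ * n * μk) :=
            mul_le_mul_of_nonneg_left h1n hc
        _ = 8 * τ * β * (n:ℝ) * μk / Real.sqrt (γ * μk) := by
            field_simp
            ring
        _ ≤ 8 * (αk + α) * β * (n:ℝ) * μk / Real.sqrt (γ * μk) := by
            have hβ0' : (0:ℝ) ≤ β := by linarith
            have base : 8 * τ ≤ 8 * (αk + α) := by linarith
            have hnum : 8 * τ * β * (n:ℝ) * μk ≤ 8 * (αk + α) * β * (n:ℝ) * μk :=
              mul_le_mul_of_nonneg_right (mul_le_mul_of_nonneg_right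
                (mul_le_mul_of_nonneg_right base hβ0') hn'.le) hμ0.le
            rw [div_eq_mul_inv, div_eq_mul_inv]
            exact mul_le_mul_of_nonneg_right hnum (inv_nonneg.mpr hg.le)
    have hrγ : γ ^ (-(1:ℝ)/2) = (Real.sqrt γ)⁻¹ := by
      rw [show (-(1:ℝ)/2) = -((1:ℝ)/2) from by norm_num, Real.rpow_neg hγ0.le,
        ← Real.sqrt_eq_rpow]
    have hrμ : μk ^ ((1:ℝ)/2) = Real.sqrt μk := (Real.sqrt_eq_rpow μk).symm
    have hrn : (n:ℝ) ≤ (n:ℝ) ^ ((5:ℝ)/2) := by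
      calc (n:ℝ) = (n:ℝ) ^ (1:ℝ) := (Real.rpow_one _).symm
        _ ≤ (n:ℝ) ^ ((5:ℝ)/2) := Real.rpow_le_rpow_of_exponent_le hn1 (by norm_num)
    have hbase : μk / Real.sqrt (γ * μk) = Real.sqrt μk * (Real.sqrt γ)⁻¹ := by
      rw [Real.sqrt_mul hγ0.le, div_eq_iff (mul_pos hsγ hsμ).ne']
      field_simp
      linear_combination (-1) * Real.sq_sqrt hμ0.le
    have step2 : 8 * (αk + α) * β * (n:ℝ) * μk / Real.sqrt (γ * μk)
        ≤ 8 * β * (αk + α) * ((Real.sqrt γ)⁻¹ * ((n:ℝ) ^ ((5:ℝ)/2) * Real.sqrt μk)) := by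
      have e2 : 8 * (αk + α) * β * (n:ℝ) * μk / Real.sqrt (γ * μk)
          = (8 * β * (αk + α) * ((Real.sqrt γ)⁻¹ * Real.sqrt μk)) * (n:ℝ) := by
        rw [show 8 * (αk + α) * β * (n:ℝ) * μk / Real.sqrt (γ * μk)
            = 8 * (αk + α) * β * (n:ℝ) * (μk / Real.sqrt (γ * μk)) from by ring, hbase]
        ring
      have hcf : (0:ℝ) ≤ 8 * β * (αk + α) * ((Real.sqrt γ)⁻¹ * Real.sqrt μk) := by
        have h1 : (0:ℝ) ≤ 8 * β := by linarith
        have h2 : (0:ℝ) ≤ αk + α := by linarith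
        have h3 : (0:ℝ) ≤ (Real.sqrt γ)⁻¹ * Real.sqrt μk :=
          mul_nonneg (inv_nonneg.mpr hsγ.le) hsμ.le
        exact mul_nonneg (mul_nonneg h1 h2) h3
      rw [e2]
      calc (8 * β * (αk + α) * ((Real.sqrt γ)⁻¹ * Real.sqrt μk)) * (n:ℝ)
          ≤ (8 * β * (αk + α) * ((Real.sqrt γ)⁻¹ * Real.sqrt μk)) * ((n:ℝ) ^ ((5:ℝ)/2)) :=
            mul_le_mul_of_nonneg_left hrn hcf
        _ = 8 * β * (αk + α) * ((Real.sqrt γ)⁻¹ * ((n:ℝ) ^ ((5:ℝ)/2) * Real.sqrt μk)) := by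
            ring
    have hTsplit : ((σmax + γ⁻¹ + 8 * β) * (αk + α) + (αk + C₃) * ω ^ 2 * αk * α) *
          γ ^ (-(1:ℝ)/2) * (n:ℝ) ^ ((5:ℝ)/2) * μk ^ ((1:ℝ)/2)
        = K + 8 * β * (αk + α) * (γ ^ (-(1:ℝ)/2) * ((n:ℝ) ^ ((5:ℝ)/2) * μk ^ ((1:ℝ)/2))) := by
      rw [hK_def]; ring
    rw [hTsplit, hrγ, hrμ]
    exact add_le_add_right (step1.trans step2) K
  constructor
  · exact le_trans hkey.1 hfin
  · exact le_trans hkey.2 hfin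
end
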